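/- arXiv:1710.10820 — 2 statements merged into one kernel-verified Lean document; each statement's English description precedes it below -/
import Mathlib

section
/- Let M be a countable transitive model of ZF⁻ and suppose there exists a global well-order of M of order type Ord^M that is definable over M. Then there is a notion of class forcing, definable over M, which has two Boolean completions in M that are non-isomorphic, i.e., there is no isomorphism between them (in V) fixing ℙ. -/
set_option autoImplicit false

attribute [local instance] Classical.propDecidable

namespace CF

/-- First-order formulas of the language of set theory with `κ` class-predicate
variables (the languages `L^κ`) and `n` free set variables; `κ = 0` gives the
pure ∈-formulas. There is no class quantification. -/
inductive CFml : ℕ → ℕ → Type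
  | mem {κ n : ℕ} (i j : Fin n) : CFml κ n
  | eq {κ n : ℕ} (i j : Fin n) : CFml κ n
  | cls {κ n : ℕ} (X : Fin κ) (i : Fin n) : CFml κ n
  | not {κ n : ℕ} : CFml κ n → CFml κ n
  | or {κ n : ℕ} : CFml κ n → CFml κ n → CFml κ n
  | ex {κ n : ℕ} : CFml κ (n + 1) → CFml κ n

/-- Satisfaction of such a formula in the structure whose domain is the class `D`,
with class predicates interpreted by `Γ` and variable assignment `v`. -/
def SatC (D : Set ZFSet) : ∀ {κ n : ℕ}, (Fin κ → Set ZFSet) → CFml κ n → (Fin n → ZFSet) → Prop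
  | _, _, _, .mem i j, v => v i ∈ v j
  | _, _, _, .eq i j, v => v i = v j
  | _, _, Γ, .cls X i, v => v i ∈ Γ X
  | _, _, Γ, .not φ, v => ¬ SatC D Γ φ v
  | _, _, Γ, .or φ ψ, v => SatC D Γ φ v ∨ SatC D Γ ψ v
  | _, _, Γ, .ex φ, v => ∃ x ∈ D, SatC D Γ φ (Fin.snoc v x)

/-- Pure ∈-formulas with `n` free variables. -/
abbrev Fml (n : ℕ) : Type := CFml 0 n

/-- Satisfaction of an ∈-formula in `(M, ∈)` (quantifiers relativized to `M`). -/
def Sat (M : ZFSet) {n : ℕ} (φ : Fml n) (v : Fin n → ZFSet) : Prop :=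
  SatC M.toSet (fun i => i.elim0) φ v

/-- A `k`-ary relation on `M` is definable (with parameters) over `(M, ∈)`. -/
def DefinableOver (M : ZFSet) {k : ℕ} (S : (Fin k → ZFSet) → Prop) : Prop :=
  ∃ (m : ℕ) (φ : Fml (k + m)) (a : Fin m → ZFSet), (∀ i, a i ∈ M) ∧
    ∀ v : Fin k → ZFSet, (∀ i, v i ∈ M) → (S v ↔ Sat M φ (Fin.append v a))

/-- The collection of classes of `M` that are definable over `(M,∈)` with parameters. -/
def DefClasses (M : ZFSet) : Set (Set ZFSet) :=
  {S | S ⊆ M.toSet ∧ DefinableOver M (fun v : Fin 1 → ZFSet => v 0 ∈ S)}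

/-- `M` is a countable transitive model of `ZF⁻` (`ZF` without the power set axiom,
with Collection instead of Replacement), stated semantically via
the closure conditions that satisfaction of the `ZF⁻`-axioms imposes on a
transitive set (Foundation is automatic for transitive sets). -/
structure IsCTM (M : ZFSet) : Prop where
  countable : M.toSet.Countable
  transitive : M.IsTransitive
  empty_mem : (∅ : ZFSet) ∈ M
  pairing : ∀ x ∈ M, ∀ y ∈ M, ({x, y} : ZFSet) ∈ M
  union : ∀ x ∈ M, (ZFSet.sUnion x : ZFSet) ∈ M
  infinity : ZFSet.omega ∈ M
  separation : ∀ (m : ℕ) (φ : Fml (m + 1)) (a : Fin m → ZFSet), (∀ i, a i ∈ M) →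
    ∀ x ∈ M, ZFSet.sep (fun y => Sat M φ (Fin.snoc a y)) x ∈ M
  collection : ∀ (m : ℕ) (φ : Fml (m + 2)) (a : Fin m → ZFSet), (∀ i, a i ∈ M) →
    ∀ x ∈ M, (∀ y ∈ x, ∃ z ∈ M, Sat M φ (Fin.snoc (Fin.snoc a y) z)) →
      ∃ b ∈ M, ∀ y ∈ x, ∃ z ∈ b, Sat M φ (Fin.snoc (Fin.snoc a y) z)

/-- `x` is a (von Neumann) ordinal. -/
def IsOrdZ (x : ZFSet) : Prop := x.IsTransitive ∧ ∀ y ∈ x, ZFSet.IsTransitive y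

/-- `α` is an ordinal of the model `M`. -/
def IsOrdIn (M α : ZFSet) : Prop := α ∈ M ∧ IsOrdZ α
/-- A notion of (class) forcing for `(M, C)`: a preorder whose domain and order
relation are classes in `C` and whose conditions are elements of `M`, with a
maximal element `one`. For the first-order setting of a partial order definable
over a model `M` of `ZF⁻`, take `C = DefClasses M`. -/
structure ClassForcing (M : ZFSet) (C : Set (Set ZFSet)) where
  P : Set ZFSet
  le : ZFSet → ZFSet → Prop
  P_subM : ∀ p ∈ P, p ∈ M
  P_mem : P ∈ C
  le_mem : {x : ZFSet | ∃ p ∈ P, ∃ q ∈ P, le p q ∧ x = ZFSet.pair p q} ∈ C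
  le_refl : ∀ p ∈ P, le p p
  le_trans : ∀ p ∈ P, ∀ q ∈ P, ∀ r ∈ P, le p q → le q r → le p r
  one : ZFSet
  one_mem : one ∈ P
  le_one : ∀ p ∈ P, le p one

variable {M : ZFSet} {C : Set (Set ZFSet)}

/-- `p` and `q` are compatible in `F`. -/
def Compat (F : ClassForcing M C) (p q : ZFSet) : Prop :=
  ∃ r ∈ F.P, F.le r p ∧ F.le r q

/-- `F` is antisymmetric, i.e. an actual partial order. -/
def Antisymmetric (F : ClassForcing M C) : Prop :=
  ∀ p ∈ F.P, ∀ q ∈ F.P, F.le p q → F.le q p → p = q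

/-- `F` is separative. -/
def Separative (F : ClassForcing M C) : Prop :=
  ∀ p ∈ F.P, ∀ q ∈ F.P, ¬ F.le p q → ∃ r ∈ F.P, F.le r p ∧ ¬ Compat F r q

/-- `σ` is a `P`-name: every element of `σ` is a pair `⟨τ, p⟩` where `τ` is a
`P`-name and `p ∈ P`. -/
inductive IsName (P : Set ZFSet) : ZFSet → Prop
  | intro (σ : ZFSet)
      (hshape : ∀ x ∈ σ, ∃ τ p, p ∈ P ∧ x = ZFSet.pair τ p)
      (hrec : ∀ τ p : ZFSet, ZFSet.pair τ p ∈ σ → IsName P τ) : IsName P σ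

theorem transGen_mem_of_pair_mem {τ p σ : ZFSet} (h : ZFSet.pair τ p ∈ σ) :
    Relation.TransGen (· ∈ ·) τ σ := by
  have h1 : τ ∈ ({τ, p} : ZFSet) := by simp
  have h2 : ({τ, p} : ZFSet) ∈ ZFSet.pair τ p := by simp [ZFSet.pair]
  exact Relation.TransGen.tail (Relation.TransGen.tail (Relation.TransGen.single h1) h2) h

/-- The evaluation `σ^G = {τ^G ∣ ∃ p ∈ G, ⟨τ,p⟩ ∈ σ}` of a name by a filter `G`
(defined by recursion on the transitive closure of `∈`; note that any `τ` with
`⟨τ,p⟩ ∈ σ` satisfies `τ ∈ ⋃₀ ⋃₀ σ`). -/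
noncomputable def val (G : Set ZFSet) : ZFSet → ZFSet :=
  WellFounded.fix (ZFSet.mem_wf.transGen) fun σ ih =>
    @ZFSet.image
      (fun τ => if h : Relation.TransGen (· ∈ ·) τ σ then ih τ h else ∅)
      (Classical.allZFSetDefinable _)
      (ZFSet.sep (fun τ => ∃ p ∈ G, ZFSet.pair τ p ∈ σ) (ZFSet.sUnion (ZFSet.sUnion σ : ZFSet) : ZFSet))

/-- `D` is dense in the forcing `(P, ≤)`. -/
def DenseIn (P : Set ZFSet) (le : ZFSet → ZFSet → Prop) (D : Set ZFSet) : Prop :=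
  ∀ p ∈ P, ∃ q ∈ D, q ∈ P ∧ le q p

/-- `G` is a filter on `(P, ≤)` which is generic over `(M, C)`, i.e. it meets every
dense subclass of `P` lying in `C`. -/
structure IsGenericRaw (M : ZFSet) (C : Set (Set ZFSet)) (P : Set ZFSet)
    (le : ZFSet → ZFSet → Prop) (G : Set ZFSet) : Prop where
  sub : G ⊆ P
  upward : ∀ p ∈ G, ∀ q ∈ P, le p q → q ∈ G
  compat : ∀ p ∈ G, ∀ q ∈ G, ∃ r ∈ G, le r p ∧ le r q
  meets : ∀ D ∈ C, D ⊆ P → DenseIn P le D → (D ∩ G).Nonempty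

/-- `G` is `F`-generic over `(M, C)`. -/
def IsGeneric (F : ClassForcing M C) (G : Set ZFSet) : Prop :=
  IsGenericRaw M C F.P F.le G

/-- The generic extension `M[G] = {σ^G ∣ σ ∈ M^P}` as a class. -/
def MG (M : ZFSet) (P : Set ZFSet) (G : Set ZFSet) : Set ZFSet :=
  {x | ∃ σ, σ ∈ M ∧ IsName P σ ∧ x = val G σ}

/-- `Γ` is a class `P`-name over `(M, C)`. -/
def IsClassName (M : ZFSet) (C : Set (Set ZFSet)) (P : Set ZFSet) (Γ : Set ZFSet) : Prop :=
  Γ ∈ C ∧ ∀ x ∈ Γ, ∃ τ p, τ ∈ M ∧ IsName P τ ∧ p ∈ P ∧ x = ZFSet.pair τ p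

/-- Evaluation `Γ^G` of a class name. -/
def classVal (G : Set ZFSet) (Γ : Set ZFSet) : Set ZFSet :=
  {x | ∃ τ p, p ∈ G ∧ ZFSet.pair τ p ∈ Γ ∧ x = val G τ}

/-- Encoding of a tuple of sets as a single set (iterated Kuratowski pairs). -/
def tupleZF : ∀ {k : ℕ}, (Fin k → ZFSet) → ZFSet
  | 0, _ => ∅
  | _ + 1, v => ZFSet.pair (v 0) (tupleZF (fun i => v i.succ))

/-- `p ⊩ φ(σ⃗)` (with class-name parameters `Γ⃗`): for every `F`-generic filter `G`
over `(M, C)` with `p ∈ G`, `φ(σ⃗^G)` holds in `(M[G], ∈, Γ⃗^G)`. -/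
def Forces (F : ClassForcing M C) {κ n : ℕ} (φ : CFml κ n)
    (Γ : Fin κ → Set ZFSet) (p : ZFSet) (σ : Fin n → ZFSet) : Prop :=
  ∀ G : Set ZFSet, IsGeneric F G → p ∈ G →
    SatC (MG M F.P G) (fun i => classVal G (Γ i)) φ (fun i => val G (σ i))

/-- The definability lemma for `φ` over `(M, C)`: for all class-name parameters,
the class of tuples `⟨p, σ⃗⟩` such that `p ⊩ φ(σ⃗)` is in `C`. -/
def DefLemma (F : ClassForcing M C) {κ n : ℕ} (φ : CFml κ n) : Prop :=
  ∀ Γ : Fin κ → Set ZFSet, (∀ i, IsClassName M C F.P (Γ i)) →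
    {x : ZFSet | ∃ p ∈ F.P, ∃ σ : Fin n → ZFSet,
      (∀ i, σ i ∈ M ∧ IsName F.P (σ i)) ∧ Forces F φ Γ p σ ∧
      x = ZFSet.pair p (tupleZF σ)} ∈ C

/-- The truth lemma for `φ` over `(M, C)`: everything true in a generic extension
is forced by some condition in the generic filter. -/
def TruthLemma (F : ClassForcing M C) {κ n : ℕ} (φ : CFml κ n) : Prop :=
  ∀ Γ : Fin κ → Set ZFSet, (∀ i, IsClassName M C F.P (Γ i)) →
    ∀ σ : Fin n → ZFSet, (∀ i, σ i ∈ M ∧ IsName F.P (σ i)) →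
      ∀ G : Set ZFSet, IsGeneric F G →
        SatC (MG M F.P G) (fun i => classVal G (Γ i)) φ (fun i => val G (σ i)) →
        ∃ p ∈ G, Forces F φ Γ p σ

/-- The forcing theorem for `φ` over `(M, C)`. -/
def ForcingThm (F : ClassForcing M C) {κ n : ℕ} (φ : CFml κ n) : Prop :=
  DefLemma F φ ∧ TruthLemma F φ
/-- A (class) Boolean algebra over `(M, C)`: domain a class in `C` of elements
of `M`, with all operations given by classes in `C` (in the first-order setting
`C = DefClasses M`, this says domain and operations are definable over `M`). -/
structure MBoolAlg (M : ZFSet) (C : Set (Set ZFSet)) where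
  B : Set ZFSet
  le : ZFSet → ZFSet → Prop
  bot : ZFSet
  top : ZFSet
  neg : ZFSet → ZFSet
  inf : ZFSet → ZFSet → ZFSet
  sup : ZFSet → ZFSet → ZFSet
  B_subM : ∀ b ∈ B, b ∈ M
  B_mem : B ∈ C
  le_mem : {x : ZFSet | ∃ a ∈ B, ∃ b ∈ B, le a b ∧ x = ZFSet.pair a b} ∈ C
  neg_mem : {x : ZFSet | ∃ a ∈ B, x = ZFSet.pair a (neg a)} ∈ C
  inf_mem : {x : ZFSet | ∃ a ∈ B, ∃ b ∈ B, x = ZFSet.pair (ZFSet.pair a b) (inf a b)} ∈ C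
  sup_mem : {x : ZFSet | ∃ a ∈ B, ∃ b ∈ B, x = ZFSet.pair (ZFSet.pair a b) (sup a b)} ∈ C
  bot_mem : bot ∈ B
  top_mem : top ∈ B
  neg_cl : ∀ a ∈ B, neg a ∈ B
  inf_cl : ∀ a ∈ B, ∀ b ∈ B, inf a b ∈ B
  sup_cl : ∀ a ∈ B, ∀ b ∈ B, sup a b ∈ B
  le_refl : ∀ a ∈ B, le a a
  le_trans : ∀ a ∈ B, ∀ b ∈ B, ∀ c ∈ B, le a b → le b c → le a c
  le_antisymm : ∀ a ∈ B, ∀ b ∈ B, le a b → le b a → a = b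
  bot_le : ∀ a ∈ B, le bot a
  le_top : ∀ a ∈ B, le a top
  inf_le_left : ∀ a ∈ B, ∀ b ∈ B, le (inf a b) a
  inf_le_right : ∀ a ∈ B, ∀ b ∈ B, le (inf a b) b
  le_inf : ∀ a ∈ B, ∀ b ∈ B, ∀ c ∈ B, le c a → le c b → le c (inf a b)
  le_sup_left : ∀ a ∈ B, ∀ b ∈ B, le a (sup a b)
  le_sup_right : ∀ a ∈ B, ∀ b ∈ B, le b (sup a b)
  sup_le : ∀ a ∈ B, ∀ b ∈ B, ∀ c ∈ B, le a c → le b c → le (sup a b) c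
  inf_neg : ∀ a ∈ B, inf a (neg a) = bot
  sup_neg : ∀ a ∈ B, sup a (neg a) = top
  distrib : ∀ a ∈ B, ∀ b ∈ B, ∀ c ∈ B, inf a (sup b c) = sup (inf a b) (inf a c)

/-- `Bo` is `M`-complete: every subset of `B` which is an element of `M` has a
supremum in `Bo`. -/
def MComplete {M : ZFSet} {C : Set (Set ZFSet)} (Bo : MBoolAlg M C) : Prop :=
  ∀ A : ZFSet, A ∈ M → (∀ a ∈ A, a ∈ Bo.B) →
    ∃ s ∈ Bo.B, (∀ a ∈ A, Bo.le a s) ∧ ∀ b ∈ Bo.B, (∀ a ∈ A, Bo.le a b) → Bo.le s b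

/-- `(Bo, π)` is a Boolean completion of the forcing `F` over `(M, C)`: `Bo` is an
`M`-complete Boolean algebra (with domain and operations classes of `C`) and `π` is
an injective dense embedding of `F` into `Bo ∖ {0}` whose graph is a class in `C`. -/
structure BoolCompletion {M : ZFSet} {C : Set (Set ZFSet)} (F : ClassForcing M C)
    (Bo : MBoolAlg M C) (π : ZFSet → ZFSet) : Prop where
  complete : MComplete Bo
  graph_mem : {x : ZFSet | ∃ p ∈ F.P, x = ZFSet.pair p (π p)} ∈ C
  maps : ∀ p ∈ F.P, π p ∈ Bo.B ∧ π p ≠ Bo.bot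
  inj : ∀ p ∈ F.P, ∀ q ∈ F.P, π p = π q → p = q
  mono : ∀ p ∈ F.P, ∀ q ∈ F.P, F.le p q → Bo.le (π p) (π q)
  incompat : ∀ p ∈ F.P, ∀ q ∈ F.P, ¬ Compat F p q → Bo.inf (π p) (π q) = Bo.bot
  dense : ∀ b ∈ Bo.B, b ≠ Bo.bot → ∃ p ∈ F.P, Bo.le (π p) b

/-- `F` has a Boolean completion over `(M, C)`. -/
def HasBoolCompletion {M : ZFSet} {C : Set (Set ZFSet)} (F : ClassForcing M C) : Prop :=
  ∃ (Bo : MBoolAlg M C) (π : ZFSet → ZFSet), BoolCompletion F Bo π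

/-- An isomorphism (in `V`) between two Boolean completions of `F` which fixes `ℙ`,
i.e. commutes with the two dense embeddings. -/
def FixingIso {M : ZFSet} {C : Set (Set ZFSet)} (F : ClassForcing M C)
    (B0 B1 : MBoolAlg M C) (π0 π1 : ZFSet → ZFSet) : Prop :=
  ∃ f : ZFSet → ZFSet,
    (∀ a ∈ B0.B, f a ∈ B1.B) ∧
    (∀ a ∈ B0.B, ∀ b ∈ B0.B, f a = f b → a = b) ∧
    (∀ b ∈ B1.B, ∃ a ∈ B0.B, f a = b) ∧
    (∀ a ∈ B0.B, ∀ b ∈ B0.B, (B0.le a b ↔ B1.le (f a) (f b))) ∧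
    (∀ p ∈ F.P, f (π0 p) = π1 p)

/-- The power set axiom holds in the transitive model `M`. -/
def PowerSetAx (M : ZFSet) : Prop :=
  ∀ x ∈ M, ∃ y ∈ M, ∀ z ∈ M, (z ∈ y ↔ z ⊆ x)

/-- There is a well-ordering of `M` that is definable over `M`. -/
def HasDefWellOrder (M : ZFSet) : Prop :=
  ∃ W : ZFSet → ZFSet → Prop,
    DefinableOver M (fun v : Fin 2 → ZFSet => W (v 0) (v 1)) ∧
    (∀ x ∈ M, ¬ W x x) ∧
    (∀ x ∈ M, ∀ y ∈ M, ∀ z ∈ M, W x y → W y z → W x z) ∧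
    (∀ x ∈ M, ∀ y ∈ M, x ≠ y → (W x y ∨ W y x)) ∧
    (∀ S : Set ZFSet, S ⊆ M.toSet → S.Nonempty → ∃ m ∈ S, ∀ y ∈ S, y ≠ m → ¬ W y m)
/-- There is a global well-order of `M` of order type `Ord^M` that is definable
over `M`: a definable well-ordering of `M` all of whose proper initial segments
are elements of `M`. -/
def HasDefWellOrderOT (M : ZFSet) : Prop :=
  ∃ W : ZFSet → ZFSet → Prop,
    DefinableOver M (fun v : Fin 2 → ZFSet => W (v 0) (v 1)) ∧
    (∀ x ∈ M, ¬ W x x) ∧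
    (∀ x ∈ M, ∀ y ∈ M, ∀ z ∈ M, W x y → W y z → W x z) ∧
    (∀ x ∈ M, ∀ y ∈ M, x ≠ y → (W x y ∨ W y x)) ∧
    (∀ S : Set ZFSet, S ⊆ M.toSet → S.Nonempty → ∃ m ∈ S, ∀ y ∈ S, y ≠ m → ¬ W y m) ∧
    (∀ x ∈ M, ∃ s, s ∈ M ∧ ∀ y : ZFSet, (y ∈ s ↔ (y ∈ M ∧ W y x)))

/-! ### Infrastructure: renaming of formulas and a definability calculus -/

section Infra

/-- Renaming of variables in a formula. -/
def ren : ∀ {κ n m : ℕ}, (Fin n → Fin m) → CFml κ n → CFml κ m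
  | _, _, _, f, .mem i j => .mem (f i) (f j)
  | _, _, _, f, .eq i j => .eq (f i) (f j)
  | _, _, _, f, .cls X i => .cls X (f i)
  | _, _, _, f, .not φ => .not (ren f φ)
  | _, _, _, f, .or φ ψ => .or (ren f φ) (ren f ψ)
  | _, _, _, f, .ex φ =>
      .ex (ren (Fin.snoc (fun j => Fin.castSucc (f j)) (Fin.last _)) φ)

theorem satC_ren {D : Set ZFSet} {κ : ℕ} {Γ : Fin κ → Set ZFSet} :
    ∀ {n m : ℕ} (φ : CFml κ n) (f : Fin n → Fin m) (v : Fin m → ZFSet),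
      SatC D Γ (ren f φ) v ↔ SatC D Γ φ (v ∘ f) := by
  intro n m φ
  induction φ generalizing m with
  | mem i j => intro f v; simp only [ren, SatC, Function.comp]
  | eq i j => intro f v; simp only [ren, SatC, Function.comp]
  | cls X i => intro f v; simp only [ren, SatC, Function.comp]
  | not φ ih => intro f v; simp only [ren, SatC, ih]
  | or φ ψ ih1 ih2 => intro f v; simp only [ren, SatC, ih1, ih2]
  | ex φ ih =>
    intro f v
    simp only [ren, SatC, ih]
    have e : ∀ x : ZFSet,
        (Fin.snoc v x ∘ Fin.snoc (fun j => Fin.castSucc (f j)) (Fin.last m))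
          = Fin.snoc (v ∘ f) x := by
      intro x; funext i
      refine Fin.lastCases ?_ (fun j => ?_) i <;>
        simp [Function.comp, Fin.snoc_castSucc, Fin.snoc_last]
    constructor
    · rintro ⟨x, hx, h⟩
      exact ⟨x, hx, (e x) ▸ h⟩
    · rintro ⟨x, hx, h⟩
      exact ⟨x, hx, (e x).symm ▸ h⟩

/-- Block map embedding `Fin (k+m1)` into `Fin (k+(m1+m2))`. -/
def inlMap {k m1 m2 : ℕ} : Fin (k + m1) → Fin (k + (m1 + m2)) :=
  Fin.append (Fin.castAdd (m1 + m2)) (fun j => Fin.natAdd k (Fin.castAdd m2 j))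

/-- Block map embedding `Fin (k+m2)` into `Fin (k+(m1+m2))`. -/
def inrMap {k m1 m2 : ℕ} : Fin (k + m2) → Fin (k + (m1 + m2)) :=
  Fin.append (Fin.castAdd (m1 + m2)) (fun j => Fin.natAdd k (Fin.natAdd m1 j))

theorem append_inlMap {α : Type*} {k m1 m2 : ℕ} (v : Fin k → α) (a1 : Fin m1 → α)
    (a2 : Fin m2 → α) (i : Fin (k + m1)) :
    Fin.append v (Fin.append a1 a2) (inlMap i) = Fin.append v a1 i := by
  induction i using Fin.addCases with
  | left i => simp [inlMap, Fin.append_left]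
  | right j => simp [inlMap, Fin.append_left, Fin.append_right]

theorem append_inrMap {α : Type*} {k m1 m2 : ℕ} (v : Fin k → α) (a1 : Fin m1 → α)
    (a2 : Fin m2 → α) (i : Fin (k + m2)) :
    Fin.append v (Fin.append a1 a2) (inrMap i) = Fin.append v a2 i := by
  induction i using Fin.addCases with
  | left i => simp [inrMap, Fin.append_left]
  | right j => simp [inrMap, Fin.append_left, Fin.append_right]

variable {M : ZFSet}

theorem defOver_congr {k : ℕ} {S T : (Fin k → ZFSet) → Prop}
    (hS : DefinableOver M S) (h : ∀ v, (∀ i, v i ∈ M) → (S v ↔ T v)) :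
    DefinableOver M T := by
  obtain ⟨m, φ, a, ha, hφ⟩ := hS
  exact ⟨m, φ, a, ha, fun v hv => (h v hv).symm.trans (hφ v hv)⟩

theorem defOver_mem {k : ℕ} (i j : Fin k) : DefinableOver M fun v => v i ∈ v j := by
  refine ⟨0, .mem (Fin.castAdd 0 i) (Fin.castAdd 0 j), Fin.elim0, fun i => i.elim0,
    fun v hv => ?_⟩
  simp only [Sat, SatC, Fin.append_left]

theorem defOver_eq {k : ℕ} (i j : Fin k) : DefinableOver M fun v => v i = v j := by
  refine ⟨0, .eq (Fin.castAdd 0 i) (Fin.castAdd 0 j), Fin.elim0, fun i => i.elim0,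
    fun v hv => ?_⟩
  simp only [Sat, SatC, Fin.append_left]

theorem defOver_memR {k : ℕ} (i : Fin k) {c : ZFSet} (hc : c ∈ M) :
    DefinableOver M fun v => v i ∈ c := by
  refine ⟨1, .mem (Fin.castAdd 1 i) (Fin.natAdd k 0), fun _ => c, fun _ => hc,
    fun v hv => ?_⟩
  simp only [Sat, SatC, Fin.append_left, Fin.append_right]

theorem defOver_memL {k : ℕ} (i : Fin k) {c : ZFSet} (hc : c ∈ M) :
    DefinableOver M fun v => c ∈ v i := by
  refine ⟨1, .mem (Fin.natAdd k 0) (Fin.castAdd 1 i), fun _ => c, fun _ => hc,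
    fun v hv => ?_⟩
  simp only [Sat, SatC, Fin.append_left, Fin.append_right]

theorem defOver_eqR {k : ℕ} (i : Fin k) {c : ZFSet} (hc : c ∈ M) :
    DefinableOver M fun v => v i = c := by
  refine ⟨1, .eq (Fin.castAdd 1 i) (Fin.natAdd k 0), fun _ => c, fun _ => hc,
    fun v hv => ?_⟩
  simp only [Sat, SatC, Fin.append_left, Fin.append_right]

theorem defOver_not {k : ℕ} {S : (Fin k → ZFSet) → Prop} (hS : DefinableOver M S) :
    DefinableOver M fun v => ¬ S v := by
  obtain ⟨m, φ, a, ha, hφ⟩ := hS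
  exact ⟨m, .not φ, a, ha, fun v hv => by simp only [Sat, SatC] at *; rw [hφ v hv]⟩

theorem defOver_or {k : ℕ} {S T : (Fin k → ZFSet) → Prop}
    (hS : DefinableOver M S) (hT : DefinableOver M T) :
    DefinableOver M fun v => S v ∨ T v := by
  obtain ⟨m1, φ1, a1, ha1, h1⟩ := hS
  obtain ⟨m2, φ2, a2, ha2, h2⟩ := hT
  refine ⟨m1 + m2, .or (ren inlMap φ1) (ren inrMap φ2), Fin.append a1 a2, ?_, fun v hv => ?_⟩
  · intro i
    induction i using Fin.addCases with
    | left i => rw [Fin.append_left]; exact ha1 i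
    | right j => rw [Fin.append_right]; exact ha2 j
  · simp only [Sat, SatC, satC_ren]
    have e1 : (Fin.append v (Fin.append a1 a2) ∘ inlMap) = Fin.append v a1 :=
      funext fun i => append_inlMap v a1 a2 i
    have e2 : (Fin.append v (Fin.append a1 a2) ∘ inrMap) = Fin.append v a2 :=
      funext fun i => append_inrMap v a1 a2 i
    rw [e1, e2]
    exact or_congr (h1 v hv) (h2 v hv)

theorem defOver_and {k : ℕ} {S T : (Fin k → ZFSet) → Prop}
    (hS : DefinableOver M S) (hT : DefinableOver M T) :
    DefinableOver M fun v => S v ∧ T v := by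
  have := defOver_not (defOver_or (defOver_not hS) (defOver_not hT))
  exact defOver_congr this fun v hv => by tauto

theorem defOver_imp {k : ℕ} {S T : (Fin k → ZFSet) → Prop}
    (hS : DefinableOver M S) (hT : DefinableOver M T) :
    DefinableOver M fun v => S v → T v := by
  have := defOver_or (defOver_not hS) hT
  exact defOver_congr this fun v hv => by tauto

theorem defOver_iff {k : ℕ} {S T : (Fin k → ZFSet) → Prop}
    (hS : DefinableOver M S) (hT : DefinableOver M T) :
    DefinableOver M fun v => (S v ↔ T v) := by
  have := defOver_and (defOver_imp hS hT) (defOver_imp hT hS)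
  exact defOver_congr this fun v hv => by tauto

/-- Block map for quantifier introduction. -/
def exMap {k m : ℕ} : Fin ((k + 1) + m) → Fin ((k + m) + 1) :=
  Fin.append (Fin.snoc (fun i => Fin.castSucc (Fin.castAdd m i)) (Fin.last (k + m)))
    (fun j => Fin.castSucc (Fin.natAdd k j))

theorem snoc_append_exMap {α : Type*} {k m : ℕ} (v : Fin k → α) (a : Fin m → α) (x : α)
    (i : Fin ((k + 1) + m)) :
    (Fin.snoc (Fin.append v a) x : Fin ((k + m) + 1) → α) (exMap i)
      = Fin.append (Fin.snoc v x) a i := by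
  induction i using Fin.addCases with
  | left i =>
    refine Fin.lastCases ?_ (fun j => ?_) i
    · simp [exMap, Fin.append_left, Fin.snoc_last]
    · simp [exMap, Fin.append_left, Fin.snoc_castSucc]
  | right j => simp only [exMap, Fin.append_right, Fin.snoc_castSucc]

theorem defOver_ex {k : ℕ} {S : (Fin (k + 1) → ZFSet) → Prop} (hS : DefinableOver M S) :
    DefinableOver M fun v : Fin k → ZFSet => ∃ x, x ∈ M ∧ S (Fin.snoc v x) := by
  obtain ⟨m, φ, a, ha, hφ⟩ := hS
  refine ⟨m, .ex (ren exMap φ), a, ha, fun v hv => ?_⟩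
  simp only [Sat, SatC, satC_ren]
  have e : ∀ x : ZFSet,
      ((Fin.snoc (Fin.append v a) x : Fin ((k + m) + 1) → ZFSet) ∘ exMap)
        = Fin.append (Fin.snoc v x) a :=
    fun x => funext fun i => snoc_append_exMap v a x i
  have hmem : ∀ x : ZFSet, x ∈ M → ∀ i, (Fin.snoc v x : Fin (k + 1) → ZFSet) i ∈ M := by
    intro x hx i
    refine Fin.lastCases ?_ (fun j => ?_) i
    · simpa [Fin.snoc_last] using hx
    · simpa [Fin.snoc_castSucc] using hv j
  constructor
  · rintro ⟨x, hx, h⟩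
    refine ⟨x, hx, ?_⟩
    rw [e x]
    exact (hφ _ (hmem x hx)).1 h
  · rintro ⟨x, hx, h⟩
    change x ∈ M at hx
    refine ⟨x, hx, ?_⟩
    rw [e x] at h
    exact (hφ _ (hmem x hx)).2 h

theorem defOver_all {k : ℕ} {S : (Fin (k + 1) → ZFSet) → Prop} (hS : DefinableOver M S) :
    DefinableOver M fun v : Fin k → ZFSet => ∀ x, x ∈ M → S (Fin.snoc v x) := by
  have := defOver_not (defOver_ex (defOver_not hS))
  exact defOver_congr this fun v hv => by push_neg; rfl

/-- Substitution of variables. -/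
def substMap {k l m : ℕ} (σ : Fin k → Fin l) : Fin (k + m) → Fin (l + m) :=
  Fin.append (fun i => Fin.castAdd m (σ i)) (Fin.natAdd l)

theorem append_substMap {α : Type*} {k l m : ℕ} (σ : Fin k → Fin l) (v : Fin l → α)
    (a : Fin m → α) (i : Fin (k + m)) :
    Fin.append v a (substMap σ i) = Fin.append (fun i => v (σ i)) a i := by
  induction i using Fin.addCases with
  | left i => simp [substMap, Fin.append_left]
  | right j => simp [substMap, Fin.append_left, Fin.append_right]

theorem defOver_subst {k l : ℕ} (σ : Fin k → Fin l) {S : (Fin k → ZFSet) → Prop}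
    (hS : DefinableOver M S) :
    DefinableOver M fun v : Fin l → ZFSet => S (fun i => v (σ i)) := by
  obtain ⟨m, φ, a, ha, hφ⟩ := hS
  refine ⟨m, ren (substMap σ) φ, a, ha, fun v hv => ?_⟩
  simp only [Sat, satC_ren]
  have e : (Fin.append v a ∘ substMap σ) = Fin.append (fun i => v (σ i)) a :=
    funext fun i => append_substMap σ v a i
  rw [e]
  exact hφ _ fun i => hv (σ i)

end Infra
/-! ### Closure properties of a CTM and derived definable predicates -/

section Toolkit

variable {M : ZFSet}

theorem memM_of_mem (hM : IsCTM M) {x y : ZFSet} (hx : x ∈ M) (hy : y ∈ x) : y ∈ M :=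
  hM.transitive.mem_trans hy hx

theorem singletonM (hM : IsCTM M) {x : ZFSet} (hx : x ∈ M) : ({x} : ZFSet) ∈ M := by
  have := hM.pairing x hx x hx
  rwa [ZFSet.pair_eq_singleton] at this

theorem upairM (hM : IsCTM M) {x y : ZFSet} (hx : x ∈ M) (hy : y ∈ M) :
    ({x, y} : ZFSet) ∈ M := hM.pairing x hx y hy

theorem pair_eq (x y : ZFSet) : ZFSet.pair x y = {{x}, {x, y}} := rfl

theorem kpairM (hM : IsCTM M) {x y : ZFSet} (hx : x ∈ M) (hy : y ∈ M) :
    ZFSet.pair x y ∈ M := by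
  rw [pair_eq]
  exact upairM hM (singletonM hM hx) (upairM hM hx hy)

theorem sepM (hM : IsCTM M) {Q : ZFSet → Prop}
    (hQ : DefinableOver M fun v : Fin 1 → ZFSet => Q (v 0)) {x : ZFSet} (hx : x ∈ M) :
    ZFSet.sep Q x ∈ M := by
  obtain ⟨m, φ, a, ha, hφ⟩ := hQ
  set ρ : Fin (1 + m) → Fin (m + 1) :=
    Fin.append (fun _ => Fin.last m) (fun j => Fin.castSucc j) with hρ
  have key : ZFSet.sep Q x = ZFSet.sep (fun y => Sat M (ren ρ φ) (Fin.snoc a y)) x := by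
    apply ZFSet.ext
    intro y
    simp only [ZFSet.mem_sep, and_congr_right_iff]
    intro hyx
    have hyM : y ∈ M := memM_of_mem hM hx hyx
    have e : ((Fin.snoc a y : Fin (m + 1) → ZFSet) ∘ ρ) = Fin.append (fun _ => y) a := by
      funext i
      induction i using Fin.addCases with
      | left i => simp [hρ, Fin.append_left, Fin.snoc_last]
      | right j => simp [hρ, Fin.append_left, Fin.append_right, Fin.snoc_castSucc]
    have := hφ (fun _ => y) (fun _ => hyM)
    simp only [Sat] at *
    rw [satC_ren, e]
    exact this
  rw [key]
  exact hM.separation m (ren ρ φ) a ha x hx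

theorem interM (hM : IsCTM M) {x y : ZFSet} (hx : x ∈ M) (hy : y ∈ M) : x ∩ y ∈ M := by
  have : x ∩ y = ZFSet.sep (fun z => z ∈ y) x := by
    apply ZFSet.ext; intro z; simp [ZFSet.mem_inter, ZFSet.mem_sep]
  rw [this]
  exact sepM hM (defOver_memR 0 hy) hx

theorem diffM (hM : IsCTM M) {x y : ZFSet} (hx : x ∈ M) (hy : y ∈ M) : x \ y ∈ M := by
  have : x \ y = ZFSet.sep (fun z => ¬ z ∈ y) x := by
    apply ZFSet.ext; intro z; simp [ZFSet.mem_sdiff, ZFSet.mem_sep]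
  rw [this]
  exact sepM hM (defOver_not (defOver_memR 0 hy)) hx

theorem unionM (hM : IsCTM M) {x y : ZFSet} (hx : x ∈ M) (hy : y ∈ M) : x ∪ y ∈ M := by
  have : x ∪ y = (ZFSet.sUnion ({x, y} : ZFSet) : ZFSet) := by
    apply ZFSet.ext; intro z
    simp only [ZFSet.mem_union, ZFSet.mem_sUnion, ZFSet.mem_pair]
    constructor
    · rintro (h | h)
      · exact ⟨x, Or.inl rfl, h⟩
      · exact ⟨y, Or.inr rfl, h⟩
    · rintro ⟨w, (rfl | rfl), h⟩
      · exact Or.inl h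
      · exact Or.inr h
  rw [this]
  exact hM.union _ (upairM hM hx hy)

/-! #### Derived definable predicates -/

/-- Introduce a constant as a fresh last variable. -/
theorem defOver_snocC {k : ℕ} {S : (Fin (k + 1) → ZFSet) → Prop} {c : ZFSet} (hc : c ∈ M)
    (hS : DefinableOver M S) :
    DefinableOver M fun v : Fin k → ZFSet => S (Fin.snoc v c) := by
  have h := defOver_ex (M := M) (defOver_and (defOver_eqR (Fin.last k) hc) hS)
  refine defOver_congr h fun v hv => ?_
  constructor
  · rintro ⟨x, hxM, hx, hSx⟩
    rw [Fin.snoc_last] at hx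
    rwa [hx] at hSx
  · intro hSc
    exact ⟨c, hc, by rw [Fin.snoc_last], hSc⟩

theorem defOver_subsetRel {k : ℕ} (hM : IsCTM M) (i j : Fin k) :
    DefinableOver M fun v => v i ⊆ v j := by
  have h := defOver_all (M := M) (defOver_imp
    (defOver_mem (Fin.last k) (Fin.castSucc i)) (defOver_mem (Fin.last k) (Fin.castSucc j)))
  refine defOver_congr h fun v hv => ?_
  simp only [Fin.snoc_last, Fin.snoc_castSucc]
  constructor
  · intro h' x hx
    exact h' x (memM_of_mem hM (hv i) hx) hx
  · intro h' x _ hx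
    exact h' hx

theorem defOver_eqSingleton {k : ℕ} (hM : IsCTM M) (i j : Fin k) :
    DefinableOver M fun v => v i = {v j} := by
  have h := defOver_all (M := M) (defOver_iff
    (defOver_mem (Fin.last k) (Fin.castSucc i)) (defOver_eq (Fin.last k) (Fin.castSucc j)))
  refine defOver_congr h fun v hv => ?_
  simp only [Fin.snoc_last, Fin.snoc_castSucc]
  constructor
  · intro h'
    apply ZFSet.ext
    intro x
    rw [ZFSet.mem_singleton]
    constructor
    · intro hx; exact (h' x (memM_of_mem hM (hv i) hx)).1 hx
    · rintro rfl; exact (h' _ (hv j)).2 rfl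
  · intro h' x _
    rw [h', ZFSet.mem_singleton]

theorem defOver_eqUPair {k : ℕ} (hM : IsCTM M) (i j l : Fin k) :
    DefinableOver M fun v => v i = {v j, v l} := by
  have h := defOver_all (M := M) (defOver_iff
    (defOver_mem (Fin.last k) (Fin.castSucc i))
    (defOver_or (defOver_eq (Fin.last k) (Fin.castSucc j))
      (defOver_eq (Fin.last k) (Fin.castSucc l))))
  refine defOver_congr h fun v hv => ?_
  simp only [Fin.snoc_last, Fin.snoc_castSucc]
  constructor
  · intro h'
    apply ZFSet.ext
    intro x
    rw [ZFSet.mem_pair]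
    constructor
    · intro hx; exact (h' x (memM_of_mem hM (hv i) hx)).1 hx
    · rintro (rfl | rfl)
      · exact (h' _ (hv j)).2 (Or.inl rfl)
      · exact (h' _ (hv l)).2 (Or.inr rfl)
  · intro h' x _
    rw [h', ZFSet.mem_pair]

theorem defOver_eqPair {k : ℕ} (hM : IsCTM M) (i j l : Fin k) :
    DefinableOver M fun v => v i = ZFSet.pair (v j) (v l) := by
  -- v i = pair (v j) (v l)  ↔  ∃ s ∈ M, ∃ t ∈ M, s = {v j} ∧ t = {v j, v l} ∧ v i = {s, t}
  have h := defOver_ex (M := M) (defOver_ex (M := M)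
    (defOver_and (defOver_eqSingleton hM (Fin.castSucc (Fin.last k)) j.castSucc.castSucc)
      (defOver_and (defOver_eqUPair hM (Fin.last (k + 1)) j.castSucc.castSucc l.castSucc.castSucc)
        (defOver_eqUPair hM i.castSucc.castSucc (Fin.castSucc (Fin.last k)) (Fin.last (k + 1))))))
  refine defOver_congr h fun v hv => ?_
  simp only [Fin.snoc_last, Fin.snoc_castSucc]
  constructor
  · rintro ⟨s, hsM, t, htM, h1, h2, h3⟩
    rw [pair_eq, ← h1, ← h2, ← h3]
  · intro h'
    refine ⟨{v j}, singletonM hM (hv j), {v j, v l}, upairM hM (hv j) (hv l), rfl, rfl, ?_⟩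
    rw [h', pair_eq]

theorem defOver_eqEmpty {k : ℕ} (hM : IsCTM M) (i : Fin k) :
    DefinableOver M fun v => v i = ∅ :=
  defOver_eqR i hM.empty_mem

theorem defOver_eqInter {k : ℕ} (hM : IsCTM M) (i j l : Fin k) :
    DefinableOver M fun v => v i = v j ∩ v l := by
  have h := defOver_all (M := M) (defOver_iff
    (defOver_mem (Fin.last k) (Fin.castSucc i))
    (defOver_and (defOver_mem (Fin.last k) (Fin.castSucc j))
      (defOver_mem (Fin.last k) (Fin.castSucc l))))
  refine defOver_congr h fun v hv => ?_
  simp only [Fin.snoc_last, Fin.snoc_castSucc]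
  constructor
  · intro h'
    apply ZFSet.ext
    intro x
    rw [ZFSet.mem_inter]
    constructor
    · intro hx; exact (h' x (memM_of_mem hM (hv i) hx)).1 hx
    · intro hx; exact (h' x (memM_of_mem hM (hv j) hx.1)).2 hx
  · intro h' x _
    rw [h', ZFSet.mem_inter]

theorem defOver_eqDiff {k : ℕ} (hM : IsCTM M) (i j l : Fin k) :
    DefinableOver M fun v => v i = v j \ v l := by
  have h := defOver_all (M := M) (defOver_iff
    (defOver_mem (Fin.last k) (Fin.castSucc i))
    (defOver_and (defOver_mem (Fin.last k) (Fin.castSucc j))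
      (defOver_not (defOver_mem (Fin.last k) (Fin.castSucc l)))))
  refine defOver_congr h fun v hv => ?_
  simp only [Fin.snoc_last, Fin.snoc_castSucc]
  constructor
  · intro h'
    apply ZFSet.ext
    intro x
    rw [ZFSet.mem_sdiff]
    constructor
    · intro hx; exact (h' x (memM_of_mem hM (hv i) hx)).1 hx
    · intro hx; exact (h' x (memM_of_mem hM (hv j) hx.1)).2 hx
  · intro h' x _
    rw [h', ZFSet.mem_sdiff]

theorem defOver_eqUnion {k : ℕ} (hM : IsCTM M) (i j l : Fin k) :
    DefinableOver M fun v => v i = v j ∪ v l := by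
  have h := defOver_all (M := M) (defOver_iff
    (defOver_mem (Fin.last k) (Fin.castSucc i))
    (defOver_or (defOver_mem (Fin.last k) (Fin.castSucc j))
      (defOver_mem (Fin.last k) (Fin.castSucc l))))
  refine defOver_congr h fun v hv => ?_
  simp only [Fin.snoc_last, Fin.snoc_castSucc]
  constructor
  · intro h'
    apply ZFSet.ext
    intro x
    rw [ZFSet.mem_union]
    constructor
    · intro hx; exact (h' x (memM_of_mem hM (hv i) hx)).1 hx
    · rintro (hx | hx)
      · exact (h' x (memM_of_mem hM (hv j) hx)).2 (Or.inl hx)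
      · exact (h' x (memM_of_mem hM (hv l) hx)).2 (Or.inr hx)
  · intro h' x _
    rw [h', ZFSet.mem_union]

end Toolkit
/-! ### The relative set/co-set algebra over a class `χ` -/

section RelAlg

/-- Decoding of Kuratowski pairs. -/
noncomputable def unpair (b : ZFSet) : ZFSet × ZFSet :=
  if h : ∃ p : ZFSet × ZFSet, b = ZFSet.pair p.1 p.2 then h.choose else (∅, ∅)

theorem unpair_pair (x y : ZFSet) : unpair (ZFSet.pair x y) = (x, y) := by
  have h : ∃ p : ZFSet × ZFSet, ZFSet.pair x y = ZFSet.pair p.1 p.2 := ⟨(x, y), rfl⟩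
  have hs := h.choose_spec
  rw [ZFSet.pair_inj] at hs
  simp only [unpair, dif_pos h]
  exact Prod.ext hs.1.symm hs.2.symm

/-- The tag used for "co-set" codes. -/
def tg1 : ZFSet := {∅}

theorem tg0_ne_tg1 : (∅ : ZFSet) ≠ tg1 := by
  intro h
  have : (∅ : ZFSet) ∈ tg1 := ZFSet.mem_singleton.2 rfl
  rw [← h] at this
  exact ZFSet.notMem_empty _ this

variable {M : ZFSet} {χ : ZFSet → Prop}

/-- Valid codes of the relative set/co-set algebra over `χ`. -/
def VCode (M : ZFSet) (χ : ZFSet → Prop) (b : ZFSet) : Prop :=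
  ∃ a, a ∈ M ∧ (∀ x ∈ a, χ x) ∧ (b = ZFSet.pair ∅ a ∨ b = ZFSet.pair tg1 a)

/-- Denotation of a code: the subclass of `{x | χ x}` it denotes. -/
def denR (χ : ZFSet → Prop) (b : ZFSet) : Set ZFSet :=
  {x | χ x ∧ ((unpair b).1 = tg1 → x ∉ (unpair b).2) ∧ ((unpair b).1 ≠ tg1 → x ∈ (unpair b).2)}

theorem denR_set (a : ZFSet) : denR χ (ZFSet.pair ∅ a) = {x | χ x ∧ x ∈ a} := by
  ext x
  have h0 := tg0_ne_tg1
  simp only [denR, unpair_pair, Set.mem_setOf_eq]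
  tauto

theorem denR_co (a : ZFSet) : denR χ (ZFSet.pair tg1 a) = {x | χ x ∧ x ∉ a} := by
  ext x
  have h1 : tg1 = tg1 := rfl
  simp only [denR, unpair_pair, Set.mem_setOf_eq]
  tauto

theorem denR_subset (b : ZFSet) : denR χ b ⊆ {x | χ x} := fun x hx => hx.1

noncomputable def negR (b : ZFSet) : ZFSet :=
  if (unpair b).1 = tg1 then ZFSet.pair ∅ (unpair b).2 else ZFSet.pair tg1 (unpair b).2

noncomputable def infR (b c : ZFSet) : ZFSet :=
  if (unpair b).1 = tg1 then
    (if (unpair c).1 = tg1 then ZFSet.pair tg1 ((unpair b).2 ∪ (unpair c).2)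
     else ZFSet.pair ∅ ((unpair c).2 \ (unpair b).2))
  else
    (if (unpair c).1 = tg1 then ZFSet.pair ∅ ((unpair b).2 \ (unpair c).2)
     else ZFSet.pair ∅ ((unpair b).2 ∩ (unpair c).2))

noncomputable def supR (b c : ZFSet) : ZFSet :=
  if (unpair b).1 = tg1 then
    (if (unpair c).1 = tg1 then ZFSet.pair tg1 ((unpair b).2 ∩ (unpair c).2)
     else ZFSet.pair tg1 ((unpair b).2 \ (unpair c).2))
  else
    (if (unpair c).1 = tg1 then ZFSet.pair tg1 ((unpair c).2 \ (unpair b).2)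
     else ZFSet.pair ∅ ((unpair b).2 ∪ (unpair c).2))

def botR : ZFSet := ZFSet.pair ∅ ∅
def topR : ZFSet := ZFSet.pair tg1 ∅

theorem denR_bot : denR χ botR = ∅ := by
  rw [botR, denR_set]
  ext x
  simp [ZFSet.notMem_empty]

theorem denR_top : denR χ topR = {x | χ x} := by
  rw [topR, denR_co]
  ext x
  simp [ZFSet.notMem_empty]

theorem VCode_mem_M (hM : IsCTM M) {b : ZFSet} (hb : VCode M χ b) : b ∈ M := by
  obtain ⟨a, haM, -, (rfl | rfl)⟩ := hb
  · exact kpairM hM hM.empty_mem haM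
  · exact kpairM hM (singletonM hM hM.empty_mem) haM

theorem VCode_bot (hM : IsCTM M) : VCode M χ botR :=
  ⟨∅, hM.empty_mem, fun x hx => absurd hx (ZFSet.notMem_empty x), Or.inl rfl⟩

theorem VCode_top (hM : IsCTM M) : VCode M χ topR :=
  ⟨∅, hM.empty_mem, fun x hx => absurd hx (ZFSet.notMem_empty x), Or.inr rfl⟩

theorem VCode_atom (hM : IsCTM M) (hχM : ∀ x, χ x → x ∈ M) {x : ZFSet} (hx : χ x) :
    VCode M χ (ZFSet.pair ∅ {x}) :=
  ⟨{x}, singletonM hM (hχM x hx), fun y hy => by rwa [ZFSet.mem_singleton.1 hy], Or.inl rfl⟩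

theorem denR_atom {x : ZFSet} (hx : χ x) : denR χ (ZFSet.pair ∅ {x}) = {x} := by
  rw [denR_set]
  ext y
  simp only [Set.mem_setOf_eq, ZFSet.mem_singleton, Set.mem_singleton_iff]
  constructor
  · rintro ⟨-, rfl⟩; rfl
  · rintro rfl; exact ⟨hx, rfl⟩

theorem negR_set (a : ZFSet) : negR (ZFSet.pair ∅ a) = ZFSet.pair tg1 a := by
  simp [negR, unpair_pair, tg0_ne_tg1]

theorem negR_co (a : ZFSet) : negR (ZFSet.pair tg1 a) = ZFSet.pair ∅ a := by
  simp [negR, unpair_pair]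

theorem VCode_neg {b : ZFSet} (hb : VCode M χ b) : VCode M χ (negR b) := by
  obtain ⟨a, haM, haχ, (rfl | rfl)⟩ := hb
  · rw [negR_set]; exact ⟨a, haM, haχ, Or.inr rfl⟩
  · rw [negR_co]; exact ⟨a, haM, haχ, Or.inl rfl⟩

theorem denR_neg {b : ZFSet} (hb : VCode M χ b) :
    denR χ (negR b) = {x | χ x} \ denR χ b := by
  obtain ⟨a, haM, haχ, (rfl | rfl)⟩ := hb
  · rw [negR_set, denR_set, denR_co]
    ext x; simp only [Set.mem_setOf_eq, Set.mem_diff]; tauto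
  · rw [negR_co, denR_set, denR_co]
    ext x; simp only [Set.mem_setOf_eq, Set.mem_diff]; tauto

theorem infR_ss (a d : ZFSet) :
    infR (ZFSet.pair ∅ a) (ZFSet.pair ∅ d) = ZFSet.pair ∅ (a ∩ d) := by
  simp [infR, unpair_pair, tg0_ne_tg1]

theorem infR_sc (a d : ZFSet) :
    infR (ZFSet.pair ∅ a) (ZFSet.pair tg1 d) = ZFSet.pair ∅ (a \ d) := by
  simp [infR, unpair_pair, tg0_ne_tg1]

theorem infR_cs (a d : ZFSet) :
    infR (ZFSet.pair tg1 a) (ZFSet.pair ∅ d) = ZFSet.pair ∅ (d \ a) := by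
  simp [infR, unpair_pair, tg0_ne_tg1]

theorem infR_cc (a d : ZFSet) :
    infR (ZFSet.pair tg1 a) (ZFSet.pair tg1 d) = ZFSet.pair tg1 (a ∪ d) := by
  simp [infR, unpair_pair, tg0_ne_tg1]

theorem supR_ss (a d : ZFSet) :
    supR (ZFSet.pair ∅ a) (ZFSet.pair ∅ d) = ZFSet.pair ∅ (a ∪ d) := by
  simp [supR, unpair_pair, tg0_ne_tg1]

theorem supR_sc (a d : ZFSet) :
    supR (ZFSet.pair ∅ a) (ZFSet.pair tg1 d) = ZFSet.pair tg1 (d \ a) := by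
  simp [supR, unpair_pair, tg0_ne_tg1]

theorem supR_cs (a d : ZFSet) :
    supR (ZFSet.pair tg1 a) (ZFSet.pair ∅ d) = ZFSet.pair tg1 (a \ d) := by
  simp [supR, unpair_pair, tg0_ne_tg1]

theorem supR_cc (a d : ZFSet) :
    supR (ZFSet.pair tg1 a) (ZFSet.pair tg1 d) = ZFSet.pair tg1 (a ∩ d) := by
  simp [supR, unpair_pair, tg0_ne_tg1]

theorem VCode_inf (hM : IsCTM M) {b c : ZFSet} (hb : VCode M χ b) (hc : VCode M χ c) :
    VCode M χ (infR b c) := by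
  obtain ⟨a, haM, haχ, (rfl | rfl)⟩ := hb <;> obtain ⟨d, hdM, hdχ, (rfl | rfl)⟩ := hc
  · rw [infR_ss]
    exact ⟨a ∩ d, interM hM haM hdM, fun x hx => haχ x (ZFSet.mem_inter.1 hx).1, Or.inl rfl⟩
  · rw [infR_sc]
    exact ⟨a \ d, diffM hM haM hdM, fun x hx => haχ x (ZFSet.mem_sdiff.1 hx).1, Or.inl rfl⟩
  · rw [infR_cs]
    exact ⟨d \ a, diffM hM hdM haM, fun x hx => hdχ x (ZFSet.mem_sdiff.1 hx).1, Or.inl rfl⟩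
  · rw [infR_cc]
    refine ⟨a ∪ d, unionM hM haM hdM, fun x hx => ?_, Or.inr rfl⟩
    rcases ZFSet.mem_union.1 hx with h | h
    · exact haχ x h
    · exact hdχ x h

theorem VCode_sup (hM : IsCTM M) {b c : ZFSet} (hb : VCode M χ b) (hc : VCode M χ c) :
    VCode M χ (supR b c) := by
  obtain ⟨a, haM, haχ, (rfl | rfl)⟩ := hb <;> obtain ⟨d, hdM, hdχ, (rfl | rfl)⟩ := hc
  · rw [supR_ss]
    refine ⟨a ∪ d, unionM hM haM hdM, fun x hx => ?_, Or.inl rfl⟩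
    rcases ZFSet.mem_union.1 hx with h | h
    · exact haχ x h
    · exact hdχ x h
  · rw [supR_sc]
    exact ⟨d \ a, diffM hM hdM haM, fun x hx => hdχ x (ZFSet.mem_sdiff.1 hx).1, Or.inr rfl⟩
  · rw [supR_cs]
    exact ⟨a \ d, diffM hM haM hdM, fun x hx => haχ x (ZFSet.mem_sdiff.1 hx).1, Or.inr rfl⟩
  · rw [supR_cc]
    exact ⟨a ∩ d, interM hM haM hdM, fun x hx => haχ x (ZFSet.mem_inter.1 hx).1, Or.inr rfl⟩

theorem denR_inf {b c : ZFSet} (hb : VCode M χ b) (hc : VCode M χ c) :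
    denR χ (infR b c) = denR χ b ∩ denR χ c := by
  obtain ⟨a, haM, haχ, (rfl | rfl)⟩ := hb <;> obtain ⟨d, hdM, hdχ, (rfl | rfl)⟩ := hc
  · rw [infR_ss, denR_set, denR_set, denR_set]
    ext x
    simp only [Set.mem_setOf_eq, Set.mem_inter_iff, ZFSet.mem_inter]
    tauto
  · rw [infR_sc, denR_set, denR_set, denR_co]
    ext x
    simp only [Set.mem_setOf_eq, Set.mem_inter_iff, ZFSet.mem_sdiff]
    tauto
  · rw [infR_cs, denR_set, denR_co, denR_set]
    ext x
    simp only [Set.mem_setOf_eq, Set.mem_inter_iff, ZFSet.mem_sdiff]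
    tauto
  · rw [infR_cc, denR_co, denR_co, denR_co]
    ext x
    simp only [Set.mem_setOf_eq, Set.mem_inter_iff, ZFSet.mem_union]
    tauto

theorem denR_sup {b c : ZFSet} (hb : VCode M χ b) (hc : VCode M χ c) :
    denR χ (supR b c) = denR χ b ∪ denR χ c := by
  obtain ⟨a, haM, haχ, (rfl | rfl)⟩ := hb <;> obtain ⟨d, hdM, hdχ, (rfl | rfl)⟩ := hc
  · rw [supR_ss, denR_set, denR_set, denR_set]
    ext x
    simp only [Set.mem_setOf_eq, Set.mem_union, ZFSet.mem_union]
    tauto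
  · rw [supR_sc, denR_co, denR_set, denR_co]
    ext x
    simp only [Set.mem_setOf_eq, Set.mem_union, ZFSet.mem_sdiff]
    by_cases hxa : x ∈ a <;> by_cases hxd : x ∈ d <;> tauto
  · rw [supR_cs, denR_co, denR_co, denR_set]
    ext x
    simp only [Set.mem_setOf_eq, Set.mem_union, ZFSet.mem_sdiff]
    by_cases hxa : x ∈ a <;> by_cases hxd : x ∈ d <;> tauto
  · rw [supR_cc, denR_co, denR_co, denR_co]
    ext x
    simp only [Set.mem_setOf_eq, Set.mem_union, ZFSet.mem_inter]
    tauto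

theorem denR_inj (hM : IsCTM M) (hprop : ∀ s, s ∈ M → ∃ x, χ x ∧ x ∉ s)
    {b c : ZFSet} (hb : VCode M χ b) (hc : VCode M χ c) (h : denR χ b = denR χ c) :
    b = c := by
  obtain ⟨a, haM, haχ, (rfl | rfl)⟩ := hb <;> obtain ⟨d, hdM, hdχ, (rfl | rfl)⟩ := hc <;>
    rw [Set.ext_iff] at h
  · suffices had : a = d by rw [had]
    rw [denR_set, denR_set] at h
    apply ZFSet.ext
    intro x
    constructor
    · intro hx
      exact ((h x).1 ⟨haχ x hx, hx⟩).2
    · intro hx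
      exact ((h x).2 ⟨hdχ x hx, hx⟩).2
  · exfalso
    obtain ⟨x, hx1, hx2⟩ := hprop (a ∪ d) (unionM hM haM hdM)
    rw [ZFSet.mem_union] at hx2
    push_neg at hx2
    rw [denR_set, denR_co] at h
    exact hx2.1 (((h x).2 ⟨hx1, hx2.2⟩).2)
  · exfalso
    obtain ⟨x, hx1, hx2⟩ := hprop (a ∪ d) (unionM hM haM hdM)
    rw [ZFSet.mem_union] at hx2
    push_neg at hx2
    rw [denR_co, denR_set] at h
    exact hx2.2 (((h x).1 ⟨hx1, hx2.1⟩).2)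
  · suffices had : a = d by rw [had]
    apply ZFSet.ext
    intro x
    rw [denR_co, denR_co] at h
    constructor
    · intro hx
      by_contra hxd
      exact ((h x).2 ⟨haχ x hx, hxd⟩).2 hx
    · intro hx
      by_contra hxa
      exact ((h x).1 ⟨hdχ x hx, hxa⟩).2 hx

theorem denR_dense (hprop : ∀ s, s ∈ M → ∃ x, χ x ∧ x ∉ s)
    {b : ZFSet} (hb : VCode M χ b) (hbne : b ≠ botR) : ∃ x, x ∈ denR χ b := by
  obtain ⟨a, haM, haχ, (rfl | rfl)⟩ := hb
  · rcases ZFSet.eq_empty_or_nonempty a with rfl | ⟨x, hx⟩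
    · exact absurd rfl hbne
    · exact ⟨x, by rw [denR_set]; exact ⟨haχ x hx, hx⟩⟩
  · obtain ⟨x, hx1, hx2⟩ := hprop a haM
    exact ⟨x, by rw [denR_co]; exact ⟨hx1, hx2⟩⟩

end RelAlg
/-! ### Syntactic descriptions of the algebra operations and their definability -/

section DefCode

variable {M : ZFSet} {χ : ZFSet → Prop}

theorem pair_mem_M (hM : IsCTM M) {x y : ZFSet} (h : ZFSet.pair x y ∈ M) :
    x ∈ M ∧ y ∈ M := by
  have h1 : ({x} : ZFSet) ∈ ZFSet.pair x y := by
    rw [pair_eq]; exact ZFSet.mem_pair.2 (Or.inl rfl)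
  have h2 : ({x, y} : ZFSet) ∈ ZFSet.pair x y := by
    rw [pair_eq]; exact ZFSet.mem_pair.2 (Or.inr rfl)
  constructor
  · exact memM_of_mem hM (memM_of_mem hM h h1) (ZFSet.mem_singleton.2 rfl)
  · exact memM_of_mem hM (memM_of_mem hM h h2) (ZFSet.mem_pair.2 (Or.inr rfl))

theorem tg1_ne_tg0 : tg1 ≠ (∅ : ZFSet) := Ne.symm tg0_ne_tg1

theorem tg1_mem (hM : IsCTM M) : tg1 ∈ M := singletonM hM hM.empty_mem

/-- `≤` on codes, described syntactically. -/
def leCode (b c : ZFSet) : Prop :=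
  (∃ a d, b = ZFSet.pair ∅ a ∧ c = ZFSet.pair ∅ d ∧ a ⊆ d) ∨
  (∃ a d, b = ZFSet.pair ∅ a ∧ c = ZFSet.pair tg1 d ∧ ∀ x ∈ a, x ∉ d) ∨
  (∃ a d, b = ZFSet.pair tg1 a ∧ c = ZFSet.pair tg1 d ∧ d ⊆ a)

theorem leCode_iff (hM : IsCTM M) (hprop : ∀ s, s ∈ M → ∃ x, χ x ∧ x ∉ s)
    {b c : ZFSet} (hb : VCode M χ b) (hc : VCode M χ c) :
    denR χ b ⊆ denR χ c ↔ leCode b c := by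
  obtain ⟨a, haM, haχ, (rfl | rfl)⟩ := hb <;> obtain ⟨d, hdM, hdχ, (rfl | rfl)⟩ := hc
  · rw [denR_set, denR_set]
    constructor
    · intro h
      refine Or.inl ⟨a, d, rfl, rfl, fun x hx => ?_⟩
      exact (h ⟨haχ x hx, hx⟩).2
    · rintro (⟨a', d', ha', hd', hss⟩ | ⟨a', d', ha', hd', hss⟩ | ⟨a', d', ha', hd', hss⟩)
      · obtain ⟨-, rfl⟩ := ZFSet.pair_inj.1 ha'
        obtain ⟨-, rfl⟩ := ZFSet.pair_inj.1 hd'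
        exact fun x hx => ⟨hx.1, hss hx.2⟩
      · exact absurd (ZFSet.pair_inj.1 hd').1 (by first | exact tg0_ne_tg1 | exact tg1_ne_tg0)
      · exact absurd (ZFSet.pair_inj.1 ha').1 (by first | exact tg0_ne_tg1 | exact tg1_ne_tg0)
  · rw [denR_set, denR_co]
    constructor
    · intro h
      refine Or.inr (Or.inl ⟨a, d, rfl, rfl, fun x hx hxd => ?_⟩)
      exact (h ⟨haχ x hx, hx⟩).2 hxd
    · rintro (⟨a', d', ha', hd', hss⟩ | ⟨a', d', ha', hd', hss⟩ | ⟨a', d', ha', hd', hss⟩)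
      · exact absurd (ZFSet.pair_inj.1 hd').1 (by first | exact tg0_ne_tg1 | exact tg1_ne_tg0)
      · obtain ⟨-, rfl⟩ := ZFSet.pair_inj.1 ha'
        obtain ⟨-, rfl⟩ := ZFSet.pair_inj.1 hd'
        exact fun x hx => ⟨hx.1, hss x hx.2⟩
      · exact absurd (ZFSet.pair_inj.1 ha').1 (by first | exact tg0_ne_tg1 | exact tg1_ne_tg0)
  · rw [denR_co, denR_set]
    constructor
    · intro h
      exfalso
      obtain ⟨x, hx1, hx2⟩ := hprop (a ∪ d) (unionM hM haM hdM)
      rw [ZFSet.mem_union] at hx2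
      push_neg at hx2
      exact hx2.2 (h ⟨hx1, hx2.1⟩).2
    · rintro (⟨a', d', ha', hd', hss⟩ | ⟨a', d', ha', hd', hss⟩ | ⟨a', d', ha', hd', hss⟩)
      · exact absurd (ZFSet.pair_inj.1 ha').1 (by first | exact tg0_ne_tg1 | exact tg1_ne_tg0)
      · exact absurd (ZFSet.pair_inj.1 ha').1 (by first | exact tg0_ne_tg1 | exact tg1_ne_tg0)
      · exact absurd (ZFSet.pair_inj.1 hd').1 (by first | exact tg0_ne_tg1 | exact tg1_ne_tg0)
  · rw [denR_co, denR_co]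
    constructor
    · intro h
      refine Or.inr (Or.inr ⟨a, d, rfl, rfl, fun x hx => ?_⟩)
      by_contra hxa
      exact (h ⟨hdχ x hx, hxa⟩).2 hx
    · rintro (⟨a', d', ha', hd', hss⟩ | ⟨a', d', ha', hd', hss⟩ | ⟨a', d', ha', hd', hss⟩)
      · exact absurd (ZFSet.pair_inj.1 ha').1 (by first | exact tg0_ne_tg1 | exact tg1_ne_tg0)
      · exact absurd (ZFSet.pair_inj.1 ha').1 (by first | exact tg0_ne_tg1 | exact tg1_ne_tg0)
      · obtain ⟨-, rfl⟩ := ZFSet.pair_inj.1 ha'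
        obtain ⟨-, rfl⟩ := ZFSet.pair_inj.1 hd'
        exact fun x hx => ⟨hx.1, fun hxd => hx.2 (hss hxd)⟩

/-- Negation on codes, described syntactically. -/
def negCode (b r : ZFSet) : Prop :=
  (∃ a, b = ZFSet.pair ∅ a ∧ r = ZFSet.pair tg1 a) ∨
  (∃ a, b = ZFSet.pair tg1 a ∧ r = ZFSet.pair ∅ a)

theorem negCode_iff {b r : ZFSet} (hb : VCode M χ b) : r = negR b ↔ negCode b r := by
  obtain ⟨a, haM, haχ, (rfl | rfl)⟩ := hb
  · rw [negR_set]
    constructor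
    · rintro rfl; exact Or.inl ⟨a, rfl, rfl⟩
    · rintro (⟨a', ha', hr⟩ | ⟨a', ha', hr⟩)
      · obtain ⟨-, rfl⟩ := ZFSet.pair_inj.1 ha'
        exact hr
      · exact absurd (ZFSet.pair_inj.1 ha').1 (by first | exact tg0_ne_tg1 | exact tg1_ne_tg0)
  · rw [negR_co]
    constructor
    · rintro rfl; exact Or.inr ⟨a, rfl, rfl⟩
    · rintro (⟨a', ha', hr⟩ | ⟨a', ha', hr⟩)
      · exact absurd (ZFSet.pair_inj.1 ha').1 (by first | exact tg0_ne_tg1 | exact tg1_ne_tg0)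
      · obtain ⟨-, rfl⟩ := ZFSet.pair_inj.1 ha'
        exact hr

/-- Infimum on codes, described syntactically. -/
def infCode (b c r : ZFSet) : Prop :=
  (∃ a d u, b = ZFSet.pair ∅ a ∧ c = ZFSet.pair ∅ d ∧ u = a ∩ d ∧ r = ZFSet.pair ∅ u) ∨
  (∃ a d u, b = ZFSet.pair ∅ a ∧ c = ZFSet.pair tg1 d ∧ u = a \ d ∧ r = ZFSet.pair ∅ u) ∨
  (∃ a d u, b = ZFSet.pair tg1 a ∧ c = ZFSet.pair ∅ d ∧ u = d \ a ∧ r = ZFSet.pair ∅ u) ∨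
  (∃ a d u, b = ZFSet.pair tg1 a ∧ c = ZFSet.pair tg1 d ∧ u = a ∪ d ∧ r = ZFSet.pair tg1 u)

/-- Supremum on codes, described syntactically. -/
def supCode (b c r : ZFSet) : Prop :=
  (∃ a d u, b = ZFSet.pair ∅ a ∧ c = ZFSet.pair ∅ d ∧ u = a ∪ d ∧ r = ZFSet.pair ∅ u) ∨
  (∃ a d u, b = ZFSet.pair ∅ a ∧ c = ZFSet.pair tg1 d ∧ u = d \ a ∧ r = ZFSet.pair tg1 u) ∨
  (∃ a d u, b = ZFSet.pair tg1 a ∧ c = ZFSet.pair ∅ d ∧ u = a \ d ∧ r = ZFSet.pair tg1 u) ∨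
  (∃ a d u, b = ZFSet.pair tg1 a ∧ c = ZFSet.pair tg1 d ∧ u = a ∩ d ∧ r = ZFSet.pair tg1 u)

theorem infCode_iff {b c r : ZFSet} (hb : VCode M χ b) (hc : VCode M χ c) :
    r = infR b c ↔ infCode b c r := by
  obtain ⟨a, haM, haχ, (rfl | rfl)⟩ := hb <;> obtain ⟨d, hdM, hdχ, (rfl | rfl)⟩ := hc <;>
    [rw [infR_ss]; rw [infR_sc]; rw [infR_cs]; rw [infR_cc]] <;>
    constructor
  · rintro rfl; exact Or.inl ⟨a, d, _, rfl, rfl, rfl, rfl⟩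
  · rintro (⟨a', d', u, ha', hd', hu, hr⟩ | ⟨a', d', u, ha', hd', hu, hr⟩ |
      ⟨a', d', u, ha', hd', hu, hr⟩ | ⟨a', d', u, ha', hd', hu, hr⟩)
    · obtain ⟨-, rfl⟩ := ZFSet.pair_inj.1 ha'
      obtain ⟨-, rfl⟩ := ZFSet.pair_inj.1 hd'
      rw [hr, hu]
    · exact absurd (ZFSet.pair_inj.1 hd').1 (by first | exact tg0_ne_tg1 | exact tg1_ne_tg0)
    · exact absurd (ZFSet.pair_inj.1 ha').1 (by first | exact tg0_ne_tg1 | exact tg1_ne_tg0)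
    · exact absurd (ZFSet.pair_inj.1 ha').1 (by first | exact tg0_ne_tg1 | exact tg1_ne_tg0)
  · rintro rfl; exact Or.inr (Or.inl ⟨a, d, _, rfl, rfl, rfl, rfl⟩)
  · rintro (⟨a', d', u, ha', hd', hu, hr⟩ | ⟨a', d', u, ha', hd', hu, hr⟩ |
      ⟨a', d', u, ha', hd', hu, hr⟩ | ⟨a', d', u, ha', hd', hu, hr⟩)
    · exact absurd (ZFSet.pair_inj.1 hd').1 (by first | exact tg0_ne_tg1 | exact tg1_ne_tg0)
    · obtain ⟨-, rfl⟩ := ZFSet.pair_inj.1 ha'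
      obtain ⟨-, rfl⟩ := ZFSet.pair_inj.1 hd'
      rw [hr, hu]
    · exact absurd (ZFSet.pair_inj.1 ha').1 (by first | exact tg0_ne_tg1 | exact tg1_ne_tg0)
    · exact absurd (ZFSet.pair_inj.1 ha').1 (by first | exact tg0_ne_tg1 | exact tg1_ne_tg0)
  · rintro rfl; exact Or.inr (Or.inr (Or.inl ⟨a, d, _, rfl, rfl, rfl, rfl⟩))
  · rintro (⟨a', d', u, ha', hd', hu, hr⟩ | ⟨a', d', u, ha', hd', hu, hr⟩ |
      ⟨a', d', u, ha', hd', hu, hr⟩ | ⟨a', d', u, ha', hd', hu, hr⟩)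
    · exact absurd (ZFSet.pair_inj.1 ha').1 (by first | exact tg0_ne_tg1 | exact tg1_ne_tg0)
    · exact absurd (ZFSet.pair_inj.1 ha').1 (by first | exact tg0_ne_tg1 | exact tg1_ne_tg0)
    · obtain ⟨-, rfl⟩ := ZFSet.pair_inj.1 ha'
      obtain ⟨-, rfl⟩ := ZFSet.pair_inj.1 hd'
      rw [hr, hu]
    · exact absurd (ZFSet.pair_inj.1 hd').1 (by first | exact tg0_ne_tg1 | exact tg1_ne_tg0)
  · rintro rfl; exact Or.inr (Or.inr (Or.inr ⟨a, d, _, rfl, rfl, rfl, rfl⟩))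
  · rintro (⟨a', d', u, ha', hd', hu, hr⟩ | ⟨a', d', u, ha', hd', hu, hr⟩ |
      ⟨a', d', u, ha', hd', hu, hr⟩ | ⟨a', d', u, ha', hd', hu, hr⟩)
    · exact absurd (ZFSet.pair_inj.1 ha').1 (by first | exact tg0_ne_tg1 | exact tg1_ne_tg0)
    · exact absurd (ZFSet.pair_inj.1 ha').1 (by first | exact tg0_ne_tg1 | exact tg1_ne_tg0)
    · exact absurd (ZFSet.pair_inj.1 hd').1 (by first | exact tg0_ne_tg1 | exact tg1_ne_tg0)
    · obtain ⟨-, rfl⟩ := ZFSet.pair_inj.1 ha'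
      obtain ⟨-, rfl⟩ := ZFSet.pair_inj.1 hd'
      rw [hr, hu]

theorem supCode_iff {b c r : ZFSet} (hb : VCode M χ b) (hc : VCode M χ c) :
    r = supR b c ↔ supCode b c r := by
  obtain ⟨a, haM, haχ, (rfl | rfl)⟩ := hb <;> obtain ⟨d, hdM, hdχ, (rfl | rfl)⟩ := hc <;>
    [rw [supR_ss]; rw [supR_sc]; rw [supR_cs]; rw [supR_cc]] <;>
    constructor
  · rintro rfl; exact Or.inl ⟨a, d, _, rfl, rfl, rfl, rfl⟩
  · rintro (⟨a', d', u, ha', hd', hu, hr⟩ | ⟨a', d', u, ha', hd', hu, hr⟩ |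
      ⟨a', d', u, ha', hd', hu, hr⟩ | ⟨a', d', u, ha', hd', hu, hr⟩)
    · obtain ⟨-, rfl⟩ := ZFSet.pair_inj.1 ha'
      obtain ⟨-, rfl⟩ := ZFSet.pair_inj.1 hd'
      rw [hr, hu]
    · exact absurd (ZFSet.pair_inj.1 hd').1 (by first | exact tg0_ne_tg1 | exact tg1_ne_tg0)
    · exact absurd (ZFSet.pair_inj.1 ha').1 (by first | exact tg0_ne_tg1 | exact tg1_ne_tg0)
    · exact absurd (ZFSet.pair_inj.1 ha').1 (by first | exact tg0_ne_tg1 | exact tg1_ne_tg0)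
  · rintro rfl; exact Or.inr (Or.inl ⟨a, d, _, rfl, rfl, rfl, rfl⟩)
  · rintro (⟨a', d', u, ha', hd', hu, hr⟩ | ⟨a', d', u, ha', hd', hu, hr⟩ |
      ⟨a', d', u, ha', hd', hu, hr⟩ | ⟨a', d', u, ha', hd', hu, hr⟩)
    · exact absurd (ZFSet.pair_inj.1 hd').1 (by first | exact tg0_ne_tg1 | exact tg1_ne_tg0)
    · obtain ⟨-, rfl⟩ := ZFSet.pair_inj.1 ha'
      obtain ⟨-, rfl⟩ := ZFSet.pair_inj.1 hd'
      rw [hr, hu]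
    · exact absurd (ZFSet.pair_inj.1 ha').1 (by first | exact tg0_ne_tg1 | exact tg1_ne_tg0)
    · exact absurd (ZFSet.pair_inj.1 ha').1 (by first | exact tg0_ne_tg1 | exact tg1_ne_tg0)
  · rintro rfl; exact Or.inr (Or.inr (Or.inl ⟨a, d, _, rfl, rfl, rfl, rfl⟩))
  · rintro (⟨a', d', u, ha', hd', hu, hr⟩ | ⟨a', d', u, ha', hd', hu, hr⟩ |
      ⟨a', d', u, ha', hd', hu, hr⟩ | ⟨a', d', u, ha', hd', hu, hr⟩)
    · exact absurd (ZFSet.pair_inj.1 ha').1 (by first | exact tg0_ne_tg1 | exact tg1_ne_tg0)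
    · exact absurd (ZFSet.pair_inj.1 ha').1 (by first | exact tg0_ne_tg1 | exact tg1_ne_tg0)
    · obtain ⟨-, rfl⟩ := ZFSet.pair_inj.1 ha'
      obtain ⟨-, rfl⟩ := ZFSet.pair_inj.1 hd'
      rw [hr, hu]
    · exact absurd (ZFSet.pair_inj.1 hd').1 (by first | exact tg0_ne_tg1 | exact tg1_ne_tg0)
  · rintro rfl; exact Or.inr (Or.inr (Or.inr ⟨a, d, _, rfl, rfl, rfl, rfl⟩))
  · rintro (⟨a', d', u, ha', hd', hu, hr⟩ | ⟨a', d', u, ha', hd', hu, hr⟩ |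
      ⟨a', d', u, ha', hd', hu, hr⟩ | ⟨a', d', u, ha', hd', hu, hr⟩)
    · exact absurd (ZFSet.pair_inj.1 ha').1 (by first | exact tg0_ne_tg1 | exact tg1_ne_tg0)
    · exact absurd (ZFSet.pair_inj.1 ha').1 (by first | exact tg0_ne_tg1 | exact tg1_ne_tg0)
    · exact absurd (ZFSet.pair_inj.1 hd').1 (by first | exact tg0_ne_tg1 | exact tg1_ne_tg0)
    · obtain ⟨-, rfl⟩ := ZFSet.pair_inj.1 ha'
      obtain ⟨-, rfl⟩ := ZFSet.pair_inj.1 hd'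
      rw [hr, hu]

end DefCode
/-! ### Definability of the code predicates -/

section DefDef

variable {M : ZFSet} {χ : ZFSet → Prop}

theorem dEqPairC (hM : IsCTM M) {c : ZFSet} (hc : c ∈ M) {k : ℕ} (i j : Fin k) :
    DefinableOver M fun v => v i = ZFSet.pair c (v j) := by
  have h := defOver_snocC hc (defOver_eqPair hM i.castSucc (Fin.last k) j.castSucc)
  refine defOver_congr h fun v hv => ?_
  simp only [Fin.snoc_last, Fin.snoc_castSucc]

theorem dVCode (hM : IsCTM M)
    (hχdef : DefinableOver M fun v : Fin 1 → ZFSet => χ (v 0)) {k : ℕ} (i : Fin k) :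
    DefinableOver M fun v => VCode M χ (v i) := by
  have hχ2 : DefinableOver M fun w : Fin ((k + 1) + 1) → ZFSet => χ (w (Fin.last (k + 1))) := by
    have := defOver_subst (M := M) (fun _ : Fin 1 => Fin.last (k + 1)) hχdef
    exact defOver_congr this fun v hv => Iff.rfl
  have hall := defOver_all (M := M) (defOver_imp
    (defOver_mem (Fin.last (k + 1)) (Fin.castSucc (Fin.last k))) hχ2)
  have hbody := defOver_and hall (defOver_or
    (dEqPairC hM hM.empty_mem i.castSucc (Fin.last k))
    (dEqPairC hM (tg1_mem hM) i.castSucc (Fin.last k)))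
  have h := defOver_ex hbody
  refine defOver_congr h fun v hv => ?_
  simp only [Fin.snoc_last, Fin.snoc_castSucc]
  constructor
  · rintro ⟨a, haM, hall', hor⟩
    exact ⟨a, haM, fun x hx => hall' x (memM_of_mem hM haM hx) hx, hor⟩
  · rintro ⟨a, haM, hall', hor⟩
    exact ⟨a, haM, fun x _ hx => hall' x hx, hor⟩

theorem dLeCode (hM : IsCTM M) {k : ℕ} (i j : Fin k) :
    DefinableOver M fun v => leCode (v i) (v j) := by
  have d1 := defOver_ex (M := M) (defOver_ex (defOver_and
    (dEqPairC hM hM.empty_mem i.castSucc.castSucc (Fin.castSucc (Fin.last k)))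
    (defOver_and
      (dEqPairC hM hM.empty_mem j.castSucc.castSucc (Fin.last (k + 1)))
      (defOver_subsetRel hM (Fin.castSucc (Fin.last k)) (Fin.last (k + 1))))))
  have d2inner := defOver_all (M := M) (defOver_imp
    (defOver_mem (Fin.last (k + 2)) (Fin.castSucc (Fin.castSucc (Fin.last k))))
    (defOver_not (defOver_mem (Fin.last (k + 2)) (Fin.castSucc (Fin.last (k + 1))))))
  have d2 := defOver_ex (M := M) (defOver_ex (defOver_and
    (dEqPairC hM hM.empty_mem i.castSucc.castSucc (Fin.castSucc (Fin.last k)))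
    (defOver_and
      (dEqPairC hM (tg1_mem hM) j.castSucc.castSucc (Fin.last (k + 1)))
      d2inner)))
  have d3 := defOver_ex (M := M) (defOver_ex (defOver_and
    (dEqPairC hM (tg1_mem hM) i.castSucc.castSucc (Fin.castSucc (Fin.last k)))
    (defOver_and
      (dEqPairC hM (tg1_mem hM) j.castSucc.castSucc (Fin.last (k + 1)))
      (defOver_subsetRel hM (Fin.last (k + 1)) (Fin.castSucc (Fin.last k))))))
  have h := defOver_or d1 (defOver_or d2 d3)
  refine defOver_congr h fun v hv => ?_
  simp only [Fin.snoc_last, Fin.snoc_castSucc]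
  constructor
  · rintro (⟨a, haM, d, hdM, h1, h2, h3⟩ | ⟨a, haM, d, hdM, h1, h2, h3⟩ |
      ⟨a, haM, d, hdM, h1, h2, h3⟩)
    · exact Or.inl ⟨a, d, h1, h2, h3⟩
    · exact Or.inr (Or.inl ⟨a, d, h1, h2, fun x hx => h3 x (memM_of_mem hM haM hx) hx⟩)
    · exact Or.inr (Or.inr ⟨a, d, h1, h2, h3⟩)
  · rintro (⟨a, d, h1, h2, h3⟩ | ⟨a, d, h1, h2, h3⟩ | ⟨a, d, h1, h2, h3⟩)
    · have haM := (pair_mem_M hM (h1 ▸ hv i)).2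
      have hdM := (pair_mem_M hM (h2 ▸ hv j)).2
      exact Or.inl ⟨a, haM, d, hdM, h1, h2, h3⟩
    · have haM := (pair_mem_M hM (h1 ▸ hv i)).2
      have hdM := (pair_mem_M hM (h2 ▸ hv j)).2
      exact Or.inr (Or.inl ⟨a, haM, d, hdM, h1, h2, fun x _ hx => h3 x hx⟩)
    · have haM := (pair_mem_M hM (h1 ▸ hv i)).2
      have hdM := (pair_mem_M hM (h2 ▸ hv j)).2
      exact Or.inr (Or.inr ⟨a, haM, d, hdM, h1, h2, h3⟩)

theorem dNegCode (hM : IsCTM M) {k : ℕ} (i j : Fin k) :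
    DefinableOver M fun v => negCode (v i) (v j) := by
  have d1 := defOver_ex (M := M) (defOver_and
    (dEqPairC hM hM.empty_mem i.castSucc (Fin.last k))
    (dEqPairC hM (tg1_mem hM) j.castSucc (Fin.last k)))
  have d2 := defOver_ex (M := M) (defOver_and
    (dEqPairC hM (tg1_mem hM) i.castSucc (Fin.last k))
    (dEqPairC hM hM.empty_mem j.castSucc (Fin.last k)))
  have h := defOver_or d1 d2
  refine defOver_congr h fun v hv => ?_
  simp only [Fin.snoc_last, Fin.snoc_castSucc]
  constructor
  · rintro (⟨a, haM, h1, h2⟩ | ⟨a, haM, h1, h2⟩)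
    · exact Or.inl ⟨a, h1, h2⟩
    · exact Or.inr ⟨a, h1, h2⟩
  · rintro (⟨a, h1, h2⟩ | ⟨a, h1, h2⟩)
    · exact Or.inl ⟨a, (pair_mem_M hM (h1 ▸ hv i)).2, h1, h2⟩
    · exact Or.inr ⟨a, (pair_mem_M hM (h1 ▸ hv i)).2, h1, h2⟩

/-- Helper for one disjunct of `infCode`/`supCode`. -/
theorem dOpCase (hM : IsCTM M) {k : ℕ} (i j l : Fin k) (t1 t2 t3 : ZFSet)
    (ht1 : t1 ∈ M) (ht2 : t2 ∈ M) (ht3 : t3 ∈ M) (op : ZFSet → ZFSet → ZFSet)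
    (hop : ∀ x y, x ∈ M → y ∈ M → op x y ∈ M)
    (hdef : ∀ (m : ℕ) (i' j' l' : Fin m), DefinableOver M fun v => v i' = op (v j') (v l')) :
    DefinableOver M fun v => ∃ a d u, v i = ZFSet.pair t1 a ∧ v j = ZFSet.pair t2 d ∧
      u = op a d ∧ v l = ZFSet.pair t3 u := by
  have h := defOver_ex (M := M) (defOver_ex (defOver_ex (defOver_and
    (dEqPairC hM ht1 i.castSucc.castSucc.castSucc
      (Fin.castSucc (Fin.castSucc (Fin.last k))))
    (defOver_and
      (dEqPairC hM ht2 j.castSucc.castSucc.castSucc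
        (Fin.castSucc (Fin.last (k + 1))))
      (defOver_and
        (hdef (k + 3) (Fin.last (k + 2)) (Fin.castSucc (Fin.castSucc (Fin.last k)))
          (Fin.castSucc (Fin.last (k + 1))))
        (dEqPairC hM ht3 l.castSucc.castSucc.castSucc (Fin.last (k + 2))))))))
  refine defOver_congr h fun v hv => ?_
  simp only [Fin.snoc_last, Fin.snoc_castSucc]
  constructor
  · rintro ⟨a, haM, d, hdM, u, huM, h1, h2, h3, h4⟩
    exact ⟨a, d, u, h1, h2, h3, h4⟩
  · rintro ⟨a, d, u, h1, h2, h3, h4⟩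
    have haM := (pair_mem_M hM (h1 ▸ hv i)).2
    have hdM := (pair_mem_M hM (h2 ▸ hv j)).2
    exact ⟨a, haM, d, hdM, u, h3 ▸ hop a d haM hdM, h1, h2, h3, h4⟩

theorem dInter' (hM : IsCTM M) : ∀ (m : ℕ) (i' j' l' : Fin m),
    DefinableOver M fun v => v i' = (v j') ∩ (v l') := fun _ i j l => defOver_eqInter hM i j l

theorem dDiff' (hM : IsCTM M) : ∀ (m : ℕ) (i' j' l' : Fin m),
    DefinableOver M fun v => v i' = (v j') \ (v l') := fun _ i j l => defOver_eqDiff hM i j l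

theorem dDiffRev' (hM : IsCTM M) : ∀ (m : ℕ) (i' j' l' : Fin m),
    DefinableOver M fun v => v i' = (v l') \ (v j') := fun _ i j l => defOver_eqDiff hM i l j

theorem dUnion' (hM : IsCTM M) : ∀ (m : ℕ) (i' j' l' : Fin m),
    DefinableOver M fun v => v i' = (v j') ∪ (v l') := fun _ i j l => defOver_eqUnion hM i j l

theorem dInfCode (hM : IsCTM M) {k : ℕ} (i j l : Fin k) :
    DefinableOver M fun v => infCode (v i) (v j) (v l) := by
  have h := defOver_or
    (dOpCase hM i j l ∅ ∅ ∅ hM.empty_mem hM.empty_mem hM.empty_mem _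
      (fun x y hx hy => interM hM hx hy) (dInter' hM))
    (defOver_or
      (dOpCase hM i j l ∅ tg1 ∅ hM.empty_mem (tg1_mem hM) hM.empty_mem _
        (fun x y hx hy => diffM hM hx hy) (dDiff' hM))
      (defOver_or
        (dOpCase hM i j l tg1 ∅ ∅ (tg1_mem hM) hM.empty_mem hM.empty_mem _
          (fun x y hx hy => diffM hM hy hx) (dDiffRev' hM))
        (dOpCase hM i j l tg1 tg1 tg1 (tg1_mem hM) (tg1_mem hM) (tg1_mem hM) _
          (fun x y hx hy => unionM hM hx hy) (dUnion' hM))))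
  exact defOver_congr h fun v hv => Iff.rfl

theorem dSupCode (hM : IsCTM M) {k : ℕ} (i j l : Fin k) :
    DefinableOver M fun v => supCode (v i) (v j) (v l) := by
  have h := defOver_or
    (dOpCase hM i j l ∅ ∅ ∅ hM.empty_mem hM.empty_mem hM.empty_mem _
      (fun x y hx hy => unionM hM hx hy) (dUnion' hM))
    (defOver_or
      (dOpCase hM i j l ∅ tg1 tg1 hM.empty_mem (tg1_mem hM) (tg1_mem hM) _
        (fun x y hx hy => diffM hM hy hx) (dDiffRev' hM))
      (defOver_or
        (dOpCase hM i j l tg1 ∅ tg1 (tg1_mem hM) hM.empty_mem (tg1_mem hM) _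
          (fun x y hx hy => diffM hM hx hy) (dDiff' hM))
        (dOpCase hM i j l tg1 tg1 tg1 (tg1_mem hM) (tg1_mem hM) (tg1_mem hM) _
          (fun x y hx hy => interM hM hx hy) (dInter' hM))))
  exact defOver_congr h fun v hv => Iff.rfl

end DefDef
/-! ### `M`-suprema in the relative algebra -/

section RelSup

variable {M : ZFSet} {χ : ZFSet → Prop}

theorem dPairMemS (hM : IsCTM M) {t S : ZFSet} (ht : t ∈ M) (hS : S ∈ M) {k : ℕ}
    (i : Fin k) : DefinableOver M fun v => ZFSet.pair t (v i) ∈ S := by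
  have h := defOver_ex (M := M) (defOver_and
    (dEqPairC hM ht (Fin.last k) i.castSucc)
    (defOver_memR (Fin.last k) hS))
  refine defOver_congr h fun v hv => ?_
  simp only [Fin.snoc_last, Fin.snoc_castSucc]
  constructor
  · rintro ⟨p, hpM, rfl, hp2⟩
    exact hp2
  · intro hp
    exact ⟨ZFSet.pair t (v i), memM_of_mem hM hS hp, rfl, hp⟩

theorem mem_sUnion3 {S a t x : ZFSet} (hpS : ZFSet.pair t a ∈ S) (hx : x ∈ a) :
    x ∈ (ZFSet.sUnion (ZFSet.sUnion (ZFSet.sUnion S : ZFSet) : ZFSet) : ZFSet) := by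
  refine ZFSet.mem_sUnion.2 ⟨a, ?_, hx⟩
  refine ZFSet.mem_sUnion.2 ⟨{t, a}, ?_, ZFSet.mem_pair.2 (Or.inr rfl)⟩
  refine ZFSet.mem_sUnion.2 ⟨ZFSet.pair t a, hpS, ?_⟩
  rw [pair_eq]
  exact ZFSet.mem_pair.2 (Or.inr rfl)

theorem relSup (hM : IsCTM M)
    (hχdef : DefinableOver M fun v : Fin 1 → ZFSet => χ (v 0))
    {S : ZFSet} (hS : S ∈ M) (hall : ∀ c ∈ S, VCode M χ c) :
    ∃ s, VCode M χ s ∧ denR χ s = {x | ∃ c, c ∈ S ∧ x ∈ denR χ c} := by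
  have hbase : (ZFSet.sUnion (ZFSet.sUnion (ZFSet.sUnion S : ZFSet) : ZFSet) : ZFSet) ∈ M :=
    hM.union _ (hM.union _ (hM.union _ hS))
  by_cases hco : ∃ a, ZFSet.pair tg1 a ∈ S
  · -- some co-set code occurs
    obtain ⟨a₀, ha₀S⟩ := hco
    have ha₀M : a₀ ∈ M := (pair_mem_M hM (memM_of_mem hM hS ha₀S)).2
    set Q : ZFSet → Prop := fun x =>
      (∀ a, ZFSet.pair tg1 a ∈ S → x ∈ a) ∧ (∀ a, ZFSet.pair ∅ a ∈ S → x ∉ a) with hQ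
    have hQdef : DefinableOver M fun v : Fin 1 → ZFSet => Q (v 0) := by
      have h1 := defOver_all (M := M) (defOver_imp
        (dPairMemS hM (tg1_mem hM) hS (Fin.last 1))
        (defOver_mem (0 : Fin 1).castSucc (Fin.last 1)))
      have h2 := defOver_all (M := M) (defOver_imp
        (dPairMemS hM hM.empty_mem hS (Fin.last 1))
        (defOver_not (defOver_mem (0 : Fin 1).castSucc (Fin.last 1))))
      refine defOver_congr (defOver_and h1 h2) fun v hv => ?_
      simp only [Fin.snoc_last, Fin.snoc_castSucc, hQ]
      constructor
      · rintro ⟨c1, c2⟩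
        refine ⟨fun a ha => c1 a ?_ ha, fun a ha => c2 a ?_ ha⟩ <;>
          exact (pair_mem_M hM (memM_of_mem hM hS ha)).2
      · rintro ⟨c1, c2⟩
        exact ⟨fun a _ ha => c1 a ha, fun a _ ha => c2 a ha⟩
    set V := ZFSet.sep Q a₀ with hV
    have hVM : V ∈ M := sepM hM hQdef ha₀M
    obtain ⟨a₀', ha₀'M, ha₀'χ, hpat⟩ := hall _ ha₀S
    have ha₀χ : ∀ x ∈ a₀, χ x := by
      rcases hpat with hpat | hpat
      · exact absurd (ZFSet.pair_inj.1 hpat).1 tg1_ne_tg0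
      · obtain ⟨-, rfl⟩ := ZFSet.pair_inj.1 hpat
        exact ha₀'χ
    refine ⟨ZFSet.pair tg1 V, ⟨V, hVM, fun x hx => ha₀χ x (ZFSet.mem_sep.1 hx).1, Or.inr rfl⟩, ?_⟩
    rw [denR_co]
    ext x
    simp only [Set.mem_setOf_eq]
    constructor
    · rintro ⟨hχx, hxV⟩
      by_cases hxa₀ : x ∈ a₀
      · have hnQ : ¬ Q x := fun hQx => hxV (ZFSet.mem_sep.2 ⟨hxa₀, hQx⟩)
        rw [hQ, not_and_or] at hnQ
        rcases hnQ with h' | h'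
        · push_neg at h'
          obtain ⟨a, haS, hxa⟩ := h'
          exact ⟨ZFSet.pair tg1 a, haS, by rw [denR_co]; exact ⟨hχx, hxa⟩⟩
        · push_neg at h'
          obtain ⟨a, haS, hxa⟩ := h'
          exact ⟨ZFSet.pair ∅ a, haS, by rw [denR_set]; exact ⟨hχx, hxa⟩⟩
      · exact ⟨ZFSet.pair tg1 a₀, ha₀S, by rw [denR_co]; exact ⟨hχx, hxa₀⟩⟩
    · rintro ⟨c, hcS, hxc⟩
      refine ⟨(denR_subset c) hxc, fun hxV => ?_⟩
      have hQx := (ZFSet.mem_sep.1 hxV).2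
      obtain ⟨a, haM, haχ, (rfl | rfl)⟩ := hall _ hcS
      · rw [denR_set] at hxc
        exact hQx.2 a hcS hxc.2
      · rw [denR_co] at hxc
        exact hxc.2 (hQx.1 a hcS)
  · -- all codes are set codes
    set Q : ZFSet → Prop := fun x => ∃ a, ZFSet.pair ∅ a ∈ S ∧ x ∈ a with hQ
    have hQdef : DefinableOver M fun v : Fin 1 → ZFSet => Q (v 0) := by
      have h := defOver_ex (M := M) (defOver_and
        (dPairMemS hM hM.empty_mem hS (Fin.last 1))
        (defOver_mem (0 : Fin 1).castSucc (Fin.last 1)))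
      refine defOver_congr h fun v hv => ?_
      simp only [Fin.snoc_last, Fin.snoc_castSucc, hQ]
      constructor
      · rintro ⟨a, haM, h1, h2⟩; exact ⟨a, h1, h2⟩
      · rintro ⟨a, h1, h2⟩
        exact ⟨a, (pair_mem_M hM (memM_of_mem hM hS h1)).2, h1, h2⟩
    set U := ZFSet.sep Q (ZFSet.sUnion (ZFSet.sUnion (ZFSet.sUnion S : ZFSet) : ZFSet) : ZFSet) with hU
    have hUM : U ∈ M := sepM hM hQdef hbase
    have hUχ : ∀ x ∈ U, χ x := by
      intro x hx
      obtain ⟨a, haS, hxa⟩ := (ZFSet.mem_sep.1 hx).2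
      obtain ⟨a', ha'M, ha'χ, hpat⟩ := hall _ haS
      rcases hpat with hpat | hpat
      · obtain ⟨-, rfl⟩ := ZFSet.pair_inj.1 hpat
        exact ha'χ x hxa
      · exact absurd (ZFSet.pair_inj.1 hpat).1 tg0_ne_tg1
    refine ⟨ZFSet.pair ∅ U, ⟨U, hUM, hUχ, Or.inl rfl⟩, ?_⟩
    rw [denR_set]
    ext x
    simp only [Set.mem_setOf_eq]
    constructor
    · rintro ⟨hχx, hxU⟩
      obtain ⟨a, haS, hxa⟩ := (ZFSet.mem_sep.1 hxU).2
      exact ⟨ZFSet.pair ∅ a, haS, by rw [denR_set]; exact ⟨hχx, hxa⟩⟩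
    · rintro ⟨c, hcS, hxc⟩
      obtain ⟨a, haM, haχ, (rfl | rfl)⟩ := hall _ hcS
      · rw [denR_set] at hxc
        refine ⟨hxc.1, ZFSet.mem_sep.2 ⟨mem_sUnion3 hcS hxc.2, a, hcS, hxc.2⟩⟩
      · exact absurd ⟨a, hcS⟩ hco

end RelSup
/-! ### The three concrete classes and their properties -/

section Chis

theorem mem_cycle3 {x y z : ZFSet} (h1 : x ∈ y) (h2 : y ∈ z) (h3 : z ∈ x) : False := by
  have ht : Relation.TransGen (· ∈ ·) x x :=
    Relation.TransGen.tail (Relation.TransGen.tail (Relation.TransGen.single h1) h2) h3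
  exact (ZFSet.mem_wf.transGen).asymmetric _ _ ht ht

variable {M : ZFSet}

/-- The class of nonempty elements of `M`. -/
def chi0 (M : ZFSet) (x : ZFSet) : Prop := x ∈ M ∧ x ≠ ∅

/-- The class of elements of `M` containing `∅`. -/
def chiA (M : ZFSet) (x : ZFSet) : Prop := x ∈ M ∧ (∅ : ZFSet) ∈ x

/-- The class of nonempty elements of `M` not containing `∅`. -/
def chiB (M : ZFSet) (x : ZFSet) : Prop := x ∈ M ∧ x ≠ ∅ ∧ (∅ : ZFSet) ∉ x

theorem chi0_def (hM : IsCTM M) : DefinableOver M fun v : Fin 1 → ZFSet => chi0 M (v 0) := by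
  refine defOver_congr (defOver_not (defOver_eqEmpty hM 0)) fun v hv => ?_
  exact ⟨fun h => ⟨hv 0, h⟩, fun h => h.2⟩

theorem chiA_def (hM : IsCTM M) : DefinableOver M fun v : Fin 1 → ZFSet => chiA M (v 0) := by
  refine defOver_congr (defOver_memL 0 hM.empty_mem) fun v hv => ?_
  exact ⟨fun h => ⟨hv 0, h⟩, fun h => h.2⟩

theorem chiB_def (hM : IsCTM M) : DefinableOver M fun v : Fin 1 → ZFSet => chiB M (v 0) := by
  refine defOver_congr (defOver_and (defOver_not (defOver_eqEmpty hM 0))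
    (defOver_not (defOver_memL 0 hM.empty_mem))) fun v hv => ?_
  exact ⟨fun h => ⟨hv 0, h.1, h.2⟩, fun h => ⟨h.2.1, h.2.2⟩⟩

theorem singleton_ne_empty (s : ZFSet) : ({s} : ZFSet) ≠ ∅ := by
  intro h
  have : s ∈ ({s} : ZFSet) := ZFSet.mem_singleton.2 rfl
  rw [h] at this
  exact ZFSet.notMem_empty _ this

theorem chi0_prop (hM : IsCTM M) : ∀ s, s ∈ M → ∃ x, chi0 M x ∧ x ∉ s := by
  intro s hs
  refine ⟨{s}, ⟨singletonM hM hs, singleton_ne_empty s⟩, fun h => ?_⟩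
  exact ZFSet.mem_asymm h (ZFSet.mem_singleton.2 rfl)

theorem chiA_prop (hM : IsCTM M) : ∀ s, s ∈ M → ∃ x, chiA M x ∧ x ∉ s := by
  intro s hs
  refine ⟨{∅, {s}}, ⟨upairM hM hM.empty_mem (singletonM hM hs),
    ZFSet.mem_pair.2 (Or.inl rfl)⟩, fun h => ?_⟩
  exact mem_cycle3 (ZFSet.mem_singleton.2 rfl) (ZFSet.mem_pair.2 (Or.inr rfl)) h

theorem chiB_prop (hM : IsCTM M) : ∀ s, s ∈ M → ∃ x, chiB M x ∧ x ∉ s := by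
  intro s hs
  refine ⟨{{s}}, ⟨singletonM hM (singletonM hM hs), singleton_ne_empty _, fun h => ?_⟩,
    fun h => ?_⟩
  · exact singleton_ne_empty s (ZFSet.mem_singleton.1 h).symm
  · exact mem_cycle3 (ZFSet.mem_singleton.2 rfl) (ZFSet.mem_singleton.2 rfl) h

theorem chi0_iff (x : ZFSet) : chi0 M x ↔ chiA M x ∨ chiB M x := by
  unfold chi0 chiA chiB
  by_cases h : (∅ : ZFSet) ∈ x
  · constructor
    · rintro ⟨h1, h2⟩; exact Or.inl ⟨h1, h⟩
    · rintro (⟨h1, h2⟩ | ⟨h1, h2, h3⟩)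
      · refine ⟨h1, fun he => ?_⟩
        rw [he] at h2
        exact ZFSet.notMem_empty _ h2
      · exact ⟨h1, h2⟩
  · constructor
    · rintro ⟨h1, h2⟩; exact Or.inr ⟨h1, h2, h⟩
    · rintro (⟨h1, h2⟩ | ⟨h1, h2, h3⟩)
      · exact absurd h2 h
      · exact ⟨h1, h2⟩

theorem chiAB_disj (x : ZFSet) : ¬ (chiA M x ∧ chiB M x) := by
  rintro ⟨⟨-, h1⟩, ⟨-, -, h2⟩⟩
  exact h2 h1

theorem chiA_M : ∀ x, chiA M x → x ∈ M := fun x h => h.1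
theorem chiB_M : ∀ x, chiB M x → x ∈ M := fun x h => h.1
theorem chi0_M : ∀ x, chi0 M x → x ∈ M := fun x h => h.1

end Chis
/-! ### The forcing notion -/

section Forcing

variable {M : ZFSet}

theorem dEqPairCR (hM : IsCTM M) {c : ZFSet} (hc : c ∈ M) {k : ℕ} (i j : Fin k) :
    DefinableOver M fun v => v i = ZFSet.pair (v j) c := by
  have h := defOver_snocC hc (defOver_eqPair hM i.castSucc j.castSucc (Fin.last k))
  refine defOver_congr h fun v hv => ?_
  simp only [Fin.snoc_last, Fin.snoc_castSucc]

/-- The forcing: all of `M`, ordered trivially with top element `∅`. -/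
def theF (M : ZFSet) (hM : IsCTM M) : ClassForcing M (DefClasses M) where
  P := M.toSet
  le p q := p = q ∨ q = ∅
  P_subM := fun p hp => hp
  P_mem := by
    refine ⟨fun x hx => hx, defOver_congr (defOver_eq 0 0) fun v hv => ?_⟩
    exact ⟨fun _ => hv 0, fun _ => rfl⟩
  le_mem := by
    constructor
    · rintro x ⟨p, hp, q, hq, -, rfl⟩
      exact kpairM hM hp hq
    · have h := defOver_ex (M := M) (defOver_ex (M := M) (defOver_and
        (defOver_or
          (defOver_eq (Fin.castSucc (Fin.last 1)) (Fin.last 2))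
          (defOver_eqEmpty hM (Fin.last 2)))
        (defOver_eqPair hM ((0 : Fin 1).castSucc.castSucc)
          (Fin.castSucc (Fin.last 1)) (Fin.last 2))))
      refine defOver_congr h fun v hv => ?_
      simp only [Fin.snoc_last, Fin.snoc_castSucc, Set.mem_setOf_eq]
      exact Iff.rfl
  le_refl := fun p _ => Or.inl rfl
  le_trans := by
    intro p hp q hq r hr h1 h2
    rcases h2 with rfl | rfl
    · exact h1
    · exact Or.inr rfl
  one := ∅
  one_mem := hM.empty_mem
  le_one := fun p _ => Or.inr rfl

theorem theF_P (hM : IsCTM M) : (theF M hM).P = M.toSet := rfl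
theorem theF_le (hM : IsCTM M) (p q : ZFSet) :
    (theF M hM).le p q ↔ (p = q ∨ q = ∅) := Iff.rfl
theorem theF_one (hM : IsCTM M) : (theF M hM).one = ∅ := rfl

theorem notCompat_theF (hM : IsCTM M) {p q : ZFSet} (hp : p ∈ (theF M hM).P)
    (hq : q ∈ (theF M hM).P) (h : ¬ Compat (theF M hM) p q) :
    p ≠ q ∧ p ≠ ∅ ∧ q ≠ ∅ := by
  refine ⟨?_, ?_, ?_⟩
  · rintro rfl
    exact h ⟨p, hp, Or.inl rfl, Or.inl rfl⟩
  · rintro rfl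
    exact h ⟨q, hq, Or.inr rfl, Or.inl rfl⟩
  · rintro rfl
    exact h ⟨p, hp, Or.inl rfl, Or.inr rfl⟩

end Forcing
/-! ### The first Boolean completion -/

section B0

variable {M : ZFSet}

/-- The set/co-set algebra over the class of nonempty elements of `M`. -/
noncomputable def theB0 (M : ZFSet) (hM : IsCTM M) : MBoolAlg M (DefClasses M) where
  B := {b | VCode M (chi0 M) b}
  le b c := denR (chi0 M) b ⊆ denR (chi0 M) c
  bot := botR
  top := topR
  neg := negR
  inf := infR
  sup := supR
  B_subM := fun b hb => VCode_mem_M hM hb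
  B_mem := by
    refine ⟨fun b hb => VCode_mem_M hM hb, ?_⟩
    exact defOver_congr (dVCode hM (chi0_def hM) 0) fun v hv => Iff.rfl
  le_mem := by
    constructor
    · rintro x ⟨a, ha, b, hb, -, rfl⟩
      exact kpairM hM (VCode_mem_M hM ha) (VCode_mem_M hM hb)
    · have h := defOver_ex (M := M) (defOver_ex (M := M) (defOver_and
        (dVCode hM (chi0_def hM) (Fin.castSucc (Fin.last 1)))
        (defOver_and
          (dVCode hM (chi0_def hM) (Fin.last 2))
          (defOver_and
            (dLeCode hM (Fin.castSucc (Fin.last 1)) (Fin.last 2))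
            (defOver_eqPair hM ((0 : Fin 1).castSucc.castSucc)
              (Fin.castSucc (Fin.last 1)) (Fin.last 2))))))
      refine defOver_congr h fun v hv => ?_
      simp only [Fin.snoc_last, Fin.snoc_castSucc, Set.mem_setOf_eq]
      constructor
      · rintro ⟨a, haM, b, hbM, h1, h2, h3, h4⟩
        exact ⟨a, h1, b, h2, (leCode_iff hM (chi0_prop hM) h1 h2).2 h3, h4⟩
      · rintro ⟨a, h1, b, h2, h3, h4⟩
        exact ⟨a, VCode_mem_M hM h1, b, VCode_mem_M hM h2, h1, h2,
          (leCode_iff hM (chi0_prop hM) h1 h2).1 h3, h4⟩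
  neg_mem := by
    constructor
    · rintro x ⟨a, ha, rfl⟩
      exact kpairM hM (VCode_mem_M hM ha) (VCode_mem_M hM (VCode_neg ha))
    · have h := defOver_ex (M := M) (defOver_ex (M := M) (defOver_and
        (dVCode hM (chi0_def hM) (Fin.castSucc (Fin.last 1)))
        (defOver_and
          (dNegCode hM (Fin.castSucc (Fin.last 1)) (Fin.last 2))
          (defOver_eqPair hM ((0 : Fin 1).castSucc.castSucc)
            (Fin.castSucc (Fin.last 1)) (Fin.last 2)))))
      refine defOver_congr h fun v hv => ?_
      simp only [Fin.snoc_last, Fin.snoc_castSucc, Set.mem_setOf_eq]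
      constructor
      · rintro ⟨a, haM, r, hrM, h1, h2, h3⟩
        rw [(negCode_iff h1).2 h2] at h3
        exact ⟨a, h1, h3⟩
      · rintro ⟨a, h1, h3⟩
        exact ⟨a, VCode_mem_M hM h1, negR a, VCode_mem_M hM (VCode_neg h1), h1,
          (negCode_iff h1).1 rfl, h3⟩
  inf_mem := by
    constructor
    · rintro x ⟨a, ha, b, hb, rfl⟩
      exact kpairM hM (kpairM hM (VCode_mem_M hM ha) (VCode_mem_M hM hb))
        (VCode_mem_M hM (VCode_inf hM ha hb))
    · have h := defOver_ex (M := M) (defOver_ex (M := M) (defOver_ex (M := M)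
        (defOver_ex (M := M) (defOver_and
        (dVCode hM (chi0_def hM) (Fin.castSucc (Fin.castSucc (Fin.castSucc (Fin.last 1)))))
        (defOver_and
          (dVCode hM (chi0_def hM) (Fin.castSucc (Fin.castSucc (Fin.last 2))))
          (defOver_and
            (dInfCode hM (Fin.castSucc (Fin.castSucc (Fin.castSucc (Fin.last 1))))
              (Fin.castSucc (Fin.castSucc (Fin.last 2))) (Fin.castSucc (Fin.last 3)))
            (defOver_and
              (defOver_eqPair hM (Fin.last 4)
                (Fin.castSucc (Fin.castSucc (Fin.castSucc (Fin.last 1))))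
                (Fin.castSucc (Fin.castSucc (Fin.last 2))))
              (defOver_eqPair hM ((0 : Fin 1).castSucc.castSucc.castSucc.castSucc)
                (Fin.last 4) (Fin.castSucc (Fin.last 3))))))))))
      refine defOver_congr h fun v hv => ?_
      simp only [Fin.snoc_last, Fin.snoc_castSucc, Set.mem_setOf_eq]
      constructor
      · rintro ⟨a, haM, b, hbM, r, hrM, p, hpM, h1, h2, h3, h4, h5⟩
        rw [(infCode_iff h1 h2).2 h3, h4] at h5
        exact ⟨a, h1, b, h2, h5⟩
      · rintro ⟨a, h1, b, h2, h5⟩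
        exact ⟨a, VCode_mem_M hM h1, b, VCode_mem_M hM h2, infR a b,
          VCode_mem_M hM (VCode_inf hM h1 h2), ZFSet.pair a b,
          kpairM hM (VCode_mem_M hM h1) (VCode_mem_M hM h2), h1, h2,
          (infCode_iff h1 h2).1 rfl, rfl, h5⟩
  sup_mem := by
    constructor
    · rintro x ⟨a, ha, b, hb, rfl⟩
      exact kpairM hM (kpairM hM (VCode_mem_M hM ha) (VCode_mem_M hM hb))
        (VCode_mem_M hM (VCode_sup hM ha hb))
    · have h := defOver_ex (M := M) (defOver_ex (M := M) (defOver_ex (M := M)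
        (defOver_ex (M := M) (defOver_and
        (dVCode hM (chi0_def hM) (Fin.castSucc (Fin.castSucc (Fin.castSucc (Fin.last 1)))))
        (defOver_and
          (dVCode hM (chi0_def hM) (Fin.castSucc (Fin.castSucc (Fin.last 2))))
          (defOver_and
            (dSupCode hM (Fin.castSucc (Fin.castSucc (Fin.castSucc (Fin.last 1))))
              (Fin.castSucc (Fin.castSucc (Fin.last 2))) (Fin.castSucc (Fin.last 3)))
            (defOver_and
              (defOver_eqPair hM (Fin.last 4)
                (Fin.castSucc (Fin.castSucc (Fin.castSucc (Fin.last 1))))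
                (Fin.castSucc (Fin.castSucc (Fin.last 2))))
              (defOver_eqPair hM ((0 : Fin 1).castSucc.castSucc.castSucc.castSucc)
                (Fin.last 4) (Fin.castSucc (Fin.last 3))))))))))
      refine defOver_congr h fun v hv => ?_
      simp only [Fin.snoc_last, Fin.snoc_castSucc, Set.mem_setOf_eq]
      constructor
      · rintro ⟨a, haM, b, hbM, r, hrM, p, hpM, h1, h2, h3, h4, h5⟩
        rw [(supCode_iff h1 h2).2 h3, h4] at h5
        exact ⟨a, h1, b, h2, h5⟩
      · rintro ⟨a, h1, b, h2, h5⟩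
        exact ⟨a, VCode_mem_M hM h1, b, VCode_mem_M hM h2, supR a b,
          VCode_mem_M hM (VCode_sup hM h1 h2), ZFSet.pair a b,
          kpairM hM (VCode_mem_M hM h1) (VCode_mem_M hM h2), h1, h2,
          (supCode_iff h1 h2).1 rfl, rfl, h5⟩
  bot_mem := VCode_bot hM
  top_mem := VCode_top hM
  neg_cl := fun a ha => VCode_neg ha
  inf_cl := fun a ha b hb => VCode_inf hM ha hb
  sup_cl := fun a ha b hb => VCode_sup hM ha hb
  le_refl := fun a _ => subset_rfl
  le_trans := fun a _ b _ c _ h1 h2 => h1.trans h2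
  le_antisymm := fun a ha b hb h1 h2 =>
    denR_inj hM (chi0_prop hM) ha hb (Set.Subset.antisymm h1 h2)
  bot_le := fun a _ => by
    show denR (chi0 M) botR ⊆ denR (chi0 M) a
    rw [denR_bot]; exact Set.empty_subset _
  le_top := fun a ha => by
    show denR (chi0 M) a ⊆ denR (chi0 M) topR
    rw [denR_top]; exact denR_subset a
  inf_le_left := fun a ha b hb => by
    show denR (chi0 M) (infR a b) ⊆ denR (chi0 M) a
    rw [denR_inf ha hb]; exact Set.inter_subset_left
  inf_le_right := fun a ha b hb => by
    show denR (chi0 M) (infR a b) ⊆ denR (chi0 M) b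
    rw [denR_inf ha hb]; exact Set.inter_subset_right
  le_inf := fun a ha b hb c hc h1 h2 => by
    show denR (chi0 M) c ⊆ denR (chi0 M) (infR a b)
    rw [denR_inf ha hb]; exact Set.subset_inter h1 h2
  le_sup_left := fun a ha b hb => by
    show denR (chi0 M) a ⊆ denR (chi0 M) (supR a b)
    rw [denR_sup ha hb]; exact Set.subset_union_left
  le_sup_right := fun a ha b hb => by
    show denR (chi0 M) b ⊆ denR (chi0 M) (supR a b)
    rw [denR_sup ha hb]; exact Set.subset_union_right
  sup_le := fun a ha b hb c hc h1 h2 => by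
    show denR (chi0 M) (supR a b) ⊆ denR (chi0 M) c
    rw [denR_sup ha hb]; exact Set.union_subset h1 h2
  inf_neg := fun a ha => by
    apply denR_inj hM (chi0_prop hM) (VCode_inf hM ha (VCode_neg ha)) (VCode_bot hM)
    rw [denR_inf ha (VCode_neg ha), denR_neg ha, denR_bot]
    ext x
    simp only [Set.mem_inter_iff, Set.mem_diff, Set.mem_empty_iff_false, iff_false]
    tauto
  sup_neg := fun a ha => by
    apply denR_inj hM (chi0_prop hM) (VCode_sup hM ha (VCode_neg ha)) (VCode_top hM)
    rw [denR_sup ha (VCode_neg ha), denR_neg ha, denR_top]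
    ext x
    simp only [Set.mem_union, Set.mem_diff, Set.mem_setOf_eq]
    constructor
    · rintro (h | h)
      · exact (denR_subset a) h
      · exact h.1
    · intro h
      by_cases hx : x ∈ denR (chi0 M) a
      · exact Or.inl hx
      · exact Or.inr ⟨h, hx⟩
  distrib := fun a ha b hb c hc => by
    have hbc := VCode_sup hM hb hc
    have hab := VCode_inf hM ha hb
    have hac := VCode_inf hM ha hc
    apply denR_inj hM (chi0_prop hM) (VCode_inf hM ha hbc) (VCode_sup hM hab hac)
    rw [denR_inf ha hbc, denR_sup hb hc, denR_sup hab hac, denR_inf ha hb, denR_inf ha hc]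
    ext x
    simp only [Set.mem_inter_iff, Set.mem_union]
    tauto

/-- The first dense embedding. -/
noncomputable def pi0 : ZFSet → ZFSet := fun p =>
  if p = ∅ then topR else ZFSet.pair ∅ {p}

theorem pi0_empty : pi0 ∅ = topR := if_pos rfl
theorem pi0_ne {p : ZFSet} (hp : p ≠ ∅) : pi0 p = ZFSet.pair ∅ {p} := if_neg hp

end B0
/-! ### `(B0, π0)` is a Boolean completion of `F` -/

section Comp0

variable {M : ZFSet}

theorem topR_mem_M (hM : IsCTM M) : topR ∈ M := kpairM hM (tg1_mem hM) hM.empty_mem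
theorem botR_mem_M (hM : IsCTM M) : botR ∈ M := kpairM hM hM.empty_mem hM.empty_mem

theorem topR_ne_botR : topR ≠ botR := fun h => tg1_ne_tg0 (ZFSet.pair_inj.1 h).1

theorem pi0_mem_M (hM : IsCTM M) {p : ZFSet} (hp : p ∈ M) : pi0 p ∈ M := by
  by_cases h : p = ∅
  · rw [h, pi0_empty]; exact topR_mem_M hM
  · rw [pi0_ne h]; exact kpairM hM hM.empty_mem (singletonM hM hp)

theorem comp0 (M : ZFSet) (hM : IsCTM M) :
    BoolCompletion (theF M hM) (theB0 M hM) pi0 := by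
  constructor
  · -- complete
    intro A hAM hAB
    obtain ⟨s, hsV, hden⟩ := relSup hM (chi0_def hM) hAM (fun c hc => hAB c hc)
    refine ⟨s, hsV, fun a haA => ?_, fun b hbB hub => ?_⟩
    · show denR (chi0 M) a ⊆ denR (chi0 M) s
      rw [hden]
      exact fun x hx => ⟨a, haA, hx⟩
    · show denR (chi0 M) s ⊆ denR (chi0 M) b
      rw [hden]
      rintro x ⟨c, hcA, hxc⟩
      exact hub c hcA hxc
  · -- graph_mem
    constructor
    · rintro x ⟨p, hp, rfl⟩
      exact kpairM hM hp (pi0_mem_M hM hp)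
    · have h := defOver_ex (M := M) (defOver_or
        (defOver_and
          (defOver_eqEmpty hM (Fin.last 1))
          (dEqPairCR hM (topR_mem_M hM) ((0 : Fin 1).castSucc) (Fin.last 1)))
        (defOver_and
          (defOver_not (defOver_eqEmpty hM (Fin.last 1)))
          (defOver_ex (defOver_and
            (defOver_eqSingleton hM (Fin.last 2) (Fin.castSucc (Fin.last 1)))
            (defOver_ex (defOver_and
              (dEqPairC hM hM.empty_mem (Fin.last 3) (Fin.castSucc (Fin.last 2)))
              (defOver_eqPair hM ((0 : Fin 1).castSucc.castSucc.castSucc)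
                (Fin.castSucc (Fin.castSucc (Fin.last 1))) (Fin.last 3))))))))
      refine defOver_congr h fun v hv => ?_
      simp only [Fin.snoc_last, Fin.snoc_castSucc, Set.mem_setOf_eq]
      constructor
      · rintro ⟨p, hpM, (⟨hpe, h2⟩ | ⟨hne, s, hsM, hs, r, hrM, hr, h5⟩)⟩
        · refine ⟨p, hpM, ?_⟩
          rw [hpe, pi0_empty] at *
          exact h2
        · refine ⟨p, hpM, ?_⟩
          rw [pi0_ne hne, ← hs, ← hr]
          exact h5
      · rintro ⟨p, hp, h2⟩
        by_cases hne : p = ∅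
        · subst hne
          rw [pi0_empty] at h2
          exact ⟨∅, hp, Or.inl ⟨rfl, h2⟩⟩
        · rw [pi0_ne hne] at h2
          exact ⟨p, hp, Or.inr ⟨hne, {p}, singletonM hM hp, rfl,
            ZFSet.pair ∅ {p}, kpairM hM hM.empty_mem (singletonM hM hp), rfl, h2⟩⟩
  · -- maps
    intro p hp
    by_cases hne : p = ∅
    · subst hne
      rw [pi0_empty]
      exact ⟨VCode_top hM, topR_ne_botR⟩
    · rw [pi0_ne hne]
      refine ⟨VCode_atom hM (chi0_M) ⟨hp, hne⟩, fun h => ?_⟩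
      exact singleton_ne_empty p (ZFSet.pair_inj.1 h).2
  · -- inj
    intro p hp q hq h
    by_cases hpe : p = ∅ <;> by_cases hqe : q = ∅
    · rw [hpe, hqe]
    · rw [hpe, pi0_empty, pi0_ne hqe] at h
      exact absurd (ZFSet.pair_inj.1 h).1 tg1_ne_tg0
    · rw [hqe, pi0_empty, pi0_ne hpe] at h
      exact absurd (ZFSet.pair_inj.1 h).1 tg0_ne_tg1
    · rw [pi0_ne hpe, pi0_ne hqe] at h
      have := (ZFSet.pair_inj.1 h).2
      have : p ∈ ({q} : ZFSet) := this ▸ ZFSet.mem_singleton.2 rfl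
      exact ZFSet.mem_singleton.1 this
  · -- mono
    rintro p hp q hq (rfl | rfl)
    · exact subset_rfl
    · show denR (chi0 M) (pi0 p) ⊆ denR (chi0 M) (pi0 ∅)
      rw [pi0_empty, denR_top]
      exact denR_subset _
  · -- incompat
    intro p hp q hq h
    obtain ⟨hpq, hpe, hqe⟩ := notCompat_theF hM hp hq h
    show infR (pi0 p) (pi0 q) = botR
    rw [pi0_ne hpe, pi0_ne hqe, infR_ss]
    have : ({p} : ZFSet) ∩ ({q} : ZFSet) = ∅ := by
      apply ZFSet.ext
      intro x
      simp only [ZFSet.mem_inter, ZFSet.mem_singleton]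
      constructor
      · rintro ⟨rfl, rfl⟩
        exact absurd rfl hpq
      · intro hx
        exact absurd hx (ZFSet.notMem_empty x)
    rw [this, botR]
  · -- dense
    intro b hb hbne
    obtain ⟨x, hx⟩ := denR_dense (chi0_prop hM) hb hbne
    have hx0 : chi0 M x := denR_subset b hx
    refine ⟨x, hx0.1, ?_⟩
    show denR (chi0 M) (pi0 x) ⊆ denR (chi0 M) b
    rw [pi0_ne hx0.2, denR_atom hx0]
    intro y hy
    rw [Set.mem_singleton_iff] at hy
    rwa [hy]

end Comp0
/-! ### The second Boolean completion: the product algebra -/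

section B1a

variable {M : ZFSet} {χ : ZFSet → Prop}

theorem infR_negR (hM : IsCTM M) (hprop : ∀ s, s ∈ M → ∃ x, χ x ∧ x ∉ s)
    {b : ZFSet} (hb : VCode M χ b) : infR b (negR b) = botR := by
  apply denR_inj hM hprop (VCode_inf hM hb (VCode_neg hb)) (VCode_bot hM)
  rw [denR_inf hb (VCode_neg hb), denR_neg hb, denR_bot]
  ext x
  simp only [Set.mem_inter_iff, Set.mem_diff, Set.mem_empty_iff_false, iff_false]
  tauto

theorem supR_negR (hM : IsCTM M) (hprop : ∀ s, s ∈ M → ∃ x, χ x ∧ x ∉ s)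
    {b : ZFSet} (hb : VCode M χ b) : supR b (negR b) = topR := by
  apply denR_inj hM hprop (VCode_sup hM hb (VCode_neg hb)) (VCode_top hM)
  rw [denR_sup hb (VCode_neg hb), denR_neg hb, denR_top]
  ext x
  simp only [Set.mem_union, Set.mem_diff, Set.mem_setOf_eq]
  constructor
  · rintro (h | h)
    · exact (denR_subset b) h
    · exact h.1
  · intro h
    by_cases hx : x ∈ denR χ b
    · exact Or.inl hx
    · exact Or.inr ⟨h, hx⟩

theorem distribR (hM : IsCTM M) (hprop : ∀ s, s ∈ M → ∃ x, χ x ∧ x ∉ s)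
    {a b c : ZFSet} (ha : VCode M χ a) (hb : VCode M χ b) (hc : VCode M χ c) :
    infR a (supR b c) = supR (infR a b) (infR a c) := by
  apply denR_inj hM hprop (VCode_inf hM ha (VCode_sup hM hb hc))
    (VCode_sup hM (VCode_inf hM ha hb) (VCode_inf hM ha hc))
  rw [denR_inf ha (VCode_sup hM hb hc), denR_sup hb hc,
    denR_sup (VCode_inf hM ha hb) (VCode_inf hM ha hc), denR_inf ha hb, denR_inf ha hc]
  ext x
  simp only [Set.mem_inter_iff, Set.mem_union]
  tauto

/-- Denotation for the product algebra. -/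
noncomputable def den1 (M : ZFSet) (b : ZFSet) : Set ZFSet :=
  denR (chiA M) (unpair b).1 ∪ denR (chiB M) (unpair b).2

/-- Valid codes of the product algebra. -/
def VCode2 (M : ZFSet) (b : ZFSet) : Prop :=
  ∃ c d, VCode M (chiA M) c ∧ VCode M (chiB M) d ∧ b = ZFSet.pair c d

noncomputable def neg1 (b : ZFSet) : ZFSet :=
  ZFSet.pair (negR (unpair b).1) (negR (unpair b).2)

noncomputable def inf1 (b c : ZFSet) : ZFSet :=
  ZFSet.pair (infR (unpair b).1 (unpair c).1) (infR (unpair b).2 (unpair c).2)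

noncomputable def sup1 (b c : ZFSet) : ZFSet :=
  ZFSet.pair (supR (unpair b).1 (unpair c).1) (supR (unpair b).2 (unpair c).2)

def bot1 : ZFSet := ZFSet.pair botR botR
def top1 : ZFSet := ZFSet.pair topR topR

theorem den1_pair (c d : ZFSet) :
    den1 M (ZFSet.pair c d) = denR (chiA M) c ∪ denR (chiB M) d := by
  rw [den1, unpair_pair]

theorem neg1_pair (c d : ZFSet) :
    neg1 (ZFSet.pair c d) = ZFSet.pair (negR c) (negR d) := by
  rw [neg1, unpair_pair]

theorem inf1_pair (c d c' d' : ZFSet) :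
    inf1 (ZFSet.pair c d) (ZFSet.pair c' d') = ZFSet.pair (infR c c') (infR d d') := by
  rw [inf1, unpair_pair, unpair_pair]

theorem sup1_pair (c d c' d' : ZFSet) :
    sup1 (ZFSet.pair c d) (ZFSet.pair c' d') = ZFSet.pair (supR c c') (supR d d') := by
  rw [sup1, unpair_pair, unpair_pair]

theorem den1_bot : den1 M bot1 = ∅ := by
  rw [bot1, den1_pair, denR_bot, denR_bot, Set.union_empty]

theorem den1_top : den1 M top1 = {x | chiA M x} ∪ {x | chiB M x} := by
  rw [top1, den1_pair, denR_top, denR_top]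

theorem den1_subset (b : ZFSet) : den1 M b ⊆ {x | chiA M x} ∪ {x | chiB M x} := by
  rintro x (hx | hx)
  · exact Or.inl (denR_subset _ hx)
  · exact Or.inr (denR_subset _ hx)

theorem le1_iff {c d c' d' : ZFSet} :
    den1 M (ZFSet.pair c d) ⊆ den1 M (ZFSet.pair c' d') ↔
      (denR (chiA M) c ⊆ denR (chiA M) c' ∧ denR (chiB M) d ⊆ denR (chiB M) d') := by
  rw [den1_pair, den1_pair]
  constructor
  · intro h
    constructor
    · intro x hx
      rcases h (Or.inl hx) with h' | h'
      · exact h'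
      · exact absurd ⟨denR_subset _ hx, denR_subset _ h'⟩ (chiAB_disj x)
    · intro x hx
      rcases h (Or.inr hx) with h' | h'
      · exact absurd ⟨denR_subset _ h', denR_subset _ hx⟩ (chiAB_disj x)
      · exact h'
  · rintro ⟨h1, h2⟩
    exact Set.union_subset_union h1 h2

theorem den1_inj (hM : IsCTM M) {b b' : ZFSet} (hb : VCode2 M b) (hb' : VCode2 M b')
    (h : den1 M b = den1 M b') : b = b' := by
  obtain ⟨c, d, hc, hd, rfl⟩ := hb
  obtain ⟨c', d', hc', hd', rfl⟩ := hb'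
  have h1 := (le1_iff (M := M)).1 h.le
  have h2 := (le1_iff (M := M)).1 h.ge
  rw [denR_inj hM (chiA_prop hM) hc hc' (Set.Subset.antisymm h1.1 h2.1),
    denR_inj hM (chiB_prop hM) hd hd' (Set.Subset.antisymm h1.2 h2.2)]

theorem VCode2_bot (hM : IsCTM M) : VCode2 M bot1 :=
  ⟨botR, botR, VCode_bot hM, VCode_bot hM, rfl⟩

theorem VCode2_top (hM : IsCTM M) : VCode2 M top1 :=
  ⟨topR, topR, VCode_top hM, VCode_top hM, rfl⟩

theorem VCode2_neg (hM : IsCTM M) {b : ZFSet} (hb : VCode2 M b) : VCode2 M (neg1 b) := by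
  obtain ⟨c, d, hc, hd, rfl⟩ := hb
  rw [neg1_pair]
  exact ⟨_, _, VCode_neg hc, VCode_neg hd, rfl⟩

theorem VCode2_inf (hM : IsCTM M) {b b' : ZFSet} (hb : VCode2 M b) (hb' : VCode2 M b') :
    VCode2 M (inf1 b b') := by
  obtain ⟨c, d, hc, hd, rfl⟩ := hb
  obtain ⟨c', d', hc', hd', rfl⟩ := hb'
  rw [inf1_pair]
  exact ⟨_, _, VCode_inf hM hc hc', VCode_inf hM hd hd', rfl⟩

theorem VCode2_sup (hM : IsCTM M) {b b' : ZFSet} (hb : VCode2 M b) (hb' : VCode2 M b') :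
    VCode2 M (sup1 b b') := by
  obtain ⟨c, d, hc, hd, rfl⟩ := hb
  obtain ⟨c', d', hc', hd', rfl⟩ := hb'
  rw [sup1_pair]
  exact ⟨_, _, VCode_sup hM hc hc', VCode_sup hM hd hd', rfl⟩

theorem VCode2_mem_M (hM : IsCTM M) {b : ZFSet} (hb : VCode2 M b) : b ∈ M := by
  obtain ⟨c, d, hc, hd, rfl⟩ := hb
  exact kpairM hM (VCode_mem_M hM hc) (VCode_mem_M hM hd)

theorem den1_inf {b b' : ZFSet} (hb : VCode2 M b) (hb' : VCode2 M b') :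
    den1 M (inf1 b b') = den1 M b ∩ den1 M b' := by
  obtain ⟨c, d, hc, hd, rfl⟩ := hb
  obtain ⟨c', d', hc', hd', rfl⟩ := hb'
  rw [inf1_pair, den1_pair, den1_pair, den1_pair, denR_inf hc hc', denR_inf hd hd']
  ext x
  simp only [Set.mem_union, Set.mem_inter_iff]
  constructor
  · rintro (⟨h1, h2⟩ | ⟨h1, h2⟩)
    · exact ⟨Or.inl h1, Or.inl h2⟩
    · exact ⟨Or.inr h1, Or.inr h2⟩
  · rintro ⟨h1 | h1, h2 | h2⟩
    · exact Or.inl ⟨h1, h2⟩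
    · exact absurd ⟨denR_subset _ h1, denR_subset _ h2⟩ (chiAB_disj x)
    · exact absurd ⟨denR_subset _ h2, denR_subset _ h1⟩ (chiAB_disj x)
    · exact Or.inr ⟨h1, h2⟩

theorem den1_sup {b b' : ZFSet} (hb : VCode2 M b) (hb' : VCode2 M b') :
    den1 M (sup1 b b') = den1 M b ∪ den1 M b' := by
  obtain ⟨c, d, hc, hd, rfl⟩ := hb
  obtain ⟨c', d', hc', hd', rfl⟩ := hb'
  rw [sup1_pair, den1_pair, den1_pair, den1_pair, denR_sup hc hc', denR_sup hd hd']
  ext x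
  simp only [Set.mem_union]
  tauto

end B1a
/-! ### The product algebra as an `MBoolAlg` -/

section B1b

variable {M : ZFSet}

theorem dVCode2 (hM : IsCTM M) {k : ℕ} (i : Fin k) :
    DefinableOver M fun v => VCode2 M (v i) := by
  have h := defOver_ex (M := M) (defOver_ex (M := M) (defOver_and
    (dVCode hM (chiA_def hM) (Fin.castSucc (Fin.last k)))
    (defOver_and
      (dVCode hM (chiB_def hM) (Fin.last (k + 1)))
      (defOver_eqPair hM i.castSucc.castSucc (Fin.castSucc (Fin.last k)) (Fin.last (k + 1))))))
  refine defOver_congr h fun v hv => ?_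
  simp only [Fin.snoc_last, Fin.snoc_castSucc]
  constructor
  · rintro ⟨c, hcM, d, hdM, h1, h2, h3⟩
    exact ⟨c, d, h1, h2, h3⟩
  · rintro ⟨c, d, h1, h2, h3⟩
    exact ⟨c, VCode_mem_M hM h1, d, VCode_mem_M hM h2, h1, h2, h3⟩

/-- The product of the set/co-set algebras over `chiA` and `chiB`. -/
noncomputable def theB1 (M : ZFSet) (hM : IsCTM M) : MBoolAlg M (DefClasses M) where
  B := {b | VCode2 M b}
  le b c := den1 M b ⊆ den1 M c
  bot := bot1
  top := top1
  neg := neg1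
  inf := inf1
  sup := sup1
  B_subM := fun b hb => VCode2_mem_M hM hb
  B_mem := by
    refine ⟨fun b hb => VCode2_mem_M hM hb, ?_⟩
    exact defOver_congr (dVCode2 hM 0) fun v hv => Iff.rfl
  le_mem := by
    constructor
    · rintro x ⟨a, ha, b, hb, -, rfl⟩
      exact kpairM hM (VCode2_mem_M hM ha) (VCode2_mem_M hM hb)
    · have h := (defOver_ex (M := M) (defOver_ex (M := M) (defOver_ex (M := M) (defOver_ex (M := M) (defOver_ex (M := M) (defOver_ex (M := M) (defOver_and (dVCode hM (chiA_def hM) ((Fin.last 1).castSucc.castSucc.castSucc.castSucc.castSucc))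
      (defOver_and (dVCode hM (chiB_def hM) ((Fin.last 2).castSucc.castSucc.castSucc.castSucc))
      (defOver_and (dVCode hM (chiA_def hM) ((Fin.last 3).castSucc.castSucc.castSucc))
      (defOver_and (dVCode hM (chiB_def hM) ((Fin.last 4).castSucc.castSucc))
      (defOver_and (dLeCode hM ((Fin.last 1).castSucc.castSucc.castSucc.castSucc.castSucc) ((Fin.last 3).castSucc.castSucc.castSucc))
      (defOver_and (dLeCode hM ((Fin.last 2).castSucc.castSucc.castSucc.castSucc) ((Fin.last 4).castSucc.castSucc))
      (defOver_and (defOver_eqPair hM ((Fin.last 5).castSucc) ((Fin.last 1).castSucc.castSucc.castSucc.castSucc.castSucc) ((Fin.last 2).castSucc.castSucc.castSucc.castSucc))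
      (defOver_and (defOver_eqPair hM ((Fin.last 6)) ((Fin.last 3).castSucc.castSucc.castSucc) ((Fin.last 4).castSucc.castSucc))
      (defOver_eqPair hM ((0 : Fin 1).castSucc.castSucc.castSucc.castSucc.castSucc.castSucc) ((Fin.last 5).castSucc) ((Fin.last 6)))))))))))))))))
      refine defOver_congr h fun v hv => ?_
      simp only [Fin.snoc_last, Fin.snoc_castSucc, Set.mem_setOf_eq]
      constructor
      · rintro ⟨c, hcM, d, hdM, cp, hcpM, dp, hdpM, bb, hbbM, bp, hbpM,
          hAc, hBd, hAcp, hBdp, hle1, hle2, hb, hbp, hx⟩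
        refine ⟨bb, ⟨c, d, hAc, hBd, hb⟩, bp, ⟨cp, dp, hAcp, hBdp, hbp⟩, ?_, hx⟩
        show den1 M bb ⊆ den1 M bp
        rw [hb, hbp]
        exact le1_iff.2 ⟨(leCode_iff hM (chiA_prop hM) hAc hAcp).2 hle1,
          (leCode_iff hM (chiB_prop hM) hBd hBdp).2 hle2⟩
      · rintro ⟨bb, ⟨c, d, hAc, hBd, rfl⟩, bp, ⟨cp, dp, hAcp, hBdp, rfl⟩, hle, hx⟩
        have h12 := le1_iff.1 hle
        exact ⟨c, VCode_mem_M hM hAc, d, VCode_mem_M hM hBd, cp, VCode_mem_M hM hAcp,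
          dp, VCode_mem_M hM hBdp, ZFSet.pair c d,
          kpairM hM (VCode_mem_M hM hAc) (VCode_mem_M hM hBd), ZFSet.pair cp dp,
          kpairM hM (VCode_mem_M hM hAcp) (VCode_mem_M hM hBdp),
          hAc, hBd, hAcp, hBdp,
          (leCode_iff hM (chiA_prop hM) hAc hAcp).1 h12.1,
          (leCode_iff hM (chiB_prop hM) hBd hBdp).1 h12.2, rfl, rfl, hx⟩
  neg_mem := by
    constructor
    · rintro x ⟨a, ha, rfl⟩
      exact kpairM hM (VCode2_mem_M hM ha) (VCode2_mem_M hM (VCode2_neg hM ha))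
    · have h := (defOver_ex (M := M) (defOver_ex (M := M) (defOver_ex (M := M) (defOver_ex (M := M) (defOver_ex (M := M) (defOver_ex (M := M) (defOver_and (dVCode hM (chiA_def hM) ((Fin.last 1).castSucc.castSucc.castSucc.castSucc.castSucc))
      (defOver_and (dVCode hM (chiB_def hM) ((Fin.last 2).castSucc.castSucc.castSucc.castSucc))
      (defOver_and (dNegCode hM ((Fin.last 1).castSucc.castSucc.castSucc.castSucc.castSucc) ((Fin.last 3).castSucc.castSucc.castSucc))
      (defOver_and (dNegCode hM ((Fin.last 2).castSucc.castSucc.castSucc.castSucc) ((Fin.last 4).castSucc.castSucc))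
      (defOver_and (defOver_eqPair hM ((Fin.last 5).castSucc) ((Fin.last 1).castSucc.castSucc.castSucc.castSucc.castSucc) ((Fin.last 2).castSucc.castSucc.castSucc.castSucc))
      (defOver_and (defOver_eqPair hM ((Fin.last 6)) ((Fin.last 3).castSucc.castSucc.castSucc) ((Fin.last 4).castSucc.castSucc))
      (defOver_eqPair hM ((0 : Fin 1).castSucc.castSucc.castSucc.castSucc.castSucc.castSucc) ((Fin.last 5).castSucc) ((Fin.last 6)))))))))))))))
      refine defOver_congr h fun v hv => ?_
      simp only [Fin.snoc_last, Fin.snoc_castSucc, Set.mem_setOf_eq]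
      constructor
      · rintro ⟨c, hcM, d, hdM, r1, hr1M, r2, hr2M, aa, haaM, r, hrM,
          hAc, hBd, hn1, hn2, ha, hr, hx⟩
        refine ⟨aa, ⟨c, d, hAc, hBd, ha⟩, ?_⟩
        rw [hx, hr, (negCode_iff hAc).2 hn1, (negCode_iff hBd).2 hn2, ha, neg1_pair]
      · rintro ⟨aa, ⟨c, d, hAc, hBd, rfl⟩, hx⟩
        rw [neg1_pair] at hx
        exact ⟨c, VCode_mem_M hM hAc, d, VCode_mem_M hM hBd,
          negR c, VCode_mem_M hM (VCode_neg hAc), negR d, VCode_mem_M hM (VCode_neg hBd),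
          ZFSet.pair c d, kpairM hM (VCode_mem_M hM hAc) (VCode_mem_M hM hBd),
          ZFSet.pair (negR c) (negR d),
          kpairM hM (VCode_mem_M hM (VCode_neg hAc)) (VCode_mem_M hM (VCode_neg hBd)),
          hAc, hBd, (negCode_iff hAc).1 rfl, (negCode_iff hBd).1 rfl, rfl, rfl, hx⟩
  inf_mem := by
    constructor
    · rintro x ⟨a, ha, b, hb, rfl⟩
      exact kpairM hM (kpairM hM (VCode2_mem_M hM ha) (VCode2_mem_M hM hb))
        (VCode2_mem_M hM (VCode2_inf hM ha hb))
    · have h := (defOver_ex (M := M) (defOver_ex (M := M) (defOver_ex (M := M) (defOver_ex (M := M) (defOver_ex (M := M) (defOver_ex (M := M) (defOver_ex (M := M) (defOver_ex (M := M) (defOver_ex (M := M) (defOver_ex (M := M) (defOver_and (dVCode hM (chiA_def hM) ((Fin.last 1).castSucc.castSucc.castSucc.castSucc.castSucc.castSucc.castSucc.castSucc.castSucc))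
      (defOver_and (dVCode hM (chiB_def hM) ((Fin.last 2).castSucc.castSucc.castSucc.castSucc.castSucc.castSucc.castSucc.castSucc))
      (defOver_and (dVCode hM (chiA_def hM) ((Fin.last 3).castSucc.castSucc.castSucc.castSucc.castSucc.castSucc.castSucc))
      (defOver_and (dVCode hM (chiB_def hM) ((Fin.last 4).castSucc.castSucc.castSucc.castSucc.castSucc.castSucc))
      (defOver_and (dInfCode hM ((Fin.last 1).castSucc.castSucc.castSucc.castSucc.castSucc.castSucc.castSucc.castSucc.castSucc) ((Fin.last 3).castSucc.castSucc.castSucc.castSucc.castSucc.castSucc.castSucc) ((Fin.last 7).castSucc.castSucc.castSucc))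
      (defOver_and (dInfCode hM ((Fin.last 2).castSucc.castSucc.castSucc.castSucc.castSucc.castSucc.castSucc.castSucc) ((Fin.last 4).castSucc.castSucc.castSucc.castSucc.castSucc.castSucc) ((Fin.last 8).castSucc.castSucc))
      (defOver_and (defOver_eqPair hM ((Fin.last 5).castSucc.castSucc.castSucc.castSucc.castSucc) ((Fin.last 1).castSucc.castSucc.castSucc.castSucc.castSucc.castSucc.castSucc.castSucc.castSucc) ((Fin.last 2).castSucc.castSucc.castSucc.castSucc.castSucc.castSucc.castSucc.castSucc))
      (defOver_and (defOver_eqPair hM ((Fin.last 6).castSucc.castSucc.castSucc.castSucc) ((Fin.last 3).castSucc.castSucc.castSucc.castSucc.castSucc.castSucc.castSucc) ((Fin.last 4).castSucc.castSucc.castSucc.castSucc.castSucc.castSucc))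
      (defOver_and (defOver_eqPair hM ((Fin.last 9).castSucc) ((Fin.last 7).castSucc.castSucc.castSucc) ((Fin.last 8).castSucc.castSucc))
      (defOver_and (defOver_eqPair hM ((Fin.last 10)) ((Fin.last 5).castSucc.castSucc.castSucc.castSucc.castSucc) ((Fin.last 6).castSucc.castSucc.castSucc.castSucc))
      (defOver_eqPair hM ((0 : Fin 1).castSucc.castSucc.castSucc.castSucc.castSucc.castSucc.castSucc.castSucc.castSucc.castSucc) ((Fin.last 10)) ((Fin.last 9).castSucc))))))))))))))))))))))
      refine defOver_congr h fun v hv => ?_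
      simp only [Fin.snoc_last, Fin.snoc_castSucc, Set.mem_setOf_eq]
      constructor
      · rintro ⟨c, hcM, d, hdM, cp, hcpM, dp, hdpM, aa, haaM, bb, hbbM,
          r1, hr1M, r2, hr2M, r, hrM, p, hpM,
          hAc, hBd, hAcp, hBdp, hi1, hi2, ha, hb, hr, hp, hx⟩
        refine ⟨aa, ⟨c, d, hAc, hBd, ha⟩, bb, ⟨cp, dp, hAcp, hBdp, hb⟩, ?_⟩
        rw [hx, hp, hr, (infCode_iff hAc hAcp).2 hi1, (infCode_iff hBd hBdp).2 hi2,
          ha, hb, inf1_pair]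
      · rintro ⟨aa, ⟨c, d, hAc, hBd, rfl⟩, bb, ⟨cp, dp, hAcp, hBdp, rfl⟩, hx⟩
        rw [inf1_pair] at hx
        exact ⟨c, VCode_mem_M hM hAc, d, VCode_mem_M hM hBd,
          cp, VCode_mem_M hM hAcp, dp, VCode_mem_M hM hBdp,
          ZFSet.pair c d, kpairM hM (VCode_mem_M hM hAc) (VCode_mem_M hM hBd),
          ZFSet.pair cp dp, kpairM hM (VCode_mem_M hM hAcp) (VCode_mem_M hM hBdp),
          infR c cp, VCode_mem_M hM (VCode_inf hM hAc hAcp),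
          infR d dp, VCode_mem_M hM (VCode_inf hM hBd hBdp),
          ZFSet.pair (infR c cp) (infR d dp),
          kpairM hM (VCode_mem_M hM (VCode_inf hM hAc hAcp))
            (VCode_mem_M hM (VCode_inf hM hBd hBdp)),
          ZFSet.pair (ZFSet.pair c d) (ZFSet.pair cp dp),
          kpairM hM (kpairM hM (VCode_mem_M hM hAc) (VCode_mem_M hM hBd))
            (kpairM hM (VCode_mem_M hM hAcp) (VCode_mem_M hM hBdp)),
          hAc, hBd, hAcp, hBdp,
          (infCode_iff hAc hAcp).1 rfl, (infCode_iff hBd hBdp).1 rfl,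
          rfl, rfl, rfl, rfl, hx⟩
  sup_mem := by
    constructor
    · rintro x ⟨a, ha, b, hb, rfl⟩
      exact kpairM hM (kpairM hM (VCode2_mem_M hM ha) (VCode2_mem_M hM hb))
        (VCode2_mem_M hM (VCode2_sup hM ha hb))
    · have h := (defOver_ex (M := M) (defOver_ex (M := M) (defOver_ex (M := M) (defOver_ex (M := M) (defOver_ex (M := M) (defOver_ex (M := M) (defOver_ex (M := M) (defOver_ex (M := M) (defOver_ex (M := M) (defOver_ex (M := M) (defOver_and (dVCode hM (chiA_def hM) ((Fin.last 1).castSucc.castSucc.castSucc.castSucc.castSucc.castSucc.castSucc.castSucc.castSucc))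
      (defOver_and (dVCode hM (chiB_def hM) ((Fin.last 2).castSucc.castSucc.castSucc.castSucc.castSucc.castSucc.castSucc.castSucc))
      (defOver_and (dVCode hM (chiA_def hM) ((Fin.last 3).castSucc.castSucc.castSucc.castSucc.castSucc.castSucc.castSucc))
      (defOver_and (dVCode hM (chiB_def hM) ((Fin.last 4).castSucc.castSucc.castSucc.castSucc.castSucc.castSucc))
      (defOver_and (dSupCode hM ((Fin.last 1).castSucc.castSucc.castSucc.castSucc.castSucc.castSucc.castSucc.castSucc.castSucc) ((Fin.last 3).castSucc.castSucc.castSucc.castSucc.castSucc.castSucc.castSucc) ((Fin.last 7).castSucc.castSucc.castSucc))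
      (defOver_and (dSupCode hM ((Fin.last 2).castSucc.castSucc.castSucc.castSucc.castSucc.castSucc.castSucc.castSucc) ((Fin.last 4).castSucc.castSucc.castSucc.castSucc.castSucc.castSucc) ((Fin.last 8).castSucc.castSucc))
      (defOver_and (defOver_eqPair hM ((Fin.last 5).castSucc.castSucc.castSucc.castSucc.castSucc) ((Fin.last 1).castSucc.castSucc.castSucc.castSucc.castSucc.castSucc.castSucc.castSucc.castSucc) ((Fin.last 2).castSucc.castSucc.castSucc.castSucc.castSucc.castSucc.castSucc.castSucc))
      (defOver_and (defOver_eqPair hM ((Fin.last 6).castSucc.castSucc.castSucc.castSucc) ((Fin.last 3).castSucc.castSucc.castSucc.castSucc.castSucc.castSucc.castSucc) ((Fin.last 4).castSucc.castSucc.castSucc.castSucc.castSucc.castSucc))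
      (defOver_and (defOver_eqPair hM ((Fin.last 9).castSucc) ((Fin.last 7).castSucc.castSucc.castSucc) ((Fin.last 8).castSucc.castSucc))
      (defOver_and (defOver_eqPair hM ((Fin.last 10)) ((Fin.last 5).castSucc.castSucc.castSucc.castSucc.castSucc) ((Fin.last 6).castSucc.castSucc.castSucc.castSucc))
      (defOver_eqPair hM ((0 : Fin 1).castSucc.castSucc.castSucc.castSucc.castSucc.castSucc.castSucc.castSucc.castSucc.castSucc) ((Fin.last 10)) ((Fin.last 9).castSucc))))))))))))))))))))))
      refine defOver_congr h fun v hv => ?_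
      simp only [Fin.snoc_last, Fin.snoc_castSucc, Set.mem_setOf_eq]
      constructor
      · rintro ⟨c, hcM, d, hdM, cp, hcpM, dp, hdpM, aa, haaM, bb, hbbM,
          r1, hr1M, r2, hr2M, r, hrM, p, hpM,
          hAc, hBd, hAcp, hBdp, hi1, hi2, ha, hb, hr, hp, hx⟩
        refine ⟨aa, ⟨c, d, hAc, hBd, ha⟩, bb, ⟨cp, dp, hAcp, hBdp, hb⟩, ?_⟩
        rw [hx, hp, hr, (supCode_iff hAc hAcp).2 hi1, (supCode_iff hBd hBdp).2 hi2,
          ha, hb, sup1_pair]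
      · rintro ⟨aa, ⟨c, d, hAc, hBd, rfl⟩, bb, ⟨cp, dp, hAcp, hBdp, rfl⟩, hx⟩
        rw [sup1_pair] at hx
        exact ⟨c, VCode_mem_M hM hAc, d, VCode_mem_M hM hBd,
          cp, VCode_mem_M hM hAcp, dp, VCode_mem_M hM hBdp,
          ZFSet.pair c d, kpairM hM (VCode_mem_M hM hAc) (VCode_mem_M hM hBd),
          ZFSet.pair cp dp, kpairM hM (VCode_mem_M hM hAcp) (VCode_mem_M hM hBdp),
          supR c cp, VCode_mem_M hM (VCode_sup hM hAc hAcp),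
          supR d dp, VCode_mem_M hM (VCode_sup hM hBd hBdp),
          ZFSet.pair (supR c cp) (supR d dp),
          kpairM hM (VCode_mem_M hM (VCode_sup hM hAc hAcp))
            (VCode_mem_M hM (VCode_sup hM hBd hBdp)),
          ZFSet.pair (ZFSet.pair c d) (ZFSet.pair cp dp),
          kpairM hM (kpairM hM (VCode_mem_M hM hAc) (VCode_mem_M hM hBd))
            (kpairM hM (VCode_mem_M hM hAcp) (VCode_mem_M hM hBdp)),
          hAc, hBd, hAcp, hBdp,
          (supCode_iff hAc hAcp).1 rfl, (supCode_iff hBd hBdp).1 rfl,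
          rfl, rfl, rfl, rfl, hx⟩
  bot_mem := VCode2_bot hM
  top_mem := VCode2_top hM
  neg_cl := fun a ha => VCode2_neg hM ha
  inf_cl := fun a ha b hb => VCode2_inf hM ha hb
  sup_cl := fun a ha b hb => VCode2_sup hM ha hb
  le_refl := fun a _ => subset_rfl
  le_trans := fun a _ b _ c _ h1 h2 => h1.trans h2
  le_antisymm := fun a ha b hb h1 h2 => den1_inj hM ha hb (Set.Subset.antisymm h1 h2)
  bot_le := fun a _ => by
    show den1 M bot1 ⊆ den1 M a
    rw [den1_bot]; exact Set.empty_subset _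
  le_top := fun a ha => by
    show den1 M a ⊆ den1 M top1
    rw [den1_top]; exact den1_subset a
  inf_le_left := fun a ha b hb => by
    show den1 M (inf1 a b) ⊆ den1 M a
    rw [den1_inf ha hb]; exact Set.inter_subset_left
  inf_le_right := fun a ha b hb => by
    show den1 M (inf1 a b) ⊆ den1 M b
    rw [den1_inf ha hb]; exact Set.inter_subset_right
  le_inf := fun a ha b hb c hc h1 h2 => by
    show den1 M c ⊆ den1 M (inf1 a b)
    rw [den1_inf ha hb]; exact Set.subset_inter h1 h2
  le_sup_left := fun a ha b hb => by
    show den1 M a ⊆ den1 M (sup1 a b)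
    rw [den1_sup ha hb]; exact Set.subset_union_left
  le_sup_right := fun a ha b hb => by
    show den1 M b ⊆ den1 M (sup1 a b)
    rw [den1_sup ha hb]; exact Set.subset_union_right
  sup_le := fun a ha b hb c hc h1 h2 => by
    show den1 M (sup1 a b) ⊆ den1 M c
    rw [den1_sup ha hb]; exact Set.union_subset h1 h2
  inf_neg := fun a ha => by
    obtain ⟨c, d, hc, hd, rfl⟩ := ha
    show inf1 (ZFSet.pair c d) (neg1 (ZFSet.pair c d)) = bot1
    rw [neg1_pair, inf1_pair, infR_negR hM (chiA_prop hM) hc, infR_negR hM (chiB_prop hM) hd]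
    rfl
  sup_neg := fun a ha => by
    obtain ⟨c, d, hc, hd, rfl⟩ := ha
    show sup1 (ZFSet.pair c d) (neg1 (ZFSet.pair c d)) = top1
    rw [neg1_pair, sup1_pair, supR_negR hM (chiA_prop hM) hc, supR_negR hM (chiB_prop hM) hd]
    rfl
  distrib := fun a ha b hb c hc => by
    obtain ⟨a1, a2, ha1, ha2, rfl⟩ := ha
    obtain ⟨b1, b2, hb1, hb2, rfl⟩ := hb
    obtain ⟨c1, c2, hc1, hc2, rfl⟩ := hc
    show inf1 (ZFSet.pair a1 a2) (sup1 (ZFSet.pair b1 b2) (ZFSet.pair c1 c2)) = _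
    rw [sup1_pair, inf1_pair, inf1_pair, inf1_pair, sup1_pair,
      distribR hM (chiA_prop hM) ha1 hb1 hc1, distribR hM (chiB_prop hM) ha2 hb2 hc2]

end B1b
/-! ### `(B1, π1)` is a Boolean completion of `F` -/

section Comp1

variable {M : ZFSet}

theorem fst_mem_sUnion2 {A c d : ZFSet} (h : ZFSet.pair c d ∈ A) :
    c ∈ (ZFSet.sUnion (ZFSet.sUnion A : ZFSet) : ZFSet) := by
  refine ZFSet.mem_sUnion.2 ⟨{c}, ?_, ZFSet.mem_singleton.2 rfl⟩
  refine ZFSet.mem_sUnion.2 ⟨ZFSet.pair c d, h, ?_⟩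
  rw [pair_eq]
  exact ZFSet.mem_pair.2 (Or.inl rfl)

theorem snd_mem_sUnion2 {A c d : ZFSet} (h : ZFSet.pair c d ∈ A) :
    d ∈ (ZFSet.sUnion (ZFSet.sUnion A : ZFSet) : ZFSet) := by
  refine ZFSet.mem_sUnion.2 ⟨{c, d}, ?_, ZFSet.mem_pair.2 (Or.inr rfl)⟩
  refine ZFSet.mem_sUnion.2 ⟨ZFSet.pair c d, h, ?_⟩
  rw [pair_eq]
  exact ZFSet.mem_pair.2 (Or.inr rfl)

/-- The second dense embedding. -/
noncomputable def pi1 (M : ZFSet) : ZFSet → ZFSet := fun p =>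
  if p = ∅ then top1
  else if (∅ : ZFSet) ∈ p then ZFSet.pair (ZFSet.pair ∅ {p}) botR
  else ZFSet.pair botR (ZFSet.pair ∅ {p})

theorem pi1_empty : pi1 M ∅ = top1 := if_pos rfl
theorem pi1_inA {p : ZFSet} (hne : p ≠ ∅) (h0 : (∅ : ZFSet) ∈ p) :
    pi1 M p = ZFSet.pair (ZFSet.pair ∅ {p}) botR := by rw [pi1, if_neg hne, if_pos h0]
theorem pi1_inB {p : ZFSet} (hne : p ≠ ∅) (h0 : (∅ : ZFSet) ∉ p) :
    pi1 M p = ZFSet.pair botR (ZFSet.pair ∅ {p}) := by rw [pi1, if_neg hne, if_neg h0]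

theorem VCode2_pi1 (hM : IsCTM M) {p : ZFSet} (hp : p ∈ M) : VCode2 M (pi1 M p) := by
  by_cases hne : p = ∅
  · rw [hne, pi1_empty]; exact VCode2_top hM
  by_cases h0 : (∅ : ZFSet) ∈ p
  · rw [pi1_inA hne h0]
    exact ⟨_, _, VCode_atom hM chiA_M ⟨hp, h0⟩, VCode_bot hM, rfl⟩
  · rw [pi1_inB hne h0]
    exact ⟨_, _, VCode_bot hM, VCode_atom hM chiB_M ⟨hp, hne, h0⟩, rfl⟩

theorem den1_pi1 (hM : IsCTM M) {p : ZFSet} (hp : p ∈ M) (hne : p ≠ ∅) :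
    den1 M (pi1 M p) = {p} := by
  by_cases h0 : (∅ : ZFSet) ∈ p
  · rw [pi1_inA hne h0, den1_pair, denR_bot, denR_atom (⟨hp, h0⟩ : chiA M p),
      Set.union_empty]
  · rw [pi1_inB hne h0, den1_pair, denR_bot, denR_atom (⟨hp, hne, h0⟩ : chiB M p),
      Set.empty_union]

theorem comp1 (M : ZFSet) (hM : IsCTM M) :
    BoolCompletion (theF M hM) (theB1 M hM) (pi1 M) := by
  have hQA : DefinableOver M fun v : Fin 1 → ZFSet =>
      ∃ d, d ∈ M ∧ ∃ q, q ∈ M ∧ (q = ZFSet.pair (v 0) d ∧ True) := by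
    exact defOver_ex (defOver_ex (defOver_and
      (defOver_eqPair hM (Fin.last 2) ((0 : Fin 1).castSucc.castSucc)
        (Fin.castSucc (Fin.last 1)))
      (defOver_congr (defOver_eq (Fin.last 2) (Fin.last 2)) fun v hv =>
        ⟨fun _ => trivial, fun _ => rfl⟩)))
  constructor
  · -- complete
    intro A hAM hAB
    have hUU : (ZFSet.sUnion (ZFSet.sUnion A : ZFSet) : ZFSet) ∈ M := hM.union _ (hM.union _ hAM)
    -- first components
    have hQAdef : DefinableOver M fun v : Fin 1 → ZFSet =>
        ∃ d, ZFSet.pair (v 0) d ∈ A := by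
      have h := defOver_ex (M := M) (defOver_ex (M := M) (defOver_and
        (defOver_eqPair hM (Fin.last 2) ((0 : Fin 1).castSucc.castSucc)
          (Fin.castSucc (Fin.last 1)))
        (defOver_memR (Fin.last 2) hAM)))
      refine defOver_congr h fun v hv => ?_
      simp only [Fin.snoc_last, Fin.snoc_castSucc]
      constructor
      · rintro ⟨d, hdM, q, hqM, rfl, hq⟩
        exact ⟨d, hq⟩
      · rintro ⟨d, hd⟩
        have hqM : ZFSet.pair (v 0) d ∈ M := memM_of_mem hM hAM hd
        exact ⟨d, (pair_mem_M hM hqM).2, _, hqM, rfl, hd⟩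
    have hQBdef : DefinableOver M fun v : Fin 1 → ZFSet =>
        ∃ c, ZFSet.pair c (v 0) ∈ A := by
      have h := defOver_ex (M := M) (defOver_ex (M := M) (defOver_and
        (defOver_eqPair hM (Fin.last 2) (Fin.castSucc (Fin.last 1))
          ((0 : Fin 1).castSucc.castSucc))
        (defOver_memR (Fin.last 2) hAM)))
      refine defOver_congr h fun v hv => ?_
      simp only [Fin.snoc_last, Fin.snoc_castSucc]
      constructor
      · rintro ⟨c, hcM, q, hqM, rfl, hq⟩
        exact ⟨c, hq⟩
      · rintro ⟨c, hc⟩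
        have hqM : ZFSet.pair c (v 0) ∈ M := memM_of_mem hM hAM hc
        exact ⟨c, (pair_mem_M hM hqM).1, _, hqM, rfl, hc⟩
    set SA := ZFSet.sep (fun c => ∃ d, ZFSet.pair c d ∈ A) (ZFSet.sUnion (ZFSet.sUnion A : ZFSet) : ZFSet)
      with hSA
    set SB := ZFSet.sep (fun d => ∃ c, ZFSet.pair c d ∈ A) (ZFSet.sUnion (ZFSet.sUnion A : ZFSet) : ZFSet)
      with hSB
    have hSAM : SA ∈ M := sepM hM hQAdef hUU
    have hSBM : SB ∈ M := sepM hM hQBdef hUU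
    have hallA : ∀ c ∈ SA, VCode M (chiA M) c := by
      intro c hc
      obtain ⟨-, d, hpair⟩ := ZFSet.mem_sep.1 hc
      obtain ⟨c', d', h1, h2, heq⟩ := hAB _ hpair
      obtain ⟨rfl, -⟩ := ZFSet.pair_inj.1 heq
      exact h1
    have hallB : ∀ d ∈ SB, VCode M (chiB M) d := by
      intro d hd
      obtain ⟨-, c, hpair⟩ := ZFSet.mem_sep.1 hd
      obtain ⟨c', d', h1, h2, heq⟩ := hAB _ hpair
      obtain ⟨-, rfl⟩ := ZFSet.pair_inj.1 heq
      exact h2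
    obtain ⟨sA, hsAV, hdenA⟩ := relSup hM (chiA_def hM) hSAM hallA
    obtain ⟨sB, hsBV, hdenB⟩ := relSup hM (chiB_def hM) hSBM hallB
    refine ⟨ZFSet.pair sA sB, ⟨sA, sB, hsAV, hsBV, rfl⟩, fun b hbA => ?_,
      fun b' hb'B hub => ?_⟩
    · obtain ⟨c, d, hc, hd, rfl⟩ := hAB _ hbA
      show den1 M (ZFSet.pair c d) ⊆ den1 M (ZFSet.pair sA sB)
      rw [den1_pair, den1_pair, hdenA, hdenB]
      refine Set.union_subset_union ?_ ?_
      · exact fun x hx => ⟨c, ZFSet.mem_sep.2 ⟨fst_mem_sUnion2 hbA, d, hbA⟩, hx⟩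
      · exact fun x hx => ⟨d, ZFSet.mem_sep.2 ⟨snd_mem_sUnion2 hbA, c, hbA⟩, hx⟩
    · show den1 M (ZFSet.pair sA sB) ⊆ den1 M b'
      rw [den1_pair, hdenA, hdenB]
      rintro x (⟨c, hcSA, hxc⟩ | ⟨d, hdSB, hxd⟩)
      · obtain ⟨-, d, hpair⟩ := ZFSet.mem_sep.1 hcSA
        have := hub _ hpair
        apply this
        rw [den1_pair]
        exact Or.inl hxc
      · obtain ⟨-, c, hpair⟩ := ZFSet.mem_sep.1 hdSB
        have := hub _ hpair
        apply this
        rw [den1_pair]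
        exact Or.inr hxd
  · -- graph_mem
    constructor
    · rintro x ⟨p, hp, rfl⟩
      exact kpairM hM hp (VCode2_mem_M hM (VCode2_pi1 hM hp))
    · have htop1M : top1 ∈ M := kpairM hM (topR_mem_M hM) (topR_mem_M hM)
      have h := defOver_ex (M := M) (defOver_or
        (defOver_and
          (defOver_eqEmpty hM (Fin.last 1))
          (dEqPairCR hM htop1M ((0 : Fin 1).castSucc) (Fin.last 1)))
        (defOver_or
          (defOver_and
            (defOver_not (defOver_eqEmpty hM (Fin.last 1)))
            (defOver_and
              (defOver_memL (Fin.last 1) hM.empty_mem)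
              (defOver_ex (defOver_and
                (defOver_eqSingleton hM (Fin.last 2) (Fin.castSucc (Fin.last 1)))
                (defOver_ex (defOver_and
                  (dEqPairC hM hM.empty_mem (Fin.last 3) (Fin.castSucc (Fin.last 2)))
                  (defOver_ex (defOver_and
                    (dEqPairCR hM (botR_mem_M hM) (Fin.last 4) (Fin.castSucc (Fin.last 3)))
                    (defOver_eqPair hM ((0 : Fin 1).castSucc.castSucc.castSucc.castSucc)
                      (Fin.castSucc (Fin.castSucc (Fin.castSucc (Fin.last 1))))
                      (Fin.last 4))))))))))
          (defOver_and
            (defOver_not (defOver_eqEmpty hM (Fin.last 1)))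
            (defOver_and
              (defOver_not (defOver_memL (Fin.last 1) hM.empty_mem))
              (defOver_ex (defOver_and
                (defOver_eqSingleton hM (Fin.last 2) (Fin.castSucc (Fin.last 1)))
                (defOver_ex (defOver_and
                  (dEqPairC hM hM.empty_mem (Fin.last 3) (Fin.castSucc (Fin.last 2)))
                  (defOver_ex (defOver_and
                    (dEqPairC hM (botR_mem_M hM) (Fin.last 4) (Fin.castSucc (Fin.last 3)))
                    (defOver_eqPair hM ((0 : Fin 1).castSucc.castSucc.castSucc.castSucc)
                      (Fin.castSucc (Fin.castSucc (Fin.castSucc (Fin.last 1))))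
                      (Fin.last 4))))))))))))
      refine defOver_congr h fun v hv => ?_
      simp only [Fin.snoc_last, Fin.snoc_castSucc, Set.mem_setOf_eq]
      constructor
      · rintro ⟨p, hpM, (⟨hpe, h2⟩ | ⟨hne, h0, s, hsM, hs, u, huM, hu, y, hyM, hy, hx⟩ |
          ⟨hne, h0, s, hsM, hs, u, huM, hu, y, hyM, hy, hx⟩)⟩
        · refine ⟨p, hpM, ?_⟩
          rw [hpe, pi1_empty] at *
          exact h2
        · refine ⟨p, hpM, ?_⟩
          rw [pi1_inA hne h0, ← hs, ← hu, ← hy]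
          exact hx
        · refine ⟨p, hpM, ?_⟩
          rw [pi1_inB hne h0, ← hs, ← hu, ← hy]
          exact hx
      · rintro ⟨p, hp, h2⟩
        by_cases hne : p = ∅
        · subst hne
          rw [pi1_empty] at h2
          exact ⟨∅, hp, Or.inl ⟨rfl, h2⟩⟩
        by_cases h0 : (∅ : ZFSet) ∈ p
        · rw [pi1_inA hne h0] at h2
          refine ⟨p, hp, Or.inr (Or.inl ⟨hne, h0, {p}, singletonM hM hp, rfl,
            ZFSet.pair ∅ {p}, kpairM hM hM.empty_mem (singletonM hM hp), rfl,
            ZFSet.pair (ZFSet.pair ∅ {p}) botR,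
            kpairM hM (kpairM hM hM.empty_mem (singletonM hM hp)) (botR_mem_M hM),
            rfl, h2⟩)⟩
        · rw [pi1_inB hne h0] at h2
          refine ⟨p, hp, Or.inr (Or.inr ⟨hne, h0, {p}, singletonM hM hp, rfl,
            ZFSet.pair ∅ {p}, kpairM hM hM.empty_mem (singletonM hM hp), rfl,
            ZFSet.pair botR (ZFSet.pair ∅ {p}),
            kpairM hM (botR_mem_M hM) (kpairM hM hM.empty_mem (singletonM hM hp)),
            rfl, h2⟩)⟩
  · -- maps
    intro p hp
    refine ⟨VCode2_pi1 hM hp, fun h => ?_⟩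
    rw [show (theB1 M hM).bot = bot1 from rfl] at h
    by_cases hne : p = ∅
    · subst hne
      rw [pi1_empty] at h
      obtain ⟨x, hx1, -⟩ := chiA_prop hM ∅ hM.empty_mem
      have : x ∈ den1 M top1 := by
        rw [den1_top]; exact Or.inl hx1
      rw [h, den1_bot] at this
      exact this
    · have : p ∈ den1 M (pi1 M p) := by
        rw [den1_pi1 hM hp hne]; rfl
      rw [h, den1_bot] at this
      exact this
  · -- inj
    intro p hp q hq h
    by_cases hpe : p = ∅ <;> by_cases hqe : q = ∅
    · rw [hpe, hqe]
    · exfalso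
      obtain ⟨x, hx1, hx2⟩ := chiA_prop hM {q} (singletonM hM hq)
      have hxq : x ≠ q := fun hxq => hx2 (hxq ▸ ZFSet.mem_singleton.2 rfl)
      have h1 : x ∈ den1 M (pi1 M p) := by
        rw [hpe, pi1_empty, den1_top]; exact Or.inl hx1
      rw [h, den1_pi1 hM hq hqe] at h1
      exact hxq h1
    · exfalso
      obtain ⟨x, hx1, hx2⟩ := chiA_prop hM {p} (singletonM hM hp)
      have hxp : x ≠ p := fun hxp => hx2 (hxp ▸ ZFSet.mem_singleton.2 rfl)
      have h1 : x ∈ den1 M (pi1 M q) := by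
        rw [hqe, pi1_empty, den1_top]; exact Or.inl hx1
      rw [← h, den1_pi1 hM hp hpe] at h1
      exact hxp h1
    · have h1 : p ∈ den1 M (pi1 M q) := by
        rw [← h, den1_pi1 hM hp hpe]; rfl
      rw [den1_pi1 hM hq hqe] at h1
      exact h1
  · -- mono
    rintro p hp q hq (rfl | rfl)
    · exact subset_rfl
    · show den1 M (pi1 M p) ⊆ den1 M (pi1 M ∅)
      rw [pi1_empty, den1_top]
      exact den1_subset _
  · -- incompat
    intro p hp q hq h
    obtain ⟨hpq, hpe, hqe⟩ := notCompat_theF hM hp hq h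
    show inf1 (pi1 M p) (pi1 M q) = bot1
    apply den1_inj hM (VCode2_inf hM (VCode2_pi1 hM hp) (VCode2_pi1 hM hq)) (VCode2_bot hM)
    rw [den1_inf (VCode2_pi1 hM hp) (VCode2_pi1 hM hq), den1_pi1 hM hp hpe,
      den1_pi1 hM hq hqe, den1_bot]
    ext x
    simp only [Set.mem_inter_iff, Set.mem_singleton_iff, Set.mem_empty_iff_false, iff_false]
    rintro ⟨rfl, rfl⟩
    exact hpq rfl
  · -- dense
    intro b hb hbne
    obtain ⟨c, d, hc, hd, rfl⟩ := hb
    have : c ≠ botR ∨ d ≠ botR := by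
      by_contra hcon
      push_neg at hcon
      exact hbne (by rw [hcon.1, hcon.2]; rfl)
    have hex : ∃ x, x ∈ den1 M (ZFSet.pair c d) := by
      rcases this with hne | hne
      · obtain ⟨x, hx⟩ := denR_dense (chiA_prop hM) hc hne
        exact ⟨x, by rw [den1_pair]; exact Or.inl hx⟩
      · obtain ⟨x, hx⟩ := denR_dense (chiB_prop hM) hd hne
        exact ⟨x, by rw [den1_pair]; exact Or.inr hx⟩
    obtain ⟨x, hx⟩ := hex
    have hxcl := den1_subset _ hx
    have hxM : x ∈ M := by
      rcases hxcl with h' | h'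
      · exact h'.1
      · exact h'.1
    have hxne : x ≠ ∅ := by
      rcases hxcl with h' | h'
      · intro he
        rw [he] at h'
        exact ZFSet.notMem_empty _ h'.2
      · exact h'.2.1
    refine ⟨x, hxM, ?_⟩
    show den1 M (pi1 M x) ⊆ den1 M (ZFSet.pair c d)
    rw [den1_pi1 hM hxM hxne]
    intro y hy
    rw [Set.mem_singleton_iff] at hy
    rwa [hy]

end Comp1
/-- Let `M` be a countable transitive model of `ZF⁻` with a
global well-order of order type `Ord^M` definable over `M`. Then there is a
notion of class forcing definable over `M` with two Boolean completions in `M`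
that are non-isomorphic: no isomorphism in `V` between them fixes `ℙ`. -/
theorem statement5 (M : ZFSet) (hM : IsCTM M) (hwo : HasDefWellOrderOT M) :
    ∃ F : ClassForcing M (DefClasses M),
      ∃ (B0 B1 : MBoolAlg M (DefClasses M)) (π0 π1 : ZFSet → ZFSet),
        BoolCompletion F B0 π0 ∧ BoolCompletion F B1 π1 ∧
        ¬ FixingIso F B0 B1 π0 π1 := by
  refine ⟨theF M hM, theB0 M hM, theB1 M hM, pi0, pi1 M, comp0 M hM, comp1 M hM, ?_⟩
  rintro ⟨f, hf1, hf2, hf3, hf4, hf5⟩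
  have hbstar : ZFSet.pair topR botR ∈ (theB1 M hM).B :=
    ⟨topR, botR, VCode_top hM, VCode_bot hM, rfl⟩
  obtain ⟨astar, hastarB, hfa⟩ := hf3 _ hbstar
  have hastar : VCode M (chi0 M) astar := hastarB
  have key : ∀ p : ZFSet, p ∈ M → p ≠ ∅ →
      (denR (chi0 M) (pi0 p) ⊆ denR (chi0 M) astar ↔ (∅ : ZFSet) ∈ p) := by
    intro p hpM hpne
    have hpi0B : pi0 p ∈ (theB0 M hM).B := ((comp0 M hM).maps p hpM).1
    have h1 := hf4 (pi0 p) hpi0B astar hastarB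
    rw [hf5 p hpM, hfa] at h1
    have h2 : (theB1 M hM).le (pi1 M p) (ZFSet.pair topR botR) ↔ (∅ : ZFSet) ∈ p := by
      show den1 M (pi1 M p) ⊆ den1 M (ZFSet.pair topR botR) ↔ _
      rw [den1_pi1 hM hpM hpne, den1_pair, denR_top, denR_bot, Set.union_empty]
      constructor
      · intro h
        exact (h (Set.mem_singleton p)).2
      · intro h0 y hy
        rw [Set.mem_singleton_iff] at hy
        rw [hy]
        exact ⟨hpM, h0⟩
    exact Iff.trans
      (show (denR (chi0 M) (pi0 p) ⊆ denR (chi0 M) astar) ↔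
        (theB1 M hM).le (pi1 M p) (ZFSet.pair topR botR) from h1) h2
  rcases hastar with ⟨a, haM, haχ, (rfl | rfl)⟩
  · -- `astar` is a set code: test with `x = {∅, {a}}`
    set x := ({∅, {a}} : ZFSet) with hxdef
    have hxM : x ∈ M := upairM hM hM.empty_mem (singletonM hM haM)
    have h0x : (∅ : ZFSet) ∈ x := ZFSet.mem_pair.2 (Or.inl rfl)
    have hxne : x ≠ ∅ := fun h => ZFSet.notMem_empty _ (h ▸ h0x)
    have hle := (key x hxM hxne).2 h0x
    have hxa : x ∈ a := by
      have hx0 : x ∈ denR (chi0 M) (pi0 x) := by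
        rw [pi0_ne hxne, denR_atom (⟨hxM, hxne⟩ : chi0 M x)]
        rfl
      have := hle hx0
      rw [denR_set] at this
      exact this.2
    exact mem_cycle3 (ZFSet.mem_singleton.2 rfl : a ∈ ({a} : ZFSet))
      (ZFSet.mem_pair.2 (Or.inr rfl) : ({a} : ZFSet) ∈ x) hxa
  · -- `astar` is a co-set code: test with `x = {{a}}`
    set x := ({{a}} : ZFSet) with hxdef
    have hxM : x ∈ M := singletonM hM (singletonM hM haM)
    have hxne : x ≠ ∅ := singleton_ne_empty _
    have h0x : (∅ : ZFSet) ∉ x := by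
      intro h
      exact singleton_ne_empty a (ZFSet.mem_singleton.1 h).symm
    have hxa : x ∈ a := by
      by_contra hxa
      apply h0x
      refine (key x hxM hxne).1 ?_
      rw [pi0_ne hxne, denR_atom (⟨hxM, hxne⟩ : chi0 M x), denR_co]
      intro y hy
      rw [Set.mem_singleton_iff] at hy
      rw [hy]
      exact ⟨⟨hxM, hxne⟩, hxa⟩
    exact mem_cycle3 (ZFSet.mem_singleton.2 rfl : a ∈ ({a} : ZFSet))
      (ZFSet.mem_singleton.2 rfl : ({a} : ZFSet) ∈ x) hxa

end CF
end

section
/- Let M be a countable transitive model of ZF⁻ and let Col denote either Col(ω,Ord)^M or Col_*(ω,Ord)^M. Then no non-trivial maximal antichain of Col is an element of M; equivalently, every antichain A of Col with A ∈ M and A ≠ {∅} (where ∅, the empty function, is the maximal condition) is not a maximal antichain. -/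
set_option autoImplicit false

attribute [local instance] Classical.propDecidable

namespace CF

/-- `f` is a (set-coded) function: a set of Kuratowski pairs which is functional. -/
def isFuncZ (f : ZFSet) : Prop :=
  (∀ x ∈ f, ∃ a b : ZFSet, x = ZFSet.pair a b) ∧
  ∀ a b b' : ZFSet, ZFSet.pair a b ∈ f → ZFSet.pair a b' ∈ f → b = b'

/-- `f` is injective (as a set-coded relation). -/
def isInjZ (f : ZFSet) : Prop :=
  ∀ a a' b : ZFSet, ZFSet.pair a b ∈ f → ZFSet.pair a' b ∈ f → a = a'

/-- Domain of a set-coded relation. -/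
def domZ (f : ZFSet) : Set ZFSet := {a | ∃ b, ZFSet.pair a b ∈ f}

/-- Range of a set-coded relation. -/
def ranZ (f : ZFSet) : Set ZFSet := {b | ∃ a, ZFSet.pair a b ∈ f}

/-- A set-coded binary relation is acyclic iff its transitive closure is irreflexive. -/
def acyclicZ (e : ZFSet) : Prop :=
  ∀ a : ZFSet, ¬ Relation.TransGen (fun x y => ZFSet.pair x y ∈ e) a a

/-- The ordered triple `⟨d, e, f⟩`. -/
def tripleZ (d e f : ZFSet) : ZFSet := ZFSet.pair d (ZFSet.pair e f)
/-- `Col(ω, Ord)^M`: finite partial functions from `ω` to the ordinals of `M`,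
ordered by reverse inclusion. -/
def ColP (M : ZFSet) : Set ZFSet :=
  {p | isFuncZ p ∧ p.toSet.Finite ∧ (∀ a, a ∈ domZ p → a ∈ ZFSet.omega) ∧
    (∀ b, b ∈ ranZ p → IsOrdIn M b)}

/-- `Col_*(ω, Ord)^M`: the suborder of `Col(ω, Ord)^M` consisting of the
conditions whose domain is a natural number. -/
def ColStarP (M : ZFSet) : Set ZFSet :=
  {p | p ∈ ColP M ∧ ∃ n ∈ ZFSet.omega, domZ p = n.toSet}
open scoped ZFSet

theorem ZFSet.toSet_empty : (∅ : ZFSet).toSet = ∅ := _root_.ZFSet.coe_empty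
theorem ZFSet.toSet_insert (x y : ZFSet) : (insert x y).toSet = insert x y.toSet :=
  _root_.ZFSet.coe_insert x y
theorem ZFSet.toSet_union (x y : ZFSet) : (x ∪ y).toSet = x.toSet ∪ y.toSet :=
  _root_.ZFSet.coe_union x y
theorem ZFSet.mem_toSet (a x : ZFSet) : a ∈ x.toSet ↔ a ∈ x := Iff.rfl
def ofN : ℕ → ZFSet := fun n => ZFSet.mk (PSet.ofNat n)

theorem ofN_zero : ofN 0 = ∅ := rfl
theorem ofN_succ (n : ℕ) : ofN (n+1) = insert (ofN n) (ofN n) := rfl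

theorem ofN_mem_omega (n : ℕ) : ofN n ∈ ZFSet.omega := by
  induction n with
  | zero => exact ZFSet.omega_zero
  | succ n ih => rw [ofN_succ]; exact ZFSet.omega_succ ih

theorem eq_ofN_of_mem_omega {x : ZFSet} (hx : x ∈ ZFSet.omega) : ∃ n, x = ofN n := by
  induction x using Quotient.inductionOn with
  | h px =>
    obtain ⟨⟨n⟩, h⟩ := hx
    exact ⟨n, ZFSet.sound h⟩

theorem mem_ofN {x : ZFSet} {n : ℕ} : x ∈ ofN n ↔ ∃ k, k < n ∧ x = ofN k := by
  induction n with
  | zero => simp [ofN_zero, ZFSet.notMem_empty]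
  | succ n ih =>
    rw [ofN_succ, ZFSet.mem_insert_iff, ih]
    constructor
    · rintro (rfl | ⟨k, hk, rfl⟩)
      · exact ⟨n, Nat.lt_succ_self n, rfl⟩
      · exact ⟨k, Nat.lt_succ_of_lt hk, rfl⟩
    · rintro ⟨k, hk, rfl⟩
      rcases Nat.lt_succ_iff_lt_or_eq.1 hk with h | rfl
      · exact Or.inr ⟨k, h, rfl⟩
      · exact Or.inl rfl

theorem ofN_mem_ofN {k n : ℕ} (h : k < n) : ofN k ∈ ofN n := mem_ofN.2 ⟨k, h, rfl⟩

theorem ofN_injective : Function.Injective ofN := by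
  intro a b h
  by_contra hne
  rcases Nat.lt_or_ge a b with hl | hg
  · have := ofN_mem_ofN hl; rw [h] at this; exact ZFSet.mem_irrefl _ this
  · have := ofN_mem_ofN (lt_of_le_of_ne hg (Ne.symm hne)); rw [h] at this
    exact ZFSet.mem_irrefl _ this

theorem isTransitive_ofN (n : ℕ) : (ofN n).IsTransitive := by
  intro y hy
  rw [ZFSet.subset_def]
  obtain ⟨k, hk, rfl⟩ := mem_ofN.1 hy
  intro z hz
  obtain ⟨j, hj, rfl⟩ := mem_ofN.1 hz
  exact mem_ofN.2 ⟨j, hj.trans hk, rfl⟩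

theorem isOrdZ_ofN (n : ℕ) : IsOrdZ (ofN n) := by
  refine ⟨isTransitive_ofN n, fun y hy => ?_⟩
  obtain ⟨k, _, rfl⟩ := mem_ofN.1 hy
  exact isTransitive_ofN k

theorem isOrdZ_of_mem_omega {x : ZFSet} (hx : x ∈ ZFSet.omega) : IsOrdZ x := by
  obtain ⟨n, rfl⟩ := eq_ofN_of_mem_omega hx
  exact isOrdZ_ofN n

theorem isOrdZ_empty : IsOrdZ ∅ :=
  ⟨ZFSet.isTransitive_empty, fun y hy => absurd hy (ZFSet.notMem_empty y)⟩

theorem isOrdZ_sUnion {x : ZFSet} (h : ∀ y ∈ x, IsOrdZ y) : IsOrdZ (⋃₀ x) := by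
  refine ⟨ZFSet.IsTransitive.sUnion' (fun y hy => (h y hy).1), fun y hy => ?_⟩
  obtain ⟨z, hz, hyz⟩ := ZFSet.mem_sUnion.1 hy
  exact (h z hz).2 y hyz

theorem isOrdZ_succ {γ : ZFSet} (h : IsOrdZ γ) : IsOrdZ (insert γ γ) := by
  constructor
  · intro y hy
    rw [ZFSet.subset_def]
    intro z hz
    rcases ZFSet.mem_insert_iff.1 hy with rfl | hy'
    · exact ZFSet.mem_insert_iff.2 (Or.inr hz)
    · exact ZFSet.mem_insert_iff.2 (Or.inr (h.1.mem_trans hz hy'))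
  · intro y hy
    rcases ZFSet.mem_insert_iff.1 hy with rfl | hy'
    · exact h.1
    · exact h.2 y hy'

/-- Kuratowski first projection. -/
def fstZ (z : ZFSet) : ZFSet := ⋃₀ (ZFSet.sInter z)

theorem sInter_pairK (a b : ZFSet) : ZFSet.sInter (ZFSet.pair a b) = ({a} : ZFSet) := by
  have hne : (ZFSet.pair a b).Nonempty :=
    ZFSet.nonempty_of_mem (x := ({a} : ZFSet)) (by simp [ZFSet.pair])
  ext y
  rw [ZFSet.mem_sInter hne]
  constructor
  · intro h
    exact h ({a} : ZFSet) (by simp [ZFSet.pair])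
  · intro h
    intro z hz
    rcases ZFSet.mem_pair.1 hz with rfl | rfl
    · exact h
    · rcases ZFSet.mem_singleton.1 h with rfl
      exact ZFSet.mem_pair.2 (Or.inl rfl)

theorem fstZ_pair (a b : ZFSet) : fstZ (ZFSet.pair a b) = a := by
  rw [fstZ, sInter_pairK, ZFSet.sUnion_singleton]

theorem exists_bound {p : ZFSet} (hfin : p.toSet.Finite) :
    ∃ N : ℕ, ∀ k : ℕ, ofN k ∈ domZ p → k < N := by
  have hsub : domZ p ⊆ fstZ '' p.toSet := by
    rintro a ⟨b, hab⟩
    exact ⟨ZFSet.pair a b, hab, fstZ_pair a b⟩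
  have h1 : (domZ p).Finite := Set.Finite.subset (hfin.image fstZ) hsub
  have h2 : (ofN ⁻¹' domZ p).Finite := h1.preimage ofN_injective.injOn
  obtain ⟨N, hN⟩ := h2.bddAbove
  exact ⟨N + 1, fun k hk => Nat.lt_succ_of_le (hN hk)⟩

/-- The condition with domain `{0, …, n-1}` and constant value `δ`. -/
def qset (δ : ZFSet) : ℕ → ZFSet
  | 0 => ∅
  | n + 1 => insert (ZFSet.pair (ofN n) δ) (qset δ n)

theorem mem_qset {δ x : ZFSet} {n : ℕ} :
    x ∈ qset δ n ↔ ∃ k, k < n ∧ x = ZFSet.pair (ofN k) δ := by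
  induction n with
  | zero => simp [qset, ZFSet.notMem_empty]
  | succ n ih =>
    rw [qset, ZFSet.mem_insert_iff, ih]
    constructor
    · rintro (rfl | ⟨k, hk, rfl⟩)
      · exact ⟨n, Nat.lt_succ_self n, rfl⟩
      · exact ⟨k, Nat.lt_succ_of_lt hk, rfl⟩
    · rintro ⟨k, hk, rfl⟩
      rcases Nat.lt_succ_iff_lt_or_eq.1 hk with h | rfl
      · exact Or.inr ⟨k, h, rfl⟩
      · exact Or.inl rfl

theorem qset_finite (δ : ZFSet) (n : ℕ) : (qset δ n).toSet.Finite := by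
  induction n with
  | zero => rw [qset, ZFSet.toSet_empty]; exact Set.finite_empty
  | succ n ih => rw [qset, ZFSet.toSet_insert]; exact ih.insert _

/-- Fill the gaps of `s` below `n` with value `∅`. -/
noncomputable def fillset (s : ZFSet) : ℕ → ZFSet :=
  Nat.rec ∅ fun n prev =>
    if ofN n ∈ domZ s then prev else insert (ZFSet.pair (ofN n) ∅) prev

theorem fillset_zero (s : ZFSet) : fillset s 0 = ∅ := rfl
theorem fillset_succ (s : ZFSet) (n : ℕ) :
    fillset s (n + 1) =
      if ofN n ∈ domZ s then fillset s n
      else insert (ZFSet.pair (ofN n) ∅) (fillset s n) := rfl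

theorem mem_fillset {s x : ZFSet} {n : ℕ} :
    x ∈ fillset s n ↔ ∃ k, k < n ∧ ofN k ∉ domZ s ∧ x = ZFSet.pair (ofN k) ∅ := by
  induction n with
  | zero => simp [fillset_zero, ZFSet.notMem_empty]
  | succ n ih =>
    rw [fillset_succ]
    split_ifs with hdom
    · rw [ih]
      constructor
      · rintro ⟨k, hk, hd, rfl⟩
        exact ⟨k, Nat.lt_succ_of_lt hk, hd, rfl⟩
      · rintro ⟨k, hk, hd, rfl⟩
        rcases Nat.lt_succ_iff_lt_or_eq.1 hk with h | rfl
        · exact ⟨k, h, hd, rfl⟩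
        · exact absurd hdom hd
    · rw [ZFSet.mem_insert_iff, ih]
      constructor
      · rintro (rfl | ⟨k, hk, hd, rfl⟩)
        · exact ⟨n, Nat.lt_succ_self n, hdom, rfl⟩
        · exact ⟨k, Nat.lt_succ_of_lt hk, hd, rfl⟩
      · rintro ⟨k, hk, hd, rfl⟩
        rcases Nat.lt_succ_iff_lt_or_eq.1 hk with h | rfl
        · exact Or.inr ⟨k, h, hd, rfl⟩
        · exact Or.inl rfl

theorem fillset_finite (s : ZFSet) (n : ℕ) : (fillset s n).toSet.Finite := by
  induction n with
  | zero => rw [fillset_zero, ZFSet.toSet_empty]; exact Set.finite_empty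
  | succ n ih =>
    rw [fillset_succ]
    split_ifs
    · exact ih
    · rw [ZFSet.toSet_insert]; exact ih.insert _

theorem colStarP_subset_colP (M : ZFSet) : ColStarP M ⊆ ColP M := fun _ h => h.1

theorem empty_mem_colStarP (M : ZFSet) : (∅ : ZFSet) ∈ ColStarP M := by
  refine ⟨⟨⟨fun x hx => absurd hx (ZFSet.notMem_empty x),
      fun a b b' h _ => absurd h (ZFSet.notMem_empty _)⟩,
      by rw [ZFSet.toSet_empty]; exact Set.finite_empty,
      fun a ⟨b, hb⟩ => absurd hb (ZFSet.notMem_empty _),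
      fun b ⟨a, ha⟩ => absurd ha (ZFSet.notMem_empty _)⟩,
    ∅, ZFSet.omega_zero, ?_⟩
  ext a
  simp only [domZ, Set.mem_setOf_eq, ZFSet.toSet_empty, Set.mem_empty_iff_false, iff_false]
  rintro ⟨b, hb⟩
  exact ZFSet.notMem_empty _ hb

theorem qset_mem_colStarP {M δ : ZFSet} (hδ : IsOrdIn M δ) (n : ℕ) :
    qset δ n ∈ ColStarP M := by
  refine ⟨⟨⟨?_, ?_⟩, qset_finite δ n, ?_, ?_⟩, ofN n, ofN_mem_omega n, ?_⟩
  · intro x hx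
    obtain ⟨k, _, rfl⟩ := mem_qset.1 hx
    exact ⟨ofN k, δ, rfl⟩
  · intro a b b' hb hb'
    obtain ⟨k, _, h⟩ := mem_qset.1 hb
    obtain ⟨k', _, h'⟩ := mem_qset.1 hb'
    rw [(ZFSet.pair_injective h).2, (ZFSet.pair_injective h').2]
  · rintro a ⟨b, hb⟩
    obtain ⟨k, _, h⟩ := mem_qset.1 hb
    rw [(ZFSet.pair_injective h).1]
    exact ofN_mem_omega k
  · rintro b ⟨a, ha⟩
    obtain ⟨k, _, h⟩ := mem_qset.1 ha
    rw [(ZFSet.pair_injective h).2]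
    exact hδ
  · ext a
    simp only [domZ, Set.mem_setOf_eq]
    constructor
    · rintro ⟨b, hb⟩
      obtain ⟨k, hk, h⟩ := mem_qset.1 hb
      rw [(ZFSet.pair_injective h).1]
      exact ofN_mem_ofN hk
    · intro ha
      obtain ⟨k, hk, rfl⟩ := mem_ofN.1 ha
      exact ⟨δ, mem_qset.2 ⟨k, hk, rfl⟩⟩

theorem domZ_union (x y : ZFSet) : domZ (x ∪ y) = domZ x ∪ domZ y := by
  ext a
  simp only [domZ, Set.mem_setOf_eq, Set.mem_union, ZFSet.mem_union]
  constructor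
  · rintro ⟨b, hb | hb⟩
    exacts [Or.inl ⟨b, hb⟩, Or.inr ⟨b, hb⟩]
  · rintro (⟨b, hb⟩ | ⟨b, hb⟩)
    exacts [⟨b, Or.inl hb⟩, ⟨b, Or.inr hb⟩]

/-- Two conditions with disjoint domains are compatible, with a witness in `Col_*`. -/
theorem compat_of_disjoint {M p q : ZFSet} (hp : p ∈ ColP M) (hq : q ∈ ColP M)
    (hM0 : (∅ : ZFSet) ∈ M)
    (hdisj : ∀ a, a ∈ domZ p → a ∈ domZ q → False) :
    ∃ r ∈ ColStarP M, p ⊆ r ∧ q ⊆ r := by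
  obtain ⟨⟨hppair, hpfun⟩, hpfin, hpdom, hpran⟩ := hp
  obtain ⟨⟨hqpair, hqfun⟩, hqfin, hqdom, hqran⟩ := hq
  set u := p ∪ q with hu
  have hufin : u.toSet.Finite := by
    rw [hu, ZFSet.toSet_union]; exact hpfin.union hqfin
  have hupair : ∀ x ∈ u, ∃ a b, x = ZFSet.pair a b := by
    intro x hx
    rcases ZFSet.mem_union.1 hx with h | h
    exacts [hppair x h, hqpair x h]
  have hufun : ∀ a b b' : ZFSet, ZFSet.pair a b ∈ u → ZFSet.pair a b' ∈ u → b = b' := by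
    intro a b b' hb hb'
    rcases ZFSet.mem_union.1 hb with h | h <;> rcases ZFSet.mem_union.1 hb' with h' | h'
    · exact hpfun a b b' h h'
    · exact (hdisj a ⟨b, h⟩ ⟨b', h'⟩).elim
    · exact (hdisj a ⟨b', h'⟩ ⟨b, h⟩).elim
    · exact hqfun a b b' h h'
  have hudom : ∀ a, a ∈ domZ u → a ∈ ZFSet.omega := by
    rintro a ⟨b, hb⟩
    rcases ZFSet.mem_union.1 hb with h | h
    exacts [hpdom a ⟨b, h⟩, hqdom a ⟨b, h⟩]
  obtain ⟨N, hN⟩ := exists_bound hufin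
  set r := u ∪ fillset u N with hr
  have hmem_r : ∀ z, z ∈ r ↔ z ∈ u ∨ z ∈ fillset u N := fun z => ZFSet.mem_union
  have hfsubr : ∀ z, z ∈ u → z ∈ r := fun z hz => (hmem_r z).2 (Or.inl hz)
  have hrfun : isFuncZ r := by
    constructor
    · intro x hx
      rcases (hmem_r x).1 hx with h | h
      · exact hupair x h
      · obtain ⟨k, _, _, rfl⟩ := mem_fillset.1 h
        exact ⟨ofN k, ∅, rfl⟩
    · intro a b b' hb hb'
      rcases (hmem_r _).1 hb with h | h <;> rcases (hmem_r _).1 hb' with h' | h'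
      · exact hufun a b b' h h'
      · obtain ⟨k, _, hd, he⟩ := mem_fillset.1 h'
        rw [(ZFSet.pair_injective he).1] at h
        exact absurd ⟨b, h⟩ hd
      · obtain ⟨k, _, hd, he⟩ := mem_fillset.1 h
        rw [(ZFSet.pair_injective he).1] at h'
        exact absurd ⟨b', h'⟩ hd
      · obtain ⟨k, _, _, he⟩ := mem_fillset.1 h
        obtain ⟨k', _, _, he'⟩ := mem_fillset.1 h'
        rw [(ZFSet.pair_injective he).2, (ZFSet.pair_injective he').2]
  have hrfin : r.toSet.Finite := by
    rw [hr, ZFSet.toSet_union]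
    exact hufin.union (fillset_finite u N)
  have hrdom : ∀ a, a ∈ domZ r → a ∈ ZFSet.omega := by
    rintro a ⟨b, hb⟩
    rcases (hmem_r _).1 hb with h | h
    · exact hudom a ⟨b, h⟩
    · obtain ⟨k, _, _, he⟩ := mem_fillset.1 h
      rw [(ZFSet.pair_injective he).1]
      exact ofN_mem_omega k
  have hrran : ∀ b, b ∈ ranZ r → IsOrdIn M b := by
    rintro b ⟨a, ha⟩
    rcases (hmem_r _).1 ha with h | h
    · rcases ZFSet.mem_union.1 h with h' | h'
      exacts [hpran b ⟨a, h'⟩, hqran b ⟨a, h'⟩]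
    · obtain ⟨k, _, _, he⟩ := mem_fillset.1 h
      rw [(ZFSet.pair_injective he).2]
      exact ⟨hM0, isOrdZ_empty⟩
  have hrdomeq : domZ r = (ofN N).toSet := by
    ext a
    rw [ZFSet.mem_toSet]
    constructor
    · rintro ⟨b, hb⟩
      rcases (hmem_r _).1 hb with h | h
      · have hadom : a ∈ domZ u := ⟨b, h⟩
        obtain ⟨k, rfl⟩ := eq_ofN_of_mem_omega (hudom a hadom)
        exact ofN_mem_ofN (hN k hadom)
      · obtain ⟨k, hk, _, he⟩ := mem_fillset.1 h
        rw [(ZFSet.pair_injective he).1]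
        exact ofN_mem_ofN hk
    · intro ha
      obtain ⟨k, hk, rfl⟩ := mem_ofN.1 ha
      by_cases hd : ofN k ∈ domZ u
      · obtain ⟨b, hb⟩ := hd
        exact ⟨b, hfsubr _ hb⟩
      · exact ⟨∅, (hmem_r _).2 (Or.inr (mem_fillset.2 ⟨k, hk, hd, rfl⟩))⟩
  refine ⟨r, ⟨⟨hrfun, hrfin, hrdom, hrran⟩, ofN N, ofN_mem_omega N, hrdomeq⟩, ?_, ?_⟩
  · exact ZFSet.subset_def.2 fun z hz => hfsubr z (ZFSet.mem_union.2 (Or.inl hz))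
  · exact ZFSet.subset_def.2 fun z hz => hfsubr z (ZFSet.mem_union.2 (Or.inr hz))

/-- Let `M` be a countable transitive model of `ZF⁻` and let `Col`
be either `Col(ω, Ord)^M` or `Col_*(ω, Ord)^M` (ordered by reverse inclusion, so
`r ≤ p` iff `p ⊆ r`). Then no antichain `A ∈ M` of `Col` other than `{∅}`
(where `∅` is the maximal condition) is a maximal antichain. -/
theorem statement6 (M : ZFSet) (hM : IsCTM M) (Col : Set ZFSet)
    (hCol : Col = ColP M ∨ Col = ColStarP M)
    (A : ZFSet) (hA : A ∈ M) (hsub : ∀ p ∈ A, p ∈ Col)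
    (hanti : ∀ p ∈ A, ∀ q ∈ A, p ≠ q → ¬ ∃ r ∈ Col, p ⊆ r ∧ q ⊆ r)
    (hnontriv : A ≠ ({∅} : ZFSet)) :
    ¬ ∀ p ∈ Col, ∃ q, q ∈ A ∧ ∃ r ∈ Col, p ⊆ r ∧ q ⊆ r := by
  intro hmax
  have hColP : ∀ x, x ∈ Col → x ∈ ColP M := by
    rcases hCol with rfl | rfl
    · exact fun _ h => h
    · exact fun _ h => h.1
  have hStar : ∀ x, x ∈ ColStarP M → x ∈ Col := by
    rcases hCol with rfl | rfl
    · exact fun _ h => h.1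
    · exact fun _ h => h
  by_cases h0 : (∅ : ZFSet) ∈ A
  · -- `∅ ∈ A` forces `A = {∅}`, contradiction
    have hex : ∃ p, p ∈ A ∧ p ≠ ∅ := by
      by_contra h
      push_neg at h
      apply hnontriv
      apply ZFSet.ext
      intro z
      rw [ZFSet.mem_singleton]
      exact ⟨fun hz => h z hz, fun hz => hz ▸ h0⟩
    obtain ⟨p, hpA, hpne⟩ := hex
    exact hanti p hpA ∅ h0 hpne
      ⟨p, hsub p hpA, ZFSet.subset_def.2 fun z hz => hz, ZFSet.empty_subset p⟩
  by_cases hA0 : ∃ p, p ∈ A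
  case neg =>
    obtain ⟨q, hqA, -⟩ := hmax ∅ (hStar _ (empty_mem_colStarP M))
    exact hA0 ⟨q, hqA⟩
  obtain ⟨p₀, hp₀⟩ := hA0
  have hp₀P : p₀ ∈ ColP M := hColP p₀ (hsub p₀ hp₀)
  set S : ZFSet := ⋃₀ (⋃₀ (⋃₀ A)) with hSdef
  have hSM : S ∈ M := hM.union _ (hM.union _ (hM.union _ hA))
  have hbS : ∀ p, p ∈ A → ∀ a b, ZFSet.pair a b ∈ p → b ∈ S := by
    intro p hpA a b hab
    have h1 : ZFSet.pair a b ∈ (⋃₀ A : ZFSet) := ZFSet.mem_sUnion_of_mem hab hpA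
    have hmm : ({a, b} : ZFSet) ∈ ({{a}, {a, b}} : ZFSet) := ZFSet.mem_pair.2 (Or.inr rfl)
    have h2 : ({a, b} : ZFSet) ∈ (⋃₀ (⋃₀ A : ZFSet) : ZFSet) := ZFSet.mem_sUnion_of_mem hmm h1
    exact ZFSet.mem_sUnion_of_mem (ZFSet.mem_pair.2 (Or.inr rfl)) h2
  have hSord : ∀ s, s ∈ S → IsOrdZ s := by
    intro s hs
    obtain ⟨w, hw, hsw⟩ := ZFSet.mem_sUnion.1 hs
    obtain ⟨v, hv, hwv⟩ := ZFSet.mem_sUnion.1 hw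
    obtain ⟨p, hpA, hvp⟩ := ZFSet.mem_sUnion.1 hv
    have hpP : p ∈ ColP M := hColP p (hsub p hpA)
    obtain ⟨a, b, rfl⟩ := hpP.1.1 v hvp
    have hw2 : w ∈ ({{a}, {a, b}} : ZFSet) := hwv
    have hsab : s = a ∨ s = b := by
      rcases ZFSet.mem_pair.1 hw2 with rfl | rfl
      · exact Or.inl (ZFSet.mem_singleton.1 hsw)
      · exact ZFSet.mem_pair.1 hsw
    rcases hsab with rfl | rfl
    · exact isOrdZ_of_mem_omega (hpP.2.2.1 s ⟨b, hvp⟩)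
    · exact (hpP.2.2.2 s ⟨a, hvp⟩).2
  set γ : ZFSet := ⋃₀ S with hγdef
  have hγM : γ ∈ M := hM.union _ hSM
  have hγord : IsOrdZ γ := isOrdZ_sUnion (fun y hy => hSord y hy)
  set δ := insert γ γ with hδdef
  have hδord : IsOrdZ δ := isOrdZ_succ hγord
  have hδM : δ ∈ M := by
    have h1 : ({γ, γ} : ZFSet) ∈ M := hM.pairing γ hγM γ hγM
    have e1 : ({γ, γ} : ZFSet) = ({γ} : ZFSet) := by
      ext z
      simp [ZFSet.mem_insert_iff, ZFSet.mem_singleton]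
    rw [e1] at h1
    have h3 : ({γ, ({γ} : ZFSet)} : ZFSet) ∈ M := hM.pairing γ hγM _ h1
    have h4 := hM.union _ h3
    have e2 : (⋃₀ ({γ, ({γ} : ZFSet)} : ZFSet) : ZFSet) = δ := by
      rw [ZFSet.sUnion_pair, hδdef]
      ext z
      simp only [ZFSet.mem_union, ZFSet.mem_insert_iff, ZFSet.mem_singleton]
      tauto
    rwa [e2] at h4
  have hδS : δ ∉ S := by
    intro hmem
    have h1 : γ ∈ (⋃₀ S : ZFSet) := ZFSet.mem_sUnion_of_mem (ZFSet.mem_insert_iff.2 (Or.inl rfl)) hmem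
    rw [← hγdef] at h1
    exact ZFSet.mem_irrefl γ h1
  obtain ⟨n, hn⟩ := exists_bound hp₀P.2.1
  have hqStar : qset δ n ∈ ColStarP M := qset_mem_colStarP ⟨hδM, hδord⟩ n
  obtain ⟨p, hpA, r, hrCol, hqsubr, hpsubr⟩ := hmax (qset δ n) (hStar _ hqStar)
  have hrP : r ∈ ColP M := hColP r hrCol
  have hkey : ∀ k, k < n → ofN k ∉ domZ p := by
    rintro k hk ⟨b, hb⟩
    have h1 : ZFSet.pair (ofN k) b ∈ r := (ZFSet.subset_def.1 hpsubr) hb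
    have h2 : ZFSet.pair (ofN k) δ ∈ r :=
      (ZFSet.subset_def.1 hqsubr) (mem_qset.2 ⟨k, hk, rfl⟩)
    have hbδ : b = δ := hrP.1.2 (ofN k) b δ h1 h2
    have hbs : b ∈ S := hbS p hpA _ _ hb
    rw [hbδ] at hbs
    exact hδS hbs
  have hdisj : ∀ a, a ∈ domZ p → a ∈ domZ p₀ → False := by
    intro a hap hap0
    obtain ⟨k, rfl⟩ := eq_ofN_of_mem_omega (hp₀P.2.2.1 a hap0)
    exact hkey k (hn k hap0) hap
  have hpne : p ≠ p₀ := by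
    intro he
    have hne : p₀ ≠ ∅ := fun h => h0 (h ▸ hp₀)
    have hex : ∃ x, x ∈ p₀ := by
      by_contra hc
      push_neg at hc
      exact hne ((ZFSet.eq_empty p₀).2 hc)
    obtain ⟨x, hx⟩ := hex
    obtain ⟨a, b, rfl⟩ := hp₀P.1.1 x hx
    have hxp : ZFSet.pair a b ∈ p := by rw [he]; exact hx
    exact hdisj a ⟨b, hxp⟩ ⟨b, hx⟩
  obtain ⟨r', hr'Star, hpr', hp0r'⟩ :=
    compat_of_disjoint (hColP p (hsub p hpA)) hp₀P hM.empty_mem hdisj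
  exact hanti p hpA p₀ hp₀ hpne ⟨r', hStar _ hr'Star, hpr', hp0r'⟩
end CF
end
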